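/- arXiv:gr-qc/0303014 — 10 statements merged into one kernel-verified Lean document; each statement's English description precedes it below -/
import Mathlib

section
/- Suppose φ, y, ρ, H solve the flat scalar-field system on [t₀, ∞) and, in addition: V(φ) ≥ 0 for all φ; V(φ) = 0 if and only if φ = 0; V' is bounded on every subset A ⊆ ℝ on which V is bounded; the Friedmann constraint 3H² = ρ + (1/2)y² + V(φ) holds on [t₀, ∞); and H(t₀) > 0. Then ρ(t) → 0 and y(t) → 0 as t → ∞. -/
open Filter Topology

set_option maxHeartbeats 1000000 in
/-- Proposition 2: for the flat scalar-field system with a non-negative potential having a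
unique zero at `φ = 0`, with `V'` bounded wherever `V` is bounded, and an initially
expanding universe (`H(t₀) > 0`), the matter density `ρ` and the field velocity `y = φ̇`
tend to zero as `t → ∞`. -/
theorem stmt_1 (t₀ γ : ℝ) (hγ0 : 0 < γ) (hγ2 : γ ≤ 2)
    (V : ℝ → ℝ) (hV : ContDiff ℝ 2 V)
    (φ y ρ H : ℝ → ℝ)
    (hφ : ∀ t ∈ Set.Ici t₀, HasDerivWithinAt φ (y t) (Set.Ici t₀) t)
    (hy : ∀ t ∈ Set.Ici t₀,
      HasDerivWithinAt y (-3 * H t * y t - deriv V (φ t)) (Set.Ici t₀) t)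
    (hρ : ∀ t ∈ Set.Ici t₀, HasDerivWithinAt ρ (-3 * γ * ρ t * H t) (Set.Ici t₀) t)
    (hH : ∀ t ∈ Set.Ici t₀,
      HasDerivWithinAt H (-(1 / 2) * y t ^ 2 - γ / 2 * ρ t) (Set.Ici t₀) t)
    (hρ0 : ∀ t ∈ Set.Ici t₀, 0 ≤ ρ t)
    (hcon : ∀ t ∈ Set.Ici t₀, 3 * H t ^ 2 = ρ t + 1 / 2 * y t ^ 2 + V (φ t))
    (hVnn : ∀ s : ℝ, 0 ≤ V s)
    (hVzero : ∀ s : ℝ, V s = 0 ↔ s = 0)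
    (hV'bdd : ∀ A : Set ℝ, Bornology.IsBounded (V '' A) →
      Bornology.IsBounded (deriv V '' A))
    (hH0 : 0 < H t₀) :
    Tendsto ρ atTop (nhds 0) ∧ Tendsto y atTop (nhds 0) := by
  -- notation
  set f : ℝ → ℝ := fun t => 1 / 2 * y t ^ 2 + γ / 2 * ρ t with hf_def
  -- continuity of the unknowns on [t₀, ∞)
  have hHc : ContinuousOn H (Set.Ici t₀) := fun t ht => (hH t ht).continuousWithinAt
  have hyc : ContinuousOn y (Set.Ici t₀) := fun t ht => (hy t ht).continuousWithinAt
  have hρc : ContinuousOn ρ (Set.Ici t₀) := fun t ht => (hρ t ht).continuousWithinAt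
  -- H has derivative -f
  have hH' : ∀ t ∈ Set.Ici t₀, HasDerivWithinAt H (-(f t)) (Set.Ici t₀) t := by
    intro t ht
    have := hH t ht
    convert this using 1
    simp only [hf_def]; ring
  -- f is nonnegative on [t₀, ∞)
  have hfnn : ∀ t ∈ Set.Ici t₀, 0 ≤ f t := by
    intro t ht
    have h1 := hρ0 t ht
    have h2 := sq_nonneg (y t)
    simp only [hf_def]
    nlinarith
  -- f is bounded by 3 H² via the constraint (uses γ ≤ 2, V ≥ 0, ρ ≥ 0)
  have hfle : ∀ t ∈ Set.Ici t₀, f t ≤ 3 * H t ^ 2 := by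
    intro t ht
    have h1 := hcon t ht
    have h2 := hVnn (φ t)
    have h3 := hρ0 t ht
    simp only [hf_def]
    nlinarith
  -- H is antitone on [t₀, ∞)
  have hHanti : AntitoneOn H (Set.Ici t₀) := by
    apply antitoneOn_of_hasDerivWithinAt_nonpos (convex_Ici t₀) hHc
      (f' := fun t => -(f t))
    · intro x hx
      rw [interior_Ici] at hx ⊢
      exact (hH' x (Set.Ioi_subset_Ici_self hx)).mono (Set.Ioi_subset_Ici_self)
    · intro x hx
      rw [interior_Ici] at hx
      have := hfnn x (Set.Ioi_subset_Ici_self hx)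
      linarith
  -- H is positive on [t₀, ∞)
  have hHpos : ∀ t ∈ Set.Ici t₀, 0 < H t := by
    by_contra hneg
    push_neg at hneg
    obtain ⟨t', ht', hHt'⟩ := hneg
    set A : Set ℝ := {t | t ∈ Set.Ici t₀ ∧ H t ≤ 0} with hA_def
    have hAne : A.Nonempty := ⟨t', ht', hHt'⟩
    have hAbdd : BddBelow A := ⟨t₀, fun t h => h.1⟩
    have hAcl : IsClosed A :=
      hHc.preimage_isClosed_of_isClosed isClosed_Ici (isClosed_Iic (a := (0:ℝ)))
    set t₁ := sInf A with ht₁_def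
    have ht₁A : t₁ ∈ A := hAcl.csInf_mem hAne hAbdd
    have ht₁0 : t₀ < t₁ := by
      rcases lt_or_eq_of_le (Set.mem_Ici.1 ht₁A.1) with h | h
      · exact h
      · exfalso; rw [h] at hH0; linarith [ht₁A.2]
    have hIco : ∀ s ∈ Set.Ico t₀ t₁, 0 < H s := by
      intro s hs
      by_contra hneg2
      push_neg at hneg2
      have : s ∈ A := ⟨hs.1, hneg2⟩
      have := csInf_le hAbdd this
      exact absurd this (not_le_of_gt hs.2)
    -- inverse of H grows at most linearly on [t₀, t₁)
    set c : ℝ := (H t₀)⁻¹ + 3 * (t₁ - t₀) with hc_def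
    have hc : 0 < c := by
      have := inv_pos.2 hH0
      simp only [hc_def]; nlinarith
    have hbound : ∀ s ∈ Set.Ico t₀ t₁, c⁻¹ ≤ H s := by
      intro s hs
      have hHs := hIco s hs
      -- consider w t = (H t)⁻¹ - 3 t, antitone on [t₀, s]
      have hIccsub : Set.Icc t₀ s ⊆ Set.Ico t₀ t₁ := fun u hu =>
        ⟨hu.1, lt_of_le_of_lt hu.2 hs.2⟩
      have hIccIci : Set.Icc t₀ s ⊆ Set.Ici t₀ := fun u hu => hu.1
      have hanti : AntitoneOn (fun t => (H t)⁻¹ - 3 * t) (Set.Icc t₀ s) := by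
        apply antitoneOn_of_hasDerivWithinAt_nonpos (convex_Icc t₀ s)
          (f' := fun t => -(-(f t)) / H t ^ 2 - 3)
        · apply ContinuousOn.sub
          · exact ContinuousOn.inv₀ (hHc.mono hIccIci) fun u hu =>
              ne_of_gt (hIco u (hIccsub hu))
          · exact (continuous_const.mul continuous_id).continuousOn
        · intro x hx
          rw [interior_Icc] at hx ⊢
          have hxm : x ∈ Set.Icc t₀ s := ⟨le_of_lt hx.1, le_of_lt hx.2⟩
          have h1 : HasDerivWithinAt H (-(f x)) (Set.Ioo t₀ s) x :=
            (hH' x (hIccIci hxm)).mono (fun u hu => le_of_lt hu.1)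
          have h2 := h1.inv (ne_of_gt (hIco x (hIccsub hxm)))
          have h3 : HasDerivWithinAt (fun t : ℝ => 3 * t) 3 (Set.Ioo t₀ s) x :=
            (hasDerivAt_id x).const_mul 3 |>.hasDerivWithinAt |>.congr_deriv (by ring)
          exact h2.sub h3
        · intro x hx
          rw [interior_Icc] at hx
          have hxm : x ∈ Set.Icc t₀ s := ⟨le_of_lt hx.1, le_of_lt hx.2⟩
          have hHx := hIco x (hIccsub hxm)
          have hfx := hfle x (hIccIci hxm)
          have hH2 : 0 < H x ^ 2 := by positivity
          have h5 : -(-(f x)) / H x ^ 2 ≤ 3 := by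
            rw [neg_neg, div_le_iff₀ hH2]; linarith
          linarith
      have hw := hanti (Set.left_mem_Icc.2 hs.1) (Set.right_mem_Icc.2 hs.1) hs.1
      simp only at hw
      -- (H s)⁻¹ ≤ (H t₀)⁻¹ + 3 (s - t₀) ≤ c
      have h1 : (H s)⁻¹ ≤ (H t₀)⁻¹ + 3 * (s - t₀) := by linarith
      have h2 : (H s)⁻¹ ≤ c := by
        simp only [hc_def]
        have : s ≤ t₁ := le_of_lt hs.2
        linarith
      rw [inv_le_comm₀ hc hHs]
      exact h2
    -- take the limit s → t₁⁻ to contradict H t₁ ≤ 0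
    have hNB : (𝓝[Set.Ioo t₀ t₁] t₁).NeBot := by
      rw [nhdsWithin_Ioo_eq_nhdsLT ht₁0]; infer_instance
    have htend : Tendsto H (𝓝[Set.Ioo t₀ t₁] t₁) (nhds (H t₁)) := by
      have := (hHc t₁ ht₁A.1).tendsto
      exact this.mono_left (nhdsWithin_mono t₁ (fun u hu => le_of_lt hu.1))
    have hev : ∀ᶠ s in 𝓝[Set.Ioo t₀ t₁] t₁, c⁻¹ ≤ H s := by
      filter_upwards [self_mem_nhdsWithin] with s hs
      exact hbound s ⟨le_of_lt hs.1, hs.2⟩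
    have := ge_of_tendsto htend hev
    have : 0 < H t₁ := lt_of_lt_of_le (inv_pos.2 hc) this
    linarith [ht₁A.2]
  -- global bounds
  set M : ℝ := 3 * H t₀ ^ 2 with hM_def
  have hM : 0 < M := by positivity
  have hHle : ∀ t ∈ Set.Ici t₀, H t ≤ H t₀ :=
    fun t ht => hHanti (Set.self_mem_Ici) ht ht
  have hH2le : ∀ t ∈ Set.Ici t₀, 3 * H t ^ 2 ≤ M := by
    intro t ht
    have h1 := hHpos t ht
    have h2 := hHle t ht
    simp only [hM_def]; nlinarith
  have hρle : ∀ t ∈ Set.Ici t₀, ρ t ≤ M := by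
    intro t ht
    have := hcon t ht
    have h2 := hVnn (φ t)
    have h3 := sq_nonneg (y t)
    have h4 := hH2le t ht
    nlinarith
  have hy2le : ∀ t ∈ Set.Ici t₀, y t ^ 2 ≤ 2 * M := by
    intro t ht
    have := hcon t ht
    have h2 := hVnn (φ t)
    have h3 := hρ0 t ht
    have h4 := hH2le t ht
    nlinarith
  have hVle : ∀ t ∈ Set.Ici t₀, V (φ t) ≤ M := by
    intro t ht
    have := hcon t ht
    have h3 := hρ0 t ht
    have h2 := sq_nonneg (y t)
    have h4 := hH2le t ht
    nlinarith
  -- bound on V' along the trajectory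
  obtain ⟨C, hC⟩ : ∃ C : ℝ, ∀ t ∈ Set.Ici t₀, |deriv V (φ t)| ≤ C := by
    have hb : Bornology.IsBounded (V '' (φ '' Set.Ici t₀)) := by
      apply Bornology.IsBounded.subset (Metric.isBounded_Icc 0 M)
      rintro v ⟨x, ⟨t, ht, rfl⟩, rfl⟩
      exact ⟨hVnn _, hVle t ht⟩
    have := hV'bdd _ hb
    obtain ⟨R, hR⟩ := this.exists_norm_le
    refine ⟨R, fun t ht => ?_⟩
    have := hR _ ⟨φ t, ⟨t, ht, rfl⟩, rfl⟩
    rwa [Real.norm_eq_abs] at this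
  have hC0 : 0 ≤ C := le_trans (abs_nonneg _) (hC t₀ Set.self_mem_Ici)
  set B : ℝ := Real.sqrt (2 * M) with hB_def
  have hB0 : 0 ≤ B := Real.sqrt_nonneg _
  have hB2 : B ^ 2 = 2 * M := Real.sq_sqrt (by positivity)
  have hyB : ∀ t ∈ Set.Ici t₀, |y t| ≤ B := by
    intro t ht
    rw [← Real.sqrt_sq_eq_abs]
    exact Real.sqrt_le_sqrt (hy2le t ht)
  -- derivative of f and its bound
  set f' : ℝ → ℝ := fun t =>
    y t * (-3 * H t * y t - deriv V (φ t)) + γ / 2 * (-3 * γ * ρ t * H t) with hf'_def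
  have hfderiv : ∀ t ∈ Set.Ici t₀, HasDerivWithinAt f (f' t) (Set.Ici t₀) t := by
    intro t ht
    have h1 := (((hy t ht).pow 2).const_mul (1/2 : ℝ)).add ((hρ t ht).const_mul (γ/2))
    refine h1.congr_deriv ?_
    simp only [hf'_def]
    push_cast
    ring
  set K : ℝ := B * (3 * H t₀ * B + C) + γ / 2 * (3 * γ * M * H t₀) + 1 with hK_def
  have hK : 0 < K := by
    have h1 : 0 ≤ B * (3 * H t₀ * B + C) := by positivity
    have h2 : 0 ≤ γ / 2 * (3 * γ * M * H t₀) := by positivity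
    simp only [hK_def]; linarith
  have hfK : ∀ t ∈ Set.Ici t₀, |f' t| ≤ K := by
    intro t ht
    have hy1 := hyB t ht
    have hdv := hC t ht
    have hHt := hHpos t ht
    have hHt2 := hHle t ht
    have hρ1 := hρ0 t ht
    have hρ2 := hρle t ht
    have hy2 := hy2le t ht
    have e1 : f' t = -(3 * H t * y t ^ 2) - y t * deriv V (φ t)
        - 3 * γ ^ 2 / 2 * (ρ t * H t) := by
      simp only [hf'_def]; ring
    have eK : K = 3 * H t₀ * B ^ 2 + B * C + 3 * γ ^ 2 / 2 * (M * H t₀) + 1 := by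
      simp only [hK_def]; ring
    have b1a : 0 ≤ 3 * H t * y t ^ 2 :=
      mul_nonneg (by linarith) (sq_nonneg _)
    have b1b : 3 * H t * y t ^ 2 ≤ 3 * H t₀ * B ^ 2 := by
      have := mul_le_mul hHt2 (hB2 ▸ hy2) (sq_nonneg (y t)) hH0.le
      linarith
    have b2 : |y t * deriv V (φ t)| ≤ B * C := by
      rw [abs_mul]
      exact mul_le_mul hy1 hdv (abs_nonneg _) hB0
    obtain ⟨b2a, b2b⟩ := abs_le.1 b2
    have b3a : 0 ≤ 3 * γ ^ 2 / 2 * (ρ t * H t) :=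
      mul_nonneg (by positivity) (mul_nonneg hρ1 hHt.le)
    have b3b : 3 * γ ^ 2 / 2 * (ρ t * H t) ≤ 3 * γ ^ 2 / 2 * (M * H t₀) :=
      mul_le_mul_of_nonneg_left
        (mul_le_mul hρ2 hHt2 hHt.le hM.le) (by positivity)
    rw [abs_le]
    constructor
    · rw [e1, eK]; linarith
    · rw [e1, eK]; linarith
  -- the key "drop" lemma
  have hdrop : ∀ ε : ℝ, 0 < ε → ∀ t₁ ∈ Set.Ici t₀, ε ≤ f t₁ →
      H (t₁ + ε / (2 * K)) ≤ H t₁ - ε / 2 * (ε / (2 * K)) := by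
    intro ε hε t₁ ht₁ hft₁
    set δ : ℝ := ε / (2 * K) with hδ_def
    have hδ : 0 < δ := by positivity
    have hKδ : K * δ = ε / 2 := by
      simp only [hδ_def]; field_simp
    have hsub : Set.Icc t₁ (t₁ + δ) ⊆ Set.Ici t₀ := fun u hu => le_trans ht₁ hu.1
    -- f ≥ ε/2 on [t₁, t₁+δ]
    have hfhalf : ∀ s ∈ Set.Icc t₁ (t₁ + δ), ε / 2 ≤ f s := by
      intro s hs
      have hmvt := norm_image_sub_le_of_norm_deriv_le_segment'
        (f := f) (f' := f') (C := K) (a := t₁) (b := t₁ + δ)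
        (fun x hx => (hfderiv x (hsub hx)).mono hsub)
        (fun x hx => hfK x (hsub (Set.Ico_subset_Icc_self hx))) s hs
      have h1 : |f s - f t₁| ≤ K * (s - t₁) := hmvt
      have h2 : K * (s - t₁) ≤ K * δ := by
        apply mul_le_mul_of_nonneg_left _ hK.le
        linarith [hs.2]
      rw [abs_le] at h1
      have h2' : K * (s - t₁) ≤ ε / 2 := by rw [← hKδ]; exact h2
      obtain ⟨h1a, h1b⟩ := h1
      simp only [hf_def] at h1a hft₁ ⊢
      linarith
    -- H decreases at rate ≥ ε/2 on [t₁, t₁+δ]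
    have hanti : AntitoneOn (fun t => H t + ε / 2 * t) (Set.Icc t₁ (t₁ + δ)) := by
      apply antitoneOn_of_hasDerivWithinAt_nonpos (convex_Icc _ _)
        (f' := fun t => -(f t) + ε / 2)
      · exact ((hHc.mono hsub).add (continuous_const.mul continuous_id).continuousOn)
      · intro x hx
        rw [interior_Icc] at hx ⊢
        have hxm : x ∈ Set.Icc t₁ (t₁ + δ) := ⟨hx.1.le, hx.2.le⟩
        have h1 : HasDerivWithinAt H (-(f x)) (Set.Ioo t₁ (t₁ + δ)) x :=
          (hH' x (hsub hxm)).mono (fun u hu => hsub ⟨hu.1.le, hu.2.le⟩)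
        have h2 : HasDerivWithinAt (fun t : ℝ => ε / 2 * t) (ε / 2)
            (Set.Ioo t₁ (t₁ + δ)) x := by
          simpa using ((hasDerivAt_id x).const_mul (ε / 2)).hasDerivWithinAt
        exact h1.add h2
      · intro x hx
        rw [interior_Icc] at hx
        have := hfhalf x ⟨hx.1.le, hx.2.le⟩
        linarith
    have h := hanti (Set.left_mem_Icc.2 (by linarith)) (Set.right_mem_Icc.2 (by linarith))
      (by linarith)
    simp only at h
    linarith
  -- main convergence: f → 0
  have hmain : Tendsto f atTop (nhds 0) := by
    rw [Metric.tendsto_atTop]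
    intro ε hε
    by_contra hcontra
    push_neg at hcontra
    have hsel : ∀ N : ℝ, ∃ t, max N t₀ ≤ t ∧ ε ≤ f t := by
      intro N
      obtain ⟨t, ht, h⟩ := hcontra (max N t₀)
      refine ⟨t, ht, ?_⟩
      rw [Real.dist_eq, sub_zero, abs_of_nonneg (hfnn t (le_trans (le_max_right _ _) ht))] at h
      exact h
    set δ : ℝ := ε / (2 * K) with hδ_def
    have hδ : 0 < δ := by positivity
    set g : ℕ → ℝ := fun n => Nat.rec (hsel t₀).choose
      (fun _ p => (hsel (p + δ)).choose) n with hg_def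
    have hg0 : t₀ ≤ g 0 ∧ ε ≤ f (g 0) := by
      have h := (hsel t₀).choose_spec
      exact ⟨le_trans (le_max_right _ _) h.1, h.2⟩
    have hgstep : ∀ n, g n + δ ≤ g (n + 1) ∧ ε ≤ f (g (n + 1)) := by
      intro n
      have h := (hsel (g n + δ)).choose_spec
      exact ⟨le_trans (le_max_left _ _) h.1, h.2⟩
    have hgt₀ : ∀ n, t₀ ≤ g n := by
      intro n
      induction n with
      | zero => exact hg0.1
      | succ k ih => linarith [(hgstep k).1]
    have hiter : ∀ n : ℕ, H (g n + δ) ≤ H t₀ - (n + 1) * (ε / 2 * δ) := by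
      intro n
      induction n with
      | zero =>
        have h1 := hdrop ε hε (g 0) (hgt₀ 0) hg0.2
        have h2 : H (g 0) ≤ H t₀ := hHle _ (hgt₀ 0)
        push_cast
        simp only [← hδ_def] at h1
        linarith
      | succ k ih =>
        have h1 := hdrop ε hε (g (k + 1)) (hgt₀ (k + 1)) (hgstep k).2
        simp only [← hδ_def] at h1
        have h2 : H (g (k + 1)) ≤ H (g k + δ) := by
          apply hHanti _ _ (hgstep k).1
          · exact Set.mem_Ici.2 (by linarith [hgt₀ k])
          · exact Set.mem_Ici.2 (hgt₀ (k + 1))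
        push_cast
        push_cast at ih
        linarith
    obtain ⟨n, hn⟩ := exists_nat_gt (H t₀ / (ε / 2 * δ))
    have hεδ : 0 < ε / 2 * δ := by positivity
    have h1 : H t₀ < n * (ε / 2 * δ) := by
      rw [div_lt_iff₀ hεδ] at hn
      exact hn
    have h2 := hiter n
    have h3 : 0 < H (g n + δ) := hHpos _ (Set.mem_Ici.2 (by linarith [hgt₀ n]))
    have h4 : (n : ℝ) * (ε / 2 * δ) ≤ (n + 1) * (ε / 2 * δ) := by nlinarith
    linarith
  -- conclude for ρ
  have hρtend : Tendsto ρ atTop (nhds 0) := by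
    have h1 : Tendsto (fun t => 2 / γ * f t) atTop (nhds 0) := by
      have h := hmain.const_mul (2 / γ)
      rwa [mul_zero] at h
    apply squeeze_zero' _ _ h1
    · filter_upwards [eventually_ge_atTop t₀] with t ht
      exact hρ0 t ht
    · filter_upwards [eventually_ge_atTop t₀] with t ht
      have h2 := sq_nonneg (y t)
      have h3 : 2 / γ * f t = 1 / γ * y t ^ 2 + ρ t := by
        simp only [hf_def]; field_simp
      rw [h3]
      have : 0 ≤ 1 / γ * y t ^ 2 := by positivity
      linarith
  -- conclude for y
  have hy2tend : Tendsto (fun t => y t ^ 2) atTop (nhds 0) := by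
    have h1 : Tendsto (fun t => 2 * f t) atTop (nhds 0) := by
      have h := hmain.const_mul 2
      rwa [mul_zero] at h
    apply squeeze_zero' _ _ h1
    · filter_upwards [eventually_ge_atTop t₀] with t ht
      exact sq_nonneg _
    · filter_upwards [eventually_ge_atTop t₀] with t ht
      have := hρ0 t ht
      simp only [hf_def]
      nlinarith
  have hytend : Tendsto y atTop (nhds 0) := by
    rw [tendsto_zero_iff_norm_tendsto_zero]
    have e : (fun t => ‖y t‖) = fun t => Real.sqrt (y t ^ 2) := by
      ext t; rw [Real.sqrt_sq_eq_abs]; rfl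
    rw [e]
    have := (Real.continuous_sqrt.tendsto 0).comp hy2tend
    rw [Real.sqrt_zero] at this
    exact this
  exact ⟨hρtend, hytend⟩
end

section
/- Suppose φ, y, ρ, H solve the flat scalar-field system on [t₀, ∞) with the Friedmann constraint 3H² = ρ + (1/2)y² + V(φ), H(t₀) > 0, and the potential satisfies: V(φ) ≥ 0 for all φ; V(φ) = 0 if and only if φ = 0; V' is bounded on every subset A ⊆ ℝ on which V is bounded; V'(φ) > 0 for φ > 0; and V'(φ) < 0 for φ < 0. Then as t → ∞, exactly one of the following holds: φ(t) → +∞, or φ(t) → -∞, or φ(t) → 0. -/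
open Filter Set

lemma aux_tendsto_of_antitoneOn {f : ℝ → ℝ} {a c : ℝ}
    (hf : AntitoneOn f (Set.Ici a)) (hb : ∀ t, a ≤ t → c ≤ f t) :
    ∃ l, c ≤ l ∧ Tendsto f atTop (nhds l) ∧ ∀ t, a ≤ t → l ≤ f t := by
  set g : ℝ → ℝ := fun t => f (max t a) with hg
  have hganti : Antitone g := fun s t hst =>
    hf (le_max_right s a) (le_max_right t a) (max_le_max hst le_rfl)
  have hgb : ∀ t, c ≤ g t := fun t => hb _ (le_max_right t a)
  have hbdd : BddBelow (Set.range g) := ⟨c, by rintro x ⟨t, rfl⟩; exact hgb t⟩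
  refine ⟨⨅ t, g t, le_ciInf hgb, ?_, ?_⟩
  · refine (tendsto_atTop_ciInf hganti hbdd).congr' ?_
    filter_upwards [eventually_ge_atTop a] with t ht
    simp [hg, max_eq_left ht]
  · intro t ht
    simpa [hg, max_eq_left ht] using ciInf_le hbdd t

lemma aux_not_atBot_of_atTop {f : ℝ → ℝ} (h : Tendsto f atTop atTop) :
    ¬ Tendsto f atTop atBot := by
  intro h'
  obtain ⟨t, h1, h2⟩ := ((h.eventually_ge_atTop 1).and (h'.eventually_le_atBot 0)).exists
  linarith

lemma aux_pack {φ : ℝ → ℝ}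
    (h : Tendsto φ atTop atTop ∨ Tendsto φ atTop atBot ∨ Tendsto φ atTop (nhds 0)) :
    (Tendsto φ atTop atTop ∧ ¬ Tendsto φ atTop atBot ∧ ¬ Tendsto φ atTop (nhds 0)) ∨
    (Tendsto φ atTop atBot ∧ ¬ Tendsto φ atTop atTop ∧ ¬ Tendsto φ atTop (nhds 0)) ∨
    (Tendsto φ atTop (nhds 0) ∧ ¬ Tendsto φ atTop atTop ∧ ¬ Tendsto φ atTop atBot) := by
  rcases h with h | h | h
  · exact Or.inl ⟨h, aux_not_atBot_of_atTop h,
      fun h' => not_tendsto_atTop_of_tendsto_nhds h' h⟩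
  · refine Or.inr (Or.inl ⟨h, ?_, fun h' => not_tendsto_atBot_of_tendsto_nhds h' h⟩)
    intro h'; exact aux_not_atBot_of_atTop h' h
  · exact Or.inr (Or.inr ⟨h, not_tendsto_atTop_of_tendsto_nhds h,
      not_tendsto_atBot_of_tendsto_nhds h⟩)

lemma aux_pos_branch {t₀ E' : ℝ} {V V' φ y H : ℝ → ℝ}
    (hVc : Continuous V) (hV'c : Continuous V')
    (hVmono : StrictMonoOn V (Set.Ici 0))
    (hV'pos : ∀ s, 0 < s → 0 < V' s)
    (hV0 : V 0 = 0)
    (hE : 0 < E')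
    (hyd : ∀ t ∈ Set.Ici t₀, HasDerivWithinAt y (-3 * H t * y t - V' (φ t)) (Set.Ici t₀) t)
    (hVφ : Tendsto (fun t => V (φ t)) atTop (nhds E'))
    (hy0 : Tendsto y atTop (nhds 0))
    (hHy : Tendsto (fun t => 3 * H t * y t) atTop (nhds 0))
    (hpos : ∀ᶠ t in atTop, 0 < φ t) :
    Tendsto φ atTop atTop := by
  by_cases hall : ∀ s, 0 < s → V s < E'
  · rw [tendsto_atTop]
    intro M
    have hM' : (0:ℝ) < max M 1 := lt_of_lt_of_le one_pos (le_max_right M 1)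
    filter_upwards [hVφ.eventually_const_lt (hall _ hM'), hpos] with t h1 h2
    by_contra hle
    push_neg at hle
    have : φ t < max M 1 := lt_of_lt_of_le hle (le_max_left M 1)
    have := hVmono h2.le hM'.le this
    linarith
  · push_neg at hall
    obtain ⟨s₁, hs₁pos, hs₁⟩ := hall
    have hs₂pos : (0:ℝ) < s₁ + 1 := by linarith
    have hVs₂ : E' < V (s₁ + 1) :=
      lt_of_le_of_lt hs₁ (hVmono hs₁pos.le hs₂pos.le (lt_add_one s₁))
    -- find s₀ > 0 with V s₀ < E'
    have hcont : Tendsto V (nhds 0) (nhds 0) := by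
      have h := hVc.continuousAt (x := (0:ℝ))
      rwa [ContinuousAt, hV0] at h
    have h0 : ∀ᶠ s in nhds (0:ℝ), V s < E' := hcont.eventually_lt_const hE
    obtain ⟨s₀, hs₀V, hs₀pos⟩ :=
      ((eventually_nhdsWithin_of_eventually_nhds (s := Ioi (0:ℝ)) h0).and
        self_mem_nhdsWithin).exists
    have hs₀pos : (0:ℝ) < s₀ := hs₀pos
    have hs₀₂ : s₀ ≤ s₁ + 1 := by
      by_contra h
      push_neg at h
      have := hVmono hs₂pos.le hs₀pos.le h
      linarith
    obtain ⟨c, hc_mem, hc⟩ := intermediate_value_Icc hs₀₂ hVc.continuousOn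
      (show E' ∈ Icc (V s₀) (V (s₁+1)) from ⟨hs₀V.le, hVs₂.le⟩)
    have hcpos : 0 < c := lt_of_lt_of_le hs₀pos hc_mem.1
    have hφc : Tendsto φ atTop (nhds c) := by
      rw [tendsto_order]
      constructor
      · intro a ha
        rcases le_or_gt a 0 with h | h
        · filter_upwards [hpos] with t ht; linarith
        · have hVa : V a < E' := by rw [← hc]; exact hVmono h.le hcpos.le ha
          filter_upwards [hVφ.eventually_const_lt hVa, hpos] with t h1 h2
          by_contra hle
          push_neg at hle
          have := hVmono.monotoneOn h2.le h.le hle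
          linarith
      · intro b hb
        have hbpos : 0 < b := lt_trans hcpos hb
        have hVb : E' < V b := by rw [← hc]; exact hVmono hcpos.le hbpos.le hb
        filter_upwards [hVφ.eventually_lt_const hVb, hpos] with t h1 h2
        by_contra hle
        push_neg at hle
        have := hVmono.monotoneOn hbpos.le h2.le hle
        linarith
    set k := V' c with hk
    have hkpos : 0 < k := hV'pos c hcpos
    have hyd_t : Tendsto (fun t => -3 * H t * y t - V' (φ t)) atTop (nhds (-k)) := by
      have h2 : Tendsto (fun t => V' (φ t)) atTop (nhds k) :=
        (hV'c.continuousAt.tendsto).comp hφc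
      have h3 := (hHy.neg).sub h2
      simp only [neg_zero, zero_sub] at h3
      refine h3.congr (fun t => by ring)
    have hev : ∀ᶠ t in atTop, (-3 * H t * y t - V' (φ t)) ≤ -(k/2) :=
      hyd_t.eventually_le_const (by linarith)
    obtain ⟨a, ha⟩ := eventually_atTop.1 (hev.and (eventually_ge_atTop t₀))
    set T := max a t₀ with hT
    have hTa : a ≤ T := le_max_left a t₀
    have hTt₀ : t₀ ≤ T := le_max_right a t₀
    have hycont : ContinuousOn y (Set.Ici T) := fun t ht =>
      (((hyd t (le_trans hTt₀ ht)).continuousWithinAt).mono (Ici_subset_Ici.2 hTt₀))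
    have hwanti : AntitoneOn (fun t => y t + k/2 * t) (Set.Ici T) := by
      apply antitoneOn_of_deriv_nonpos (convex_Ici T)
      · exact hycont.add (continuousOn_const.mul continuousOn_id)
      · intro t ht
        rw [interior_Ici] at ht
        have hyat : HasDerivAt y (-3 * H t * y t - V' (φ t)) t :=
          (hyd t (le_trans hTt₀ ht.le)).hasDerivAt
            (Ici_mem_nhds (lt_of_le_of_lt hTt₀ ht))
        exact (hyat.add ((hasDerivAt_id t).const_mul (k/2))).differentiableAt.differentiableWithinAt
      · intro t ht
        rw [interior_Ici] at ht
        have hyat : HasDerivAt y (-3 * H t * y t - V' (φ t)) t :=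
          (hyd t (le_trans hTt₀ ht.le)).hasDerivAt
            (Ici_mem_nhds (lt_of_le_of_lt hTt₀ ht))
        have hw : HasDerivAt (fun t => y t + k/2 * t)
            ((-3 * H t * y t - V' (φ t)) + k/2) t := by
          exact (hyat.add ((hasDerivAt_id t).const_mul (k/2))).congr_deriv (by ring)
        rw [hw.deriv]
        have := (ha t (le_trans hTa ht.le)).1
        linarith
    -- derive contradiction: y is bounded above by something tending to atBot
    exfalso
    have hle : y ≤ᶠ[atTop] (fun t => (y T + k/2 * T) - k/2 * t) := by
      filter_upwards [eventually_ge_atTop T] with t ht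
      have := hwanti (self_mem_Ici) ht ht
      simp only at this
      linarith
    have h1 : Tendsto (fun t : ℝ => k/2 * t) atTop atTop :=
      Tendsto.const_mul_atTop (by linarith) tendsto_id
    have h2 : Tendsto (fun t : ℝ => (y T + k/2 * T) - k/2 * t) atTop atBot := by
      have := tendsto_atBot_add_const_left atTop (y T + k/2 * T)
        (tendsto_neg_atBot_iff.2 h1)
      exact this.congr (fun t => (sub_eq_add_neg _ _).symm)
    exact not_tendsto_atBot_of_tendsto_nhds hy0 (tendsto_atBot_mono' atTop hle h2)

set_option maxHeartbeats 1000000 in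
/-- Proposition 3: under the hypotheses of Proposition 2 and assuming in addition that
`V' > 0` on `(0, ∞)` and `V' < 0` on `(-∞, 0)`, the scalar field `φ` tends, as `t → ∞`,
to exactly one of `+∞`, `-∞` or `0` (the three alternatives are mutually exclusive). -/
theorem stmt_2 (t₀ γ : ℝ) (hγ0 : 0 < γ) (hγ2 : γ ≤ 2)
    (V : ℝ → ℝ) (hV : ContDiff ℝ 2 V)
    (φ y ρ H : ℝ → ℝ)
    (hφ : ∀ t ∈ Set.Ici t₀, HasDerivWithinAt φ (y t) (Set.Ici t₀) t)
    (hy : ∀ t ∈ Set.Ici t₀,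
      HasDerivWithinAt y (-3 * H t * y t - deriv V (φ t)) (Set.Ici t₀) t)
    (hρ : ∀ t ∈ Set.Ici t₀, HasDerivWithinAt ρ (-3 * γ * ρ t * H t) (Set.Ici t₀) t)
    (hH : ∀ t ∈ Set.Ici t₀,
      HasDerivWithinAt H (-(1 / 2) * y t ^ 2 - γ / 2 * ρ t) (Set.Ici t₀) t)
    (hρ0 : ∀ t ∈ Set.Ici t₀, 0 ≤ ρ t)
    (hcon : ∀ t ∈ Set.Ici t₀, 3 * H t ^ 2 = ρ t + 1 / 2 * y t ^ 2 + V (φ t))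
    (hVnn : ∀ s : ℝ, 0 ≤ V s)
    (hVzero : ∀ s : ℝ, V s = 0 ↔ s = 0)
    (hV'bdd : ∀ A : Set ℝ, Bornology.IsBounded (V '' A) →
      Bornology.IsBounded (deriv V '' A))
    (hV'pos : ∀ s : ℝ, 0 < s → 0 < deriv V s)
    (hV'neg : ∀ s : ℝ, s < 0 → deriv V s < 0)
    (hH0 : 0 < H t₀) :
    (Tendsto φ atTop atTop ∧ ¬ Tendsto φ atTop atBot ∧ ¬ Tendsto φ atTop (nhds 0)) ∨
    (Tendsto φ atTop atBot ∧ ¬ Tendsto φ atTop atTop ∧ ¬ Tendsto φ atTop (nhds 0)) ∨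
    (Tendsto φ atTop (nhds 0) ∧ ¬ Tendsto φ atTop atTop ∧ ¬ Tendsto φ atTop atBot) := by
  apply aux_pack
  -- basic continuity facts
  have hVdiff : Differentiable ℝ V := hV.differentiable (by norm_num)
  have hVc : Continuous V := hVdiff.continuous
  have hV'c : Continuous (deriv V) := by
    have h1 : ContDiff ℝ (1 + 1) V := by exact_mod_cast hV
    exact ((contDiff_succ_iff_deriv.mp h1).2.2).continuous
  have hV0 : V 0 = 0 := (hVzero 0).2 rfl
  have hVmono : StrictMonoOn V (Set.Ici 0) := by
    apply strictMonoOn_of_deriv_pos (convex_Ici 0) hVc.continuousOn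
    intro s hs
    rw [interior_Ici] at hs
    exact hV'pos s hs
  have hVanti : StrictAntiOn V (Set.Iic 0) := by
    apply strictAntiOn_of_deriv_neg (convex_Iic 0) hVc.continuousOn
    intro s hs
    rw [interior_Iic] at hs
    exact hV'neg s hs
  have hHcont : ContinuousOn H (Set.Ici t₀) := fun t ht => (hH t ht).continuousWithinAt
  have hycont : ContinuousOn y (Set.Ici t₀) := fun t ht => (hy t ht).continuousWithinAt
  have hφcont : ContinuousOn φ (Set.Ici t₀) := fun t ht => (hφ t ht).continuousWithinAt
  by_cases hHpos : ∀ t, t₀ ≤ t → 0 < H t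
  case neg =>
    -- H reaches 0 at some t₁; then everything is frozen at the origin afterwards
    push_neg at hHpos
    obtain ⟨tb, htb, htb0⟩ := hHpos
    obtain ⟨t₁, ht₁mem, ht₁⟩ := intermediate_value_Icc' htb
      (hHcont.mono (Set.Icc_subset_Ici_self))
      (show (0:ℝ) ∈ Set.Icc (H tb) (H t₀) from ⟨htb0, hH0.le⟩)
    have ht₁t₀ : t₀ ≤ t₁ := ht₁mem.1
    have hzero : ∀ b, t₁ ≤ b → φ b = 0 := by
      intro b hb
      set L : ℝ → ℝ := fun t => 3 * H t ^ 2 with hLdef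
      have hsub : Set.Icc t₁ b ⊆ Set.Ici t₀ :=
        Set.Icc_subset_Ici_self.trans (Set.Ici_subset_Ici.2 ht₁t₀)
      have hLcont : ContinuousOn L (Set.Icc t₁ b) :=
        continuousOn_const.mul ((hHcont.mono hsub).pow 2)
      obtain ⟨C, hC⟩ := (isCompact_Icc (a := t₁) (b := b)).exists_bound_of_continuousOn
        (hHcont.mono hsub)
      set m := max 2 γ with hmdef
      have hm2 : (2:ℝ) ≤ m := le_max_left _ _
      have hmγ : γ ≤ m := le_max_right _ _
      have hm0 : (0:ℝ) < m := by linarith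
      set K := 3 * |C| * m with hKdef
      have hL' : ∀ t ∈ Set.Ico t₁ b, HasDerivWithinAt L
          (3 * ((2:ℕ) * H t ^ 1 * (-(1 / 2) * y t ^ 2 - γ / 2 * ρ t))) (Set.Ici t) t := by
        intro t ht
        have h1 : t₀ ≤ t := le_trans ht₁t₀ ht.1
        exact (((hH t h1).pow 2).const_mul 3).mono (Set.Ici_subset_Ici.2 h1)
      have hbound : ∀ t ∈ Set.Ico t₁ b,
          ‖3 * ((2:ℕ) * H t ^ 1 * (-(1 / 2) * y t ^ 2 - γ / 2 * ρ t))‖ ≤ K * ‖L t‖ + 0 := by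
        intro t ht
        have h1 : t₀ ≤ t := le_trans ht₁t₀ ht.1
        have hcon' := hcon t h1
        have hρ0' := hρ0 t h1
        have hVnn' := hVnn (φ t)
        have hHb : |H t| ≤ |C| := by
          have := hC t (Set.Ico_subset_Icc_self ht)
          rw [Real.norm_eq_abs] at this
          exact le_trans this (le_abs_self C)
        have habs : |3 * ((2:ℕ) * H t ^ 1 * (-(1 / 2) * y t ^ 2 - γ / 2 * ρ t))| =
            6 * |H t| * ((1/2) * y t ^ 2 + γ/2 * ρ t) := by
          rw [show 3 * ((2:ℕ) * H t ^ 1 * (-(1 / 2) * y t ^ 2 - γ / 2 * ρ t)) =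
            (6 * H t) * (-((1/2) * y t ^ 2 + γ/2 * ρ t)) by push_cast; ring]
          rw [abs_mul, abs_neg,
            abs_of_nonneg (show (0:ℝ) ≤ (1/2) * y t ^ 2 + γ/2 * ρ t by nlinarith [sq_nonneg (y t)]),
            show |6 * H t| = 6 * |H t| by
              rw [abs_mul, abs_of_nonneg (by norm_num : (0:ℝ) ≤ 6)]]
        rw [Real.norm_eq_abs, Real.norm_eq_abs, habs]
        have hLt : |L t| = 3 * H t ^ 2 := abs_of_nonneg (by positivity)
        rw [hLt]
        have hstep1 : 6 * |H t| * ((1/2) * y t ^ 2 + γ/2 * ρ t) ≤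
            6 * |C| * ((1/2) * y t ^ 2 + γ/2 * ρ t) := by
          apply mul_le_mul_of_nonneg_right (by linarith) (by nlinarith [sq_nonneg (y t)])
        have hstep2 : (1/2) * y t ^ 2 + γ/2 * ρ t ≤ m/2 * (3 * H t ^ 2) := by
          rw [hcon']
          nlinarith [sq_nonneg (y t)]
        have hstep3 : 6 * |C| * ((1/2) * y t ^ 2 + γ/2 * ρ t) ≤ 6 * |C| * (m/2 * (3 * H t ^ 2)) :=
          mul_le_mul_of_nonneg_left hstep2 (by positivity)
        calc 6 * |H t| * ((1/2) * y t ^ 2 + γ/2 * ρ t)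
            ≤ 6 * |C| * ((1/2) * y t ^ 2 + γ/2 * ρ t) := hstep1
          _ ≤ 6 * |C| * (m/2 * (3 * H t ^ 2)) := hstep3
          _ = K * (3 * H t ^ 2) + 0 := by rw [hKdef]; ring
      have hLa : ‖L t₁‖ ≤ 0 := by
        simp only [hLdef, ht₁, Real.norm_eq_abs]
        norm_num
      have hgr := norm_le_gronwallBound_of_norm_deriv_right_le hLcont hL' hLa hbound b
        ⟨hb, le_refl b⟩
      rw [gronwallBound_ε0_δ0, Real.norm_eq_abs] at hgr
      have hLb : L b = 0 := abs_nonpos_iff.1 hgr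
      have hb₀ : t₀ ≤ b := le_trans ht₁t₀ hb
      have hcon' := hcon b hb₀
      have hVb : V (φ b) = 0 := by
        have hρ0' := hρ0 b hb₀
        have hVnn' := hVnn (φ b)
        have : (3:ℝ) * H b ^ 2 = 0 := hLb
        nlinarith [sq_nonneg (y b)]
      exact (hVzero _).1 hVb
    refine Or.inr (Or.inr ?_)
    have heq : φ =ᶠ[atTop] fun _ => (0:ℝ) := by
      filter_upwards [eventually_ge_atTop t₁] with t ht
      exact hzero t ht
    exact Tendsto.congr' heq.symm tendsto_const_nhds
  case pos =>
    set E : ℝ → ℝ := fun t => 1/2 * y t ^ 2 + V (φ t) with hEdef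
    have hEt : ∀ t, E t = 1/2 * y t ^ 2 + V (φ t) := fun t => rfl
    have hEat : ∀ t, t₀ < t → HasDerivAt E
        (y t * (-3 * H t * y t - deriv V (φ t)) + deriv V (φ t) * y t) t := by
      intro t ht
      have hyat : HasDerivAt y (-3 * H t * y t - deriv V (φ t)) t :=
        (hy t ht.le).hasDerivAt (Ici_mem_nhds ht)
      have hφat : HasDerivAt φ (y t) t := (hφ t ht.le).hasDerivAt (Ici_mem_nhds ht)
      have h1 : HasDerivAt (fun t => 1/2 * y t ^ 2)
          (y t * (-3 * H t * y t - deriv V (φ t))) t := by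
        have := (hyat.pow 2).const_mul (1/2 : ℝ)
        refine this.congr_deriv ?_
        push_cast
        ring
      have h2 : HasDerivAt (fun t => V (φ t)) (deriv V (φ t) * y t) t :=
        ((hVdiff (φ t)).hasDerivAt).comp t hφat
      exact h1.add h2
    have hEcont : ContinuousOn E (Set.Ici t₀) :=
      (continuousOn_const.mul (hycont.pow 2)).add (hVc.comp_continuousOn hφcont)
    have hEanti : AntitoneOn E (Set.Ici t₀) := by
      apply antitoneOn_of_deriv_nonpos (convex_Ici t₀) hEcont
      · intro t ht
        rw [interior_Ici] at ht
        exact (hEat t ht).differentiableAt.differentiableWithinAt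
      · intro t ht
        rw [interior_Ici] at ht
        rw [(hEat t ht).deriv]
        have heq : y t * (-3 * H t * y t - deriv V (φ t)) + deriv V (φ t) * y t
            = -3 * H t * y t ^ 2 := by ring
        rw [heq]
        nlinarith [hHpos t ht.le, sq_nonneg (y t)]
    have hEnn : ∀ t, t₀ ≤ t → 0 ≤ E t := fun t ht =>
      add_nonneg (by positivity) (hVnn _)
    clear_value E
    obtain ⟨E', hE'0, hEtend, hElb⟩ := aux_tendsto_of_antitoneOn hEanti hEnn
    have hHanti : AntitoneOn H (Set.Ici t₀) := by
      apply antitoneOn_of_deriv_nonpos (convex_Ici t₀) hHcont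
      · intro t ht
        rw [interior_Ici] at ht
        exact ((hH t (Set.Ioi_subset_Ici_self ht)).hasDerivAt (Ici_mem_nhds ht)).differentiableAt.differentiableWithinAt
      · intro t ht
        rw [interior_Ici] at ht
        rw [((hH t (Set.Ioi_subset_Ici_self ht)).hasDerivAt (Ici_mem_nhds ht)).deriv]
        nlinarith [hρ0 t (Set.Ioi_subset_Ici_self ht), sq_nonneg (y t)]
    obtain ⟨H', hH'0, hHtend, hHlb⟩ := aux_tendsto_of_antitoneOn hHanti
      (fun t ht => (hHpos t ht).le)
    have hEub : ∀ t, t₀ ≤ t → E t ≤ E t₀ := fun t ht =>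
      hEanti Set.self_mem_Ici ht ht
    have hρlim : 0 ≤ 3 * H' ^ 2 - E' := by
      have h3H : Tendsto (fun t => 3 * H t ^ 2 - E t) atTop (nhds (3 * H' ^ 2 - E')) :=
        (tendsto_const_nhds.mul (hHtend.pow 2)).sub hEtend
      apply ge_of_tendsto h3H
      filter_upwards [eventually_ge_atTop t₀] with t ht
      have h1 := hcon t ht
      have h2 := hρ0 t ht
      rw [hEt t]
      linarith
    rcases eq_or_lt_of_le hE'0 with hE'eq | hE'pos
    · -- E' = 0 : φ → 0
      refine Or.inr (Or.inr ?_)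
      have hVφ0 : Tendsto (fun t => V (φ t)) atTop (nhds 0) := by
        apply squeeze_zero' (g := E)
        · filter_upwards with t using hVnn _
        · filter_upwards [eventually_ge_atTop t₀] with t ht
          have h1 : 0 ≤ 1/2 * y t ^ 2 := by positivity
          rw [hEt t]
          linarith
        · rwa [← hE'eq] at hEtend
      rw [tendsto_order]
      constructor
      · intro a ha
        have hVa : 0 < V a := by
          have := hVanti (Set.mem_Iic.2 ha.le) (Set.mem_Iic.2 (le_refl 0)) ha
          rwa [hV0] at this
        filter_upwards [hVφ0.eventually_lt_const hVa] with t h1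
        by_contra hle
        push_neg at hle
        have := hVanti.antitoneOn (Set.mem_Iic.2 (le_trans hle ha.le))
          (Set.mem_Iic.2 ha.le) hle
        linarith
      · intro b hb
        have hVb : 0 < V b := by
          have := hVmono (Set.mem_Ici.2 (le_refl 0)) (Set.mem_Ici.2 hb.le) hb
          rwa [hV0] at this
        filter_upwards [hVφ0.eventually_lt_const hVb] with t h1
        by_contra hle
        push_neg at hle
        have := hVmono.monotoneOn (Set.mem_Ici.2 hb.le)
          (Set.mem_Ici.2 (le_trans hb.le hle)) hle
        linarith
    · -- E' > 0
      have hH'pos : 0 < H' := by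
        rcases eq_or_lt_of_le hH'0 with h | h
        · exfalso
          rw [← h] at hρlim
          norm_num at hρlim
          linarith
        · exact h
      have hbdd1 : Bornology.IsBounded (V '' (φ '' Set.Ici t₀)) := by
        apply (Metric.isBounded_Icc 0 (E t₀)).subset
        rintro x ⟨s, ⟨t, ht, rfl⟩, rfl⟩
        refine ⟨hVnn _, ?_⟩
        have h1 := hEub t ht
        have h2 : 0 ≤ 1/2 * y t ^ 2 := by positivity
        rw [hEt t] at h1
        linarith
      obtain ⟨Kv, hKv⟩ := isBounded_iff_forall_norm_le.1 (hV'bdd _ hbdd1)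
      have hKv' : ∀ t, t₀ ≤ t → |deriv V (φ t)| ≤ Kv := by
        intro t ht
        have := hKv _ ⟨φ t, ⟨t, ht, rfl⟩, rfl⟩
        rwa [Real.norm_eq_abs] at this
      set Y := Real.sqrt (2 * E t₀) with hYdef
      have hY0 : 0 ≤ Y := Real.sqrt_nonneg _
      have hyY : ∀ t, t₀ ≤ t → |y t| ≤ Y := by
        intro t ht
        have h1 := hEub t ht
        have h2 := hVnn (φ t)
        rw [hEt t] at h1
        have h3 : y t ^ 2 ≤ 2 * E t₀ := by linarith
        rw [← Real.sqrt_sq_eq_abs]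
        exact Real.sqrt_le_sqrt h3
      set C₂ := 3 * H t₀ * Y + Kv + 1 with hC₂def
      have hKv0 : 0 ≤ Kv := le_trans (abs_nonneg _) (hKv' t₀ (le_refl t₀))
      have hC₂pos : 0 < C₂ := by nlinarith
      clear_value Y C₂
      have hydbd : ∀ t ∈ Set.Ici t₀, ‖-3 * H t * y t - deriv V (φ t)‖ ≤ C₂ := by
        intro t ht
        rw [Real.norm_eq_abs]
        have h1 : |(-3 * H t * y t) - deriv V (φ t)| ≤ |(-3 * H t * y t)| + |deriv V (φ t)| :=
          abs_sub _ _
        have h2 : |(-3 * H t * y t)| = 3 * (|H t| * |y t|) := by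
          rw [show (-3 * H t * y t) = (-3) * (H t * y t) by ring, abs_mul, abs_mul]
          norm_num
        have h3 : |H t| = H t := abs_of_pos (hHpos t ht)
        have h4 : H t ≤ H t₀ := hHanti Set.self_mem_Ici ht ht
        have h5 := hyY t ht
        have h6 := hKv' t ht
        have h7 : |H t| * |y t| ≤ H t₀ * Y :=
          mul_le_mul (by rw [h3]; exact h4) h5 (abs_nonneg _) hH0.le
        rw [h2] at h1
        calc |(-3 * H t * y t) - deriv V (φ t)| ≤ 3 * (|H t| * |y t|) + |deriv V (φ t)| := h1
          _ ≤ 3 * (H t₀ * Y) + Kv := by linarith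
          _ ≤ C₂ := by rw [hC₂def]; linarith
      have hylip : ∀ a b, t₀ ≤ a → t₀ ≤ b → |y b - y a| ≤ C₂ * |b - a| := by
        intro a b ha hb
        have := Convex.norm_image_sub_le_of_norm_hasDerivWithin_le hy hydbd
          (convex_Ici t₀) ha hb
        rwa [Real.norm_eq_abs, Real.norm_eq_abs] at this
      -- Barbalat: y → 0
      have hy0 : Tendsto y atTop (nhds 0) := by
        by_contra hy0
        rw [Metric.tendsto_atTop] at hy0
        push_neg at hy0
        obtain ⟨ε, hεpos, hfreq⟩ := hy0
        set δ := ε / (2 * C₂) with hδdef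
        have hδpos : 0 < δ := by positivity
        set c₀ := 3 * H' * (ε^2/4) * δ with hc₀def
        have hc₀pos : 0 < c₀ := by positivity
        clear_value δ c₀
        have hEδ : Tendsto (fun t => E t - E (t + δ)) atTop (nhds 0) := by
          have h1 : Tendsto (fun t : ℝ => t + δ) atTop atTop :=
            tendsto_atTop_add_const_right atTop δ tendsto_id
          have := hEtend.sub (hEtend.comp h1)
          simpa using this
        obtain ⟨N, hN⟩ := eventually_atTop.1
          ((hEδ.eventually_lt_const hc₀pos).and (eventually_ge_atTop t₀))
        obtain ⟨t, htN, htε⟩ := hfreq N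
        have ht₀ : t₀ ≤ t := (hN t htN).2
        have hlt : E t - E (t + δ) < c₀ := (hN t htN).1
        have hyε : ∀ s ∈ Set.Icc t (t + δ), ε/2 ≤ |y s| := by
          intro s hs
          have h1 : |y s - y t| ≤ C₂ * |s - t| := hylip t s ht₀ (le_trans ht₀ hs.1)
          have h2 : |s - t| ≤ δ := by
            rw [abs_of_nonneg (by linarith [hs.1])]
            linarith [hs.2]
          have h3 : C₂ * |s - t| ≤ C₂ * δ := mul_le_mul_of_nonneg_left h2 hC₂pos.le
          have h4 : C₂ * δ ≤ ε/2 := by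
            rw [hδdef]
            rw [mul_comm, div_mul_eq_mul_div, mul_comm]
            rw [div_le_iff₀ (by positivity)]
            ring_nf
            nlinarith
          have h5 : ε ≤ |y t| := by rwa [Real.dist_eq, sub_zero] at htε
          have h6 : |y t| - |y s| ≤ |y t - y s| := abs_sub_abs_le_abs_sub _ _
          rw [abs_sub_comm] at h6
          linarith
        have hGanti : AntitoneOn (fun s => E s + 3 * H' * (ε^2/4) * s)
            (Set.Icc t (t + δ)) := by
          apply antitoneOn_of_deriv_nonpos (convex_Icc _ _)
          · exact ((hEcont.mono (Set.Icc_subset_Ici_self.trans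
              (Set.Ici_subset_Ici.2 ht₀))).add (continuousOn_const.mul continuousOn_id))
          · intro s hs
            rw [interior_Icc] at hs
            have hs₀ : t₀ < s := lt_of_le_of_lt ht₀ hs.1
            exact ((hEat s hs₀).add ((hasDerivAt_id s).const_mul
              (3 * H' * (ε^2/4)))).differentiableAt.differentiableWithinAt
          · intro s hs
            rw [interior_Icc] at hs
            have hs₀ : t₀ < s := lt_of_le_of_lt ht₀ hs.1
            have hw : HasDerivAt (fun s => E s + 3 * H' * (ε^2/4) * s)
                ((y s * (-3 * H s * y s - deriv V (φ s)) + deriv V (φ s) * y s)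
                  + 3 * H' * (ε^2/4)) s := by
              have := (hEat s hs₀).add ((hasDerivAt_id s).const_mul (3 * H' * (ε^2/4)))
              exact this.congr_deriv (by ring)
            rw [hw.deriv]
            have h6 : ε/2 ≤ |y s| := hyε s (Set.Ioo_subset_Icc_self hs)
            have h7 : ε^2/4 ≤ y s ^ 2 := by nlinarith [sq_abs (y s), abs_nonneg (y s)]
            have h8 : H' ≤ H s := hHlb s (le_trans ht₀ hs.1.le)
            have h9 : H' * (ε^2/4) ≤ H s * y s ^ 2 :=
              mul_le_mul h8 h7 (by positivity) (hHpos s hs₀.le).le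
            have heq : y s * (-3 * H s * y s - deriv V (φ s)) + deriv V (φ s) * y s
                + 3 * H' * (ε^2/4) = -3 * (H s * y s ^ 2) + 3 * (H' * (ε^2/4)) := by ring
            rw [heq]
            linarith
        have hkey := hGanti (Set.left_mem_Icc.2 (by linarith))
          (Set.right_mem_Icc.2 (by linarith)) (by linarith)
        simp only at hkey
        rw [hc₀def] at hlt
        nlinarith
      -- V ∘ φ → E'
      have hysq : Tendsto (fun t => y t ^ 2) atTop (nhds 0) := by
        have := hy0.mul hy0
        rw [mul_zero] at this
        exact this.congr (fun t => (pow_two (y t)).symm)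
      have hVφ : Tendsto (fun t => V (φ t)) atTop (nhds E') := by
        have h1 : Tendsto (fun t => E t - 1/2 * y t ^ 2) atTop (nhds E') := by
          have := hEtend.sub (hysq.const_mul (1/2 : ℝ))
          simpa using this
        exact h1.congr (fun t => by rw [hEt t]; ring)
      -- φ stays away from 0 eventually
      have hcont0 : Tendsto V (nhds 0) (nhds 0) := by
        have h := hVc.continuousAt (x := (0:ℝ))
        rwa [ContinuousAt, hV0] at h
      obtain ⟨δ₀, hδ₀pos, hδ₀⟩ := Metric.eventually_nhds_iff.1
        (hcont0.eventually_lt_const (show (0:ℝ) < E'/2 by linarith))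
      have hfar : ∀ᶠ t in atTop, δ₀ ≤ |φ t| := by
        filter_upwards [hVφ.eventually_const_lt (show E'/2 < E' by linarith)] with t h1
        by_contra h
        push_neg at h
        have h2 : dist (φ t) 0 < δ₀ := by rwa [Real.dist_eq, sub_zero]
        have := hδ₀ h2
        linarith
      obtain ⟨T0, hT0⟩ := eventually_atTop.1 (hfar.and (eventually_ge_atTop t₀))
      set T := max T0 t₀ with hTdef
      have hTt₀ : t₀ ≤ T := le_max_right _ _
      have hT : ∀ t, T ≤ t → δ₀ ≤ |φ t| ∧ t₀ ≤ t := fun t ht =>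
        hT0 t (le_trans (le_max_left _ _) ht)
      have hHy : Tendsto (fun t => 3 * H t * y t) atTop (nhds 0) := by
        apply squeeze_zero_norm' (a := fun t => 3 * H t₀ * |y t|)
        · filter_upwards [eventually_ge_atTop t₀] with t ht
          rw [Real.norm_eq_abs]
          have h2 : |3 * H t * y t| = 3 * H t * |y t| := by
            rw [abs_mul, abs_mul, abs_of_pos (hHpos t ht),
              abs_of_nonneg (by norm_num : (0:ℝ) ≤ 3)]
          rw [h2]
          have h3 := hHanti Set.self_mem_Ici ht ht
          nlinarith [abs_nonneg (y t), hHpos t ht]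
        · have h1 : Tendsto (fun t => |y t|) atTop (nhds 0) := by
            have := hy0.abs
            simpa using this
          have := h1.const_mul (3 * H t₀)
          simpa using this
      rcases lt_or_ge 0 (φ T) with hsign | hsign
      · -- eventually positive
        have hposall : ∀ t, T ≤ t → 0 < φ t := by
          intro t ht
          by_contra h
          push_neg at h
          obtain ⟨s, hs_mem, hs⟩ := intermediate_value_Icc' ht
            (hφcont.mono (Set.Icc_subset_Ici_self.trans (Set.Ici_subset_Ici.2 hTt₀)))
            (show (0:ℝ) ∈ Set.Icc (φ t) (φ T) from ⟨h, hsign.le⟩)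
          have h1 := (hT s hs_mem.1).1
          rw [hs] at h1
          simp at h1
          linarith
        exact Or.inl (aux_pos_branch hVc hV'c hVmono hV'pos hV0 hE'pos hy hVφ hy0 hHy
          (eventually_atTop.2 ⟨T, hposall⟩))
      · -- eventually negative
        have hTneg : φ T < 0 := by
          have h1 := (hT T (le_refl T)).1
          rw [abs_of_nonpos hsign] at h1
          linarith
        have hnegall : ∀ t, T ≤ t → φ t < 0 := by
          intro t ht
          by_contra h
          push_neg at h
          obtain ⟨s, hs_mem, hs⟩ := intermediate_value_Icc ht
            (hφcont.mono (Set.Icc_subset_Ici_self.trans (Set.Ici_subset_Ici.2 hTt₀)))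
            (show (0:ℝ) ∈ Set.Icc (φ T) (φ t) from ⟨hTneg.le, h⟩)
          have h1 := (hT s hs_mem.1).1
          rw [hs] at h1
          simp at h1
          linarith
        refine Or.inr (Or.inl ?_)
        rw [← tendsto_neg_atTop_iff]
        apply aux_pos_branch (V := fun s => V (-s)) (V' := fun s => -deriv V (-s))
          (φ := fun t => -φ t) (y := fun t => -y t) (H := H) (t₀ := t₀) (E' := E')
        · exact hVc.comp continuous_neg
        · exact (hV'c.comp continuous_neg).neg
        · intro a ha b hb hab
          exact hVanti (Set.mem_Iic.2 (neg_nonpos.2 hb)) (Set.mem_Iic.2 (neg_nonpos.2 ha))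
            (neg_lt_neg hab)
        · intro s hs
          have := hV'neg (-s) (by linarith)
          linarith
        · simp [hV0]
        · exact hE'pos
        · intro t ht
          have h := (hy t ht).neg
          refine h.congr_deriv ?_
          rw [neg_neg]
          ring
        · refine hVφ.congr (fun t => ?_)
          rw [neg_neg]
        · have := hy0.neg
          simpa using this
        · have := hHy.neg
          simp only [neg_zero] at this
          refine this.congr (fun t => by ring)
        · filter_upwards [eventually_atTop.2 ⟨T, hnegall⟩] with t ht
          linarith
end

section
/- Suppose φ, y, ρ, H solve the flat scalar-field system on [t₀, ∞) with the Friedmann constraint 3H² = ρ + (1/2)y² + V(φ), H(t₀) > 0, and the potential satisfies: V(φ) ≥ 0 for all φ; V(φ) = 0 if and only if φ = 0; V' is bounded on every subset A ⊆ ℝ on which V is bounded; V'(φ) > 0 for φ > 0; V'(φ) < 0 for φ < 0. Assume moreover that V tends to a limit L₊ ∈ (0, +∞] as φ → +∞ and to a limit L₋ ∈ (0, +∞] as φ → -∞ (these limits exist by monotonicity of V on each half-line), and that 3·H(t₀)² < min{L₊, L₋}. Then φ(t) → 0 and H(t) → 0 as t → ∞. -/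
open Filter

section StmtAux

open Set

set_option maxHeartbeats 1000000

private lemma monoIcc' {t₀ a b : ℝ} {f f' : ℝ → ℝ}
    (hf : ∀ t ∈ Set.Ici t₀, HasDerivWithinAt f (f' t) (Set.Ici t₀) t)
    (ha : t₀ ≤ a) (h0 : ∀ t ∈ Set.Ioo a b, 0 ≤ f' t) :
    MonotoneOn f (Set.Icc a b) := by
  apply monotoneOn_of_hasDerivWithinAt_nonneg (f' := f') (convex_Icc a b)
  · intro t ht
    exact ((hf t (ha.trans ht.1)).continuousWithinAt).mono (fun s hs => ha.trans hs.1)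
  · intro x hx
    rw [interior_Icc] at hx ⊢
    exact (hf x (ha.trans hx.1.le)).mono (fun s hs => ha.trans hs.1.le)
  · intro x hx
    rw [interior_Icc] at hx
    exact h0 x hx

private lemma antiIcc' {t₀ a b : ℝ} {f f' : ℝ → ℝ}
    (hf : ∀ t ∈ Set.Ici t₀, HasDerivWithinAt f (f' t) (Set.Ici t₀) t)
    (ha : t₀ ≤ a) (h0 : ∀ t ∈ Set.Ioo a b, f' t ≤ 0) :
    AntitoneOn f (Set.Icc a b) := by
  apply antitoneOn_of_hasDerivWithinAt_nonpos (f' := f') (convex_Icc a b)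
  · intro t ht
    exact ((hf t (ha.trans ht.1)).continuousWithinAt).mono (fun s hs => ha.trans hs.1)
  · intro x hx
    rw [interior_Icc] at hx ⊢
    exact (hf x (ha.trans hx.1.le)).mono (fun s hs => ha.trans hs.1.le)
  · intro x hx
    rw [interior_Icc] at hx
    exact h0 x hx

end StmtAux

open Set in
set_option maxHeartbeats 1600000 in
/-- If, in addition to the hypotheses of Proposition 3, the potential tends to limits
`L₊, L₋ ∈ (0, +∞]` as `φ → ±∞` and the initial expansion satisfies
`3 H(t₀)² < min{L₊, L₋}`, then `φ(t) → 0` and `H(t) → 0` as `t → ∞`. -/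
theorem stmt_3 (t₀ γ : ℝ) (hγ0 : 0 < γ) (hγ2 : γ ≤ 2)
    (V : ℝ → ℝ) (hV : ContDiff ℝ 2 V)
    (φ y ρ H : ℝ → ℝ)
    (hφ : ∀ t ∈ Set.Ici t₀, HasDerivWithinAt φ (y t) (Set.Ici t₀) t)
    (hy : ∀ t ∈ Set.Ici t₀,
      HasDerivWithinAt y (-3 * H t * y t - deriv V (φ t)) (Set.Ici t₀) t)
    (hρ : ∀ t ∈ Set.Ici t₀, HasDerivWithinAt ρ (-3 * γ * ρ t * H t) (Set.Ici t₀) t)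
    (hH : ∀ t ∈ Set.Ici t₀,
      HasDerivWithinAt H (-(1 / 2) * y t ^ 2 - γ / 2 * ρ t) (Set.Ici t₀) t)
    (hρ0 : ∀ t ∈ Set.Ici t₀, 0 ≤ ρ t)
    (hcon : ∀ t ∈ Set.Ici t₀, 3 * H t ^ 2 = ρ t + 1 / 2 * y t ^ 2 + V (φ t))
    (hVnn : ∀ s : ℝ, 0 ≤ V s)
    (hVzero : ∀ s : ℝ, V s = 0 ↔ s = 0)
    (hV'bdd : ∀ A : Set ℝ, Bornology.IsBounded (V '' A) →
      Bornology.IsBounded (deriv V '' A))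
    (hV'pos : ∀ s : ℝ, 0 < s → 0 < deriv V s)
    (hV'neg : ∀ s : ℝ, s < 0 → deriv V s < 0)
    (hH0 : 0 < H t₀)
    (Lplus Lminus : EReal)
    (hLp0 : 0 < Lplus) (hLm0 : 0 < Lminus)
    (hLp : Tendsto (fun s : ℝ => (V s : EReal)) atTop (nhds Lplus))
    (hLm : Tendsto (fun s : ℝ => (V s : EReal)) atBot (nhds Lminus))
    (hinit : ((3 * H t₀ ^ 2 : ℝ) : EReal) < min Lplus Lminus) :
    Tendsto φ atTop (nhds 0) ∧ Tendsto H atTop (nhds 0) := by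
  have hVcont : Continuous V := hV.continuous
  -- continuity
  have hφc : ContinuousOn φ (Set.Ici t₀) := fun t ht => (hφ t ht).continuousWithinAt
  have hHc : ContinuousOn H (Set.Ici t₀) := fun t ht => (hH t ht).continuousWithinAt
  -- H' ≥ -3H²
  have hHder_ge : ∀ t ∈ Set.Ici t₀, -(3 * H t ^ 2) ≤ -(1 / 2) * y t ^ 2 - γ / 2 * ρ t := by
    intro t ht
    have h1 := hcon t ht
    have h2 := hρ0 t ht
    have h3 := hVnn (φ t)
    nlinarith [sq_nonneg (y t)]
  -- H antitone
  have hHanti : AntitoneOn H (Set.Ici t₀) := by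
    apply antitoneOn_of_hasDerivWithinAt_nonpos (convex_Ici t₀)
      (f' := fun t => -(1 / 2) * y t ^ 2 - γ / 2 * ρ t)
      (fun t ht => (hH t ht).continuousWithinAt)
    · intro x hx
      rw [interior_Ici] at hx ⊢
      exact (hH x (Set.mem_Ici.mpr (Set.mem_Ioi.mp hx).le)).mono Ioi_subset_Ici_self
    · intro x hx
      rw [interior_Ici] at hx
      have := hρ0 x (Set.mem_Ici.mpr (Set.mem_Ioi.mp hx).le)
      nlinarith [sq_nonneg (y x)]
  have hHle : ∀ t ∈ Set.Ici t₀, H t ≤ H t₀ := fun t ht => hHanti self_mem_Ici ht ht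
  -- H positive
  have hHpos : ∀ t ∈ Set.Ici t₀, 0 < H t := by
    by_contra hcontra
    push_neg at hcontra
    obtain ⟨u, hu, huH⟩ := hcontra
    set S : Set ℝ := Set.Ici t₀ ∩ H ⁻¹' Set.Iic 0 with hS
    have hScl : IsClosed S := hHc.preimage_isClosed_of_isClosed isClosed_Ici isClosed_Iic
    have hSne : S.Nonempty := ⟨u, hu, huH⟩
    have hSbd : BddBelow S := ⟨t₀, fun s hs => hs.1⟩
    set t₁ := sInf S with ht₁def
    have ht₁S : t₁ ∈ S := hScl.csInf_mem hSne hSbd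
    have ht₀t₁ : t₀ ≤ t₁ := ht₁S.1
    have ht₁H : H t₁ ≤ 0 := ht₁S.2
    have hlt : ∀ s ∈ Set.Ico t₀ t₁, 0 < H s := by
      intro s hs
      by_contra hns
      push_neg at hns
      exact absurd (csInf_le hSbd ⟨hs.1, hns⟩) (not_le.mpr hs.2)
    -- g = H * exp(3 H₀ (s - t₀)) is monotone on [t₀, t₁]
    have hg : ∀ s ∈ Set.Ici t₀, HasDerivWithinAt
        (fun s => H s * Real.exp (3 * H t₀ * (s - t₀)))
        ((-(1 / 2) * y s ^ 2 - γ / 2 * ρ s) * Real.exp (3 * H t₀ * (s - t₀))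
          + H s * (Real.exp (3 * H t₀ * (s - t₀)) * (3 * H t₀))) (Set.Ici t₀) s := by
      intro s hs
      have he : HasDerivAt (fun s : ℝ => Real.exp (3 * H t₀ * (s - t₀)))
          (Real.exp (3 * H t₀ * (s - t₀)) * (3 * H t₀)) s := by
        have h1 : HasDerivAt (fun s : ℝ => 3 * H t₀ * (s - t₀)) (3 * H t₀) s := by
          simpa using ((hasDerivAt_id s).sub_const t₀).const_mul (3 * H t₀)
        exact h1.exp
      exact (hH s hs).mul he.hasDerivWithinAt
    have hmono := monoIcc' hg le_rfl (a := t₀) (b := t₁) (by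
      intro s hs
      have hsI : s ∈ Set.Ici t₀ := hs.1.le
      have h1 := hHder_ge s hsI
      have h2 := hHle s hsI
      have h3 := hlt s ⟨hs.1.le, hs.2⟩
      have he := Real.exp_pos (3 * H t₀ * (s - t₀))
      nlinarith [mul_pos h3 he, mul_pos (mul_pos h3 h3) he])
    have hle := hmono (Set.left_mem_Icc.mpr ht₀t₁) (Set.right_mem_Icc.mpr ht₀t₁) ht₀t₁
    simp only [sub_self, mul_zero, Real.exp_zero, mul_one] at hle
    have he := Real.exp_pos (3 * H t₀ * (t₁ - t₀))
    nlinarith [mul_nonpos_of_nonpos_of_nonneg ht₁H he.le]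
  -- limit of H
  set Ht : ℝ → ℝ := fun t => H (max t t₀) with hHtdef
  have hHtanti : Antitone Ht :=
    fun a b hab => hHanti (le_max_right a t₀) (le_max_right b t₀) (max_le_max hab le_rfl)
  have hHtbdd : BddBelow (Set.range Ht) := by
    refine ⟨0, ?_⟩
    rintro v ⟨a, rfl⟩
    exact (hHpos _ (le_max_right a t₀)).le
  set Hinf := ⨅ t, Ht t with hHinfdef
  have hHto : Tendsto H atTop (nhds Hinf) := by
    refine (tendsto_atTop_ciInf hHtanti hHtbdd).congr' ?_
    filter_upwards [eventually_ge_atTop t₀] with t ht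
    simp [hHtdef, max_eq_left ht]
  have hHinf0 : 0 ≤ Hinf := le_ciInf fun t => (hHpos _ (le_max_right t t₀)).le
  have hHinfle : ∀ t ∈ Set.Ici t₀, Hinf ≤ H t := by
    intro t ht
    have h2 := ciInf_le hHtbdd t
    simpa [hHtdef, max_eq_left (Set.mem_Ici.mp ht)] using h2
  -- basic bounds
  have hH2 : ∀ t ∈ Set.Ici t₀, H t ^ 2 ≤ H t₀ ^ 2 := by
    intro t ht
    nlinarith [hHpos t ht, hHle t ht]
  have hρb : ∀ t ∈ Set.Ici t₀, ρ t ≤ 3 * H t₀ ^ 2 := by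
    intro t ht
    nlinarith [hcon t ht, hH2 t ht, hVnn (φ t), sq_nonneg (y t)]
  have hVb : ∀ t ∈ Set.Ici t₀, V (φ t) ≤ 3 * H t₀ ^ 2 := by
    intro t ht
    nlinarith [hcon t ht, hH2 t ht, hρ0 t ht, sq_nonneg (y t)]
  have hyabs : ∀ t ∈ Set.Ici t₀, |y t| ≤ 3 * H t₀ := by
    intro t ht
    have hy2 : y t ^ 2 ≤ 6 * H t₀ ^ 2 := by
      nlinarith [hcon t ht, hH2 t ht, hρ0 t ht, hVnn (φ t)]
    rw [abs_le]
    constructor <;> nlinarith [hH0]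
  -- bounds on φ
  have hin := lt_min_iff.mp hinit
  obtain ⟨M0, hM0⟩ : ∃ M, ∀ s ≥ M, 3 * H t₀ ^ 2 < V s := by
    have := hLp.eventually (eventually_gt_nhds hin.1)
    obtain ⟨M, hM⟩ := eventually_atTop.mp this
    exact ⟨M, fun s hs => EReal.coe_lt_coe_iff.mp (hM s hs)⟩
  obtain ⟨m0, hm0⟩ : ∃ M, ∀ s ≤ M, 3 * H t₀ ^ 2 < V s := by
    have := hLm.eventually (eventually_gt_nhds hin.2)
    obtain ⟨M, hM⟩ := eventually_atBot.mp this
    exact ⟨M, fun s hs => EReal.coe_lt_coe_iff.mp (hM s hs)⟩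
  set M' := max M0 1 with hM'def
  set m' := min m0 (-1) with hm'def
  have hM'pos : (0 : ℝ) < M' := lt_of_lt_of_le one_pos (le_max_right _ _)
  have hm'neg : m' < 0 := lt_of_le_of_lt (min_le_right _ _) (by norm_num)
  have hφub : ∀ t ∈ Set.Ici t₀, φ t < M' := by
    intro t ht
    by_contra hle
    push_neg at hle
    exact absurd (hVb t ht) (not_le.mpr (hM0 _ (le_trans (le_max_left _ _) hle)))
  have hφlb : ∀ t ∈ Set.Ici t₀, m' < φ t := by
    intro t ht
    by_contra hle
    push_neg at hle
    exact absurd (hVb t ht) (not_le.mpr (hm0 _ (le_trans hle (min_le_left _ _))))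
  have hφmem : ∀ t ∈ Set.Ici t₀, φ t ∈ Set.Icc m' M' :=
    fun t ht => ⟨(hφlb t ht).le, (hφub t ht).le⟩
  -- bound on deriv V on the range of φ
  have hV'cont : Continuous (deriv V) := hV.continuous_deriv one_le_two
  obtain ⟨C, hC⟩ : ∃ C, ∀ s ∈ Set.Icc m' M', |deriv V s| ≤ C := by
    obtain ⟨C, hC⟩ := isCompact_Icc.exists_bound_of_continuousOn
      (s := Set.Icc m' M') hV'cont.continuousOn
    exact ⟨C, fun s hs => by simpa [Real.norm_eq_abs] using hC s hs⟩
  have hC0 : 0 ≤ C := le_trans (abs_nonneg _)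
    (hC M' ⟨by linarith, le_rfl⟩)
  obtain ⟨K, hKdef⟩ : ∃ K, K = 45 * H t₀ ^ 3 + 3 * H t₀ * C + 1 := ⟨_, rfl⟩
  have hK0 : 0 < K := by
    have := pow_pos hH0 3
    have := mul_nonneg (mul_nonneg (by norm_num : (0:ℝ) ≤ 3) hH0.le) hC0
    simp only [hKdef]
    linarith
  obtain ⟨F, hFdef⟩ : ∃ F : ℝ → ℝ, F = fun t => 1 / 2 * y t ^ 2 + γ / 2 * ρ t := ⟨_, rfl⟩
  obtain ⟨F', hF'def⟩ : ∃ F' : ℝ → ℝ, F' = fun t =>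
      1 / 2 * (2 * y t ^ 1 * (-3 * H t * y t - deriv V (φ t))) + γ / 2 * (-3 * γ * ρ t * H t) :=
    ⟨_, rfl⟩
  have hFder : ∀ t ∈ Set.Ici t₀, HasDerivWithinAt F (F' t) (Set.Ici t₀) t := by
    intro t ht
    rw [hFdef, hF'def]
    exact (((hy t ht).pow 2).const_mul (1 / 2 : ℝ)).add ((hρ t ht).const_mul (γ / 2 : ℝ))
  have hFbound : ∀ t ∈ Set.Ici t₀, |F' t| ≤ K := by
    intro t ht
    have h1 := hyabs t ht
    have h2 := abs_le.mp h1
    have h3 := hC (φ t) (hφmem t ht)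
    have h5 := hHpos t ht
    have h6 := hHle t ht
    have h7 := hρ0 t ht
    have h8 := hρb t ht
    have hyV : |y t * deriv V (φ t)| ≤ 3 * H t₀ * C := by
      rw [abs_mul]
      exact mul_le_mul h1 h3 (abs_nonneg _) (by positivity)
    have h9 := abs_le.mp hyV
    have hy2 : y t ^ 2 ≤ 9 * H t₀ ^ 2 := by nlinarith [h2.1, h2.2]
    have p1a : 0 ≤ 3 * H t * y t ^ 2 := by positivity
    have p1b : 3 * H t * y t ^ 2 ≤ 27 * H t₀ ^ 3 := by
      nlinarith [mul_le_mul h6 hy2 (sq_nonneg (y t)) hH0.le]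
    have p3a : 0 ≤ 3 * γ ^ 2 / 2 * (ρ t * H t) := by positivity
    have p3b : 3 * γ ^ 2 / 2 * (ρ t * H t) ≤ 18 * H t₀ ^ 3 := by
      have hρH : ρ t * H t ≤ 3 * H t₀ ^ 2 * H t₀ := mul_le_mul h8 h6 h5.le (by positivity)
      have hγ4 : γ ^ 2 ≤ 4 := by nlinarith
      nlinarith [mul_nonneg h7 h5.le]
    have hEeq : F' t = -(3 * H t * y t ^ 2) - y t * deriv V (φ t)
        - 3 * γ ^ 2 / 2 * (ρ t * H t) := by
      simp only [hF'def]
      ring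
    rw [abs_le, hEeq]
    constructor
    · simp only [hKdef]
      linarith [h9.2]
    · simp only [hKdef]
      linarith [h9.1]
  have hFnonneg : ∀ t ∈ Set.Ici t₀, 0 ≤ F t := by
    intro t ht
    have := hρ0 t ht
    simp only [hFdef]
    nlinarith [sq_nonneg (y t)]
  -- Barbalat
  have hFto : Tendsto F atTop (nhds 0) := by
    rw [Metric.tendsto_atTop]
    intro ε hε
    obtain ⟨δ, hδdef⟩ : ∃ δ, δ = ε / (2 * K) := ⟨_, rfl⟩
    have hδ0 : 0 < δ := by rw [hδdef]; positivity
    obtain ⟨N, hN⟩ := (Metric.tendsto_atTop.mp hHto) (ε * δ / 4) (by positivity)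
    refine ⟨max N t₀, fun t ht => ?_⟩
    have htN : N ≤ t := le_trans (le_max_left _ _) ht
    have htt₀ : t₀ ≤ t := le_trans (le_max_right _ _) ht
    rw [Real.dist_eq, sub_zero, abs_of_nonneg (hFnonneg t htt₀)]
    by_contra hge
    push_neg at hge
    -- F ≥ ε/2 on [t, t+δ]
    have hFges : ∀ s ∈ Set.Icc t (t + δ), ε / 2 ≤ F s := by
      intro s hs
      have hmono := monoIcc' (f := fun s => F s + K * s) (f' := fun s => F' s + K)
        (fun s hs => (hFder s hs).add (by
          simpa using ((hasDerivAt_id s).const_mul K).hasDerivWithinAt)) htt₀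
        (a := t) (b := t + δ) (by
          intro s hs
          show (0:ℝ) ≤ F' s + K
          have := (abs_le.mp (hFbound s (le_trans htt₀ hs.1.le))).1
          linarith)
      have := hmono (Set.left_mem_Icc.mpr (by linarith)) hs hs.1
      have hKδ : K * δ = ε / 2 := by
        rw [hδdef]
        field_simp
      have hsub : s - t ≤ δ := by linarith [hs.2]
      have h10 : F t + K * t ≤ F s + K * s := this
      linarith [mul_le_mul_of_nonneg_left hsub hK0.le]
    -- H decreases by εδ/2 over [t, t+δ]
    have hanti := antiIcc' (f := fun s => H s + ε / 2 * s)
      (f' := fun s => (-(1 / 2) * y s ^ 2 - γ / 2 * ρ s) + ε / 2)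
      (fun s hs => (hH s hs).add (by
        simpa using ((hasDerivAt_id s).const_mul (ε / 2)).hasDerivWithinAt)) htt₀
      (a := t) (b := t + δ) (by
        intro s hs
        show (-(1 / 2) * y s ^ 2 - γ / 2 * ρ s) + ε / 2 ≤ 0
        have h1 := hFges s ⟨hs.1.le, hs.2.le⟩
        simp only [hFdef] at h1
        linarith)
    have h2 := hanti (Set.left_mem_Icc.mpr (by linarith))
      (Set.right_mem_Icc.mpr (by linarith)) (by linarith)
    have h2' : H (t + δ) + ε / 2 * (t + δ) ≤ H t + ε / 2 * t := h2
    have h3 : H (t + δ) ≤ H t - ε / 2 * δ := by linarith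
    have h4 := hHinfle (t + δ) (by simp only [Set.mem_Ici]; linarith)
    have h5 := (abs_lt.mp (by simpa [Real.dist_eq] using hN t htN)).2
    nlinarith [mul_pos hε hδ0]
  have hy2to : Tendsto (fun t => y t ^ 2) atTop (nhds 0) := by
    have h2 : Tendsto (fun t => 2 * F t) atTop (nhds 0) := by
      simpa using hFto.const_mul 2
    apply tendsto_of_tendsto_of_tendsto_of_le_of_le' tendsto_const_nhds h2
    · filter_upwards with t using sq_nonneg _
    · filter_upwards [eventually_ge_atTop t₀] with t ht
      have := hρ0 t ht
      simp only [hFdef]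
      nlinarith
  have hρto : Tendsto ρ atTop (nhds 0) := by
    have h2 : Tendsto (fun t => 2 / γ * F t) atTop (nhds 0) := by
      simpa using hFto.const_mul (2 / γ)
    apply tendsto_of_tendsto_of_tendsto_of_le_of_le' tendsto_const_nhds h2
    · filter_upwards [eventually_ge_atTop t₀] with t ht using hρ0 t ht
    · filter_upwards [eventually_ge_atTop t₀] with t ht
      have h3 : 2 / γ * F t = 1 / γ * y t ^ 2 + ρ t := by
        field_simp [hFdef]
        simp only [hFdef]
        ring
      rw [h3]
      nlinarith [sq_nonneg (y t), (by positivity : (0:ℝ) < 1 / γ)]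
  have hyto : Tendsto y atTop (nhds 0) := by
    rw [tendsto_zero_iff_abs_tendsto_zero]
    have h1 : Tendsto (fun t => Real.sqrt (y t ^ 2)) atTop (nhds (Real.sqrt 0)) :=
      (Real.continuous_sqrt.tendsto 0).comp hy2to
    simpa [Real.sqrt_sq_eq_abs, Function.comp_def] using h1
  have hVφto : Tendsto (fun t => V (φ t)) atTop (nhds (3 * Hinf ^ 2)) := by
    have h1 : Tendsto (fun t => 3 * (H t * H t) - ρ t - 1 / 2 * y t ^ 2) atTop
        (nhds (3 * (Hinf * Hinf) - 0 - 1 / 2 * 0)) :=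
      (((hHto.mul hHto).const_mul 3).sub hρto).sub (hy2to.const_mul (1 / 2))
    have h2 : (3 * (Hinf * Hinf) - 0 - 1 / 2 * 0) = 3 * Hinf ^ 2 := by ring
    rw [h2] at h1
    refine h1.congr' ?_
    filter_upwards [eventually_ge_atTop t₀] with t ht
    have := hcon t ht
    nlinarith
  have hHinfzero : Hinf = 0 := by
    by_contra hne
    have hpos : 0 < Hinf := hHinf0.lt_of_ne (Ne.symm hne)
    have hc : 0 < 3 * Hinf ^ 2 := by positivity
    obtain ⟨r, hr0, hrball⟩ : ∃ r > 0, ∀ s : ℝ, |s| < r → V s < 3 * Hinf ^ 2 / 2 := by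
      have h0 : V 0 = 0 := (hVzero 0).mpr rfl
      have hev : ∀ᶠ s in nhds (0 : ℝ), V s < 3 * Hinf ^ 2 / 2 := by
        have h1 := hVcont.tendsto 0
        rw [h0] at h1
        exact h1.eventually (eventually_lt_nhds (by linarith))
      obtain ⟨r, hr0, hr⟩ := Metric.eventually_nhds_iff_ball.mp hev
      exact ⟨r, hr0, fun s hs => hr s (by simpa [Real.dist_eq] using hs)⟩
    have hVφev := hVφto.eventually (eventually_gt_nhds (by linarith : 3 * Hinf ^ 2 / 2 < 3 * Hinf ^ 2))
    obtain ⟨T₁, hT₁⟩ := eventually_atTop.mp (hVφev.and (eventually_ge_atTop t₀))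
    have habs : ∀ t ≥ T₁, r ≤ |φ t| := by
      intro t ht
      by_contra h
      push_neg at h
      exact absurd (hT₁ t ht).1 (not_lt.mpr (hrball _ h).le)
    have hT₁0 : t₀ ≤ T₁ := (hT₁ T₁ le_rfl).2
    have hT₁r := habs T₁ le_rfl
    -- small-|y| eventuality, shared form
    rcases le_abs.mp hT₁r with hcase | hcase
    · -- φ T₁ ≥ r > 0 : φ stays ≥ r
      have hsign : ∀ t ≥ T₁, r ≤ φ t := by
        intro t ht
        by_contra hle
        push_neg at hle
        have h1 : φ t ≤ -r := by
          rcases le_abs.mp (habs t ht) with h | h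
          · linarith
          · linarith
        have hcont : ContinuousOn φ (Set.Icc T₁ t) := hφc.mono (fun s hs => le_trans hT₁0 hs.1)
        have h0mem : (0 : ℝ) ∈ Set.Icc (φ t) (φ T₁) := ⟨by linarith, by linarith⟩
        obtain ⟨s, hsmem, hs0⟩ := intermediate_value_Icc' ht hcont h0mem
        have := habs s hsmem.1
        rw [hs0] at this
        simp only [abs_zero] at this
        linarith
      have hrM : r ≤ M' := le_trans (hsign T₁ le_rfl) (hφmem T₁ hT₁0).2
      obtain ⟨x₀, hx₀mem, hx₀min⟩ :=
        isCompact_Icc.exists_isMinOn (Set.nonempty_Icc.mpr hrM) hV'cont.continuousOn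
      have hd : 0 < deriv V x₀ := hV'pos x₀ (lt_of_lt_of_le hr0 hx₀mem.1)
      obtain ⟨d, hddef⟩ : ∃ d, d = deriv V x₀ := ⟨_, rfl⟩
      have hd0 : 0 < d := hddef ▸ hd
      have hdle : ∀ t ≥ T₁, d ≤ deriv V (φ t) := by
        intro t ht
        rw [hddef]
        exact isMinOn_iff.mp hx₀min _ ⟨hsign t ht, (hφmem t (le_trans hT₁0 ht)).2⟩
      have hyev : ∀ᶠ t in atTop, |y t| < d / (2 * (3 * H t₀ + 1)) := by
        have h1 := (tendsto_zero_iff_abs_tendsto_zero y).mp hyto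
        refine h1.eventually (eventually_lt_nhds ?_)
        have : (0:ℝ) < 2 * (3 * H t₀ + 1) := by nlinarith
        positivity
      obtain ⟨T₂, hT₂⟩ := eventually_atTop.mp (hyev.and (eventually_ge_atTop T₁))
      have hT₂0 : t₀ ≤ T₂ := le_trans hT₁0 (hT₂ T₂ le_rfl).2
      have hy'le : ∀ t ≥ T₂, -3 * H t * y t - deriv V (φ t) ≤ -(d / 2) := by
        intro t ht
        obtain ⟨hb, hT₁t⟩ := hT₂ t ht
        have ht₀t : t₀ ≤ t := le_trans hT₁0 hT₁t
        have h5 := hHpos t ht₀t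
        have h6 := hHle t ht₀t
        have hVd := hdle t hT₁t
        have hden : (0:ℝ) < 2 * (3 * H t₀ + 1) := by nlinarith
        have key : 2 * (3 * H t₀ + 1) * |y t| < d := by
          have h7 := mul_lt_mul_of_pos_left hb hden
          rwa [mul_div_cancel₀ _ (ne_of_gt hden)] at h7
        nlinarith [mul_nonneg (sub_nonneg.mpr h6) (abs_nonneg (y t)),
          mul_nonneg h5.le (by linarith [neg_abs_le (y t)] : (0:ℝ) ≤ |y t| + y t),
          abs_nonneg (y t)]
      have hdrift : ∀ T ≥ T₂, y T ≤ y T₂ - d / 2 * (T - T₂) := by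
        intro T hT
        have hanti := antiIcc' (f := fun s => y s + d / 2 * s)
          (f' := fun s => (-3 * H s * y s - deriv V (φ s)) + d / 2)
          (fun s hs => (hy s hs).add
            (by simpa using ((hasDerivAt_id s).const_mul (d / 2)).hasDerivWithinAt))
          hT₂0 (a := T₂) (b := T)
          (by
            intro s hs
            show (-3 * H s * y s - deriv V (φ s)) + d / 2 ≤ 0
            have := hy'le s hs.1.le
            linarith)
        have h2 : y T + d / 2 * T ≤ y T₂ + d / 2 * T₂ :=
          hanti (Set.left_mem_Icc.mpr hT) (Set.right_mem_Icc.mpr hT) hT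
        linarith
      obtain ⟨T₃, hT₃⟩ :=
        eventually_atTop.mp (hyto.eventually (eventually_gt_nhds (by norm_num : (-1:ℝ) < 0)))
      obtain ⟨T, hTdef⟩ : ∃ T, T = max T₃ (max T₂ (T₂ + 2 / d * (y T₂ + 1))) := ⟨_, rfl⟩
      have hTT₂ : T₂ ≤ T := hTdef ▸ le_trans (le_max_left _ _) (le_max_right _ _)
      have h1 := hdrift T hTT₂
      have h2 : -1 < y T := hT₃ T (hTdef ▸ le_max_left _ _)
      have h3 : T₂ + 2 / d * (y T₂ + 1) ≤ T :=
        hTdef ▸ le_trans (le_max_right _ _) (le_max_right _ _)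
      have h4 : d / 2 * (2 / d * (y T₂ + 1)) = y T₂ + 1 := by field_simp
      have h5 : d / 2 * (2 / d * (y T₂ + 1)) ≤ d / 2 * (T - T₂) :=
        mul_le_mul_of_nonneg_left (by linarith) (by linarith)
      linarith
    · -- φ T₁ ≤ -r : φ stays ≤ -r
      have hsign : ∀ t ≥ T₁, φ t ≤ -r := by
        intro t ht
        by_contra hle
        push_neg at hle
        have h1 : r ≤ φ t := by
          rcases le_abs.mp (habs t ht) with h | h
          · linarith
          · linarith
        have hcont : ContinuousOn φ (Set.Icc T₁ t) := hφc.mono (fun s hs => le_trans hT₁0 hs.1)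
        have h0mem : (0 : ℝ) ∈ Set.Icc (φ T₁) (φ t) := ⟨by linarith, by linarith⟩
        obtain ⟨s, hsmem, hs0⟩ := intermediate_value_Icc ht hcont h0mem
        have := habs s hsmem.1
        rw [hs0] at this
        simp only [abs_zero] at this
        linarith
      have hrM : m' ≤ -r := le_trans (hφmem T₁ hT₁0).1 (hsign T₁ le_rfl)
      obtain ⟨x₀, hx₀mem, hx₀max⟩ :=
        isCompact_Icc.exists_isMaxOn (Set.nonempty_Icc.mpr hrM) hV'cont.continuousOn
      have hd : deriv V x₀ < 0 := hV'neg x₀ (lt_of_le_of_lt hx₀mem.2 (by linarith))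
      obtain ⟨d, hddef⟩ : ∃ d, d = -deriv V x₀ := ⟨_, rfl⟩
      have hd0 : 0 < d := by rw [hddef]; linarith
      have hdle : ∀ t ≥ T₁, deriv V (φ t) ≤ -d := by
        intro t ht
        have := isMaxOn_iff.mp hx₀max _ ⟨(hφmem t (le_trans hT₁0 ht)).1, hsign t ht⟩
        rw [hddef]
        linarith
      have hyev : ∀ᶠ t in atTop, |y t| < d / (2 * (3 * H t₀ + 1)) := by
        have h1 := (tendsto_zero_iff_abs_tendsto_zero y).mp hyto
        refine h1.eventually (eventually_lt_nhds ?_)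
        have : (0:ℝ) < 2 * (3 * H t₀ + 1) := by nlinarith
        positivity
      obtain ⟨T₂, hT₂⟩ := eventually_atTop.mp (hyev.and (eventually_ge_atTop T₁))
      have hT₂0 : t₀ ≤ T₂ := le_trans hT₁0 (hT₂ T₂ le_rfl).2
      have hy'ge : ∀ t ≥ T₂, d / 2 ≤ -3 * H t * y t - deriv V (φ t) := by
        intro t ht
        obtain ⟨hb, hT₁t⟩ := hT₂ t ht
        have ht₀t : t₀ ≤ t := le_trans hT₁0 hT₁t
        have h5 := hHpos t ht₀t
        have h6 := hHle t ht₀t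
        have hVd := hdle t hT₁t
        have hden : (0:ℝ) < 2 * (3 * H t₀ + 1) := by nlinarith
        have key : 2 * (3 * H t₀ + 1) * |y t| < d := by
          have h7 := mul_lt_mul_of_pos_left hb hden
          rwa [mul_div_cancel₀ _ (ne_of_gt hden)] at h7
        nlinarith [mul_nonneg (sub_nonneg.mpr h6) (abs_nonneg (y t)),
          mul_nonneg h5.le (by linarith [le_abs_self (y t)] : (0:ℝ) ≤ |y t| - y t),
          abs_nonneg (y t)]
      have hdrift : ∀ T ≥ T₂, y T₂ + d / 2 * (T - T₂) ≤ y T := by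
        intro T hT
        have hmono := monoIcc' (f := fun s => y s - d / 2 * s)
          (f' := fun s => (-3 * H s * y s - deriv V (φ s)) - d / 2)
          (fun s hs => (hy s hs).sub
            (by simpa using ((hasDerivAt_id s).const_mul (d / 2)).hasDerivWithinAt))
          hT₂0 (a := T₂) (b := T)
          (by
            intro s hs
            show 0 ≤ (-3 * H s * y s - deriv V (φ s)) - d / 2
            have := hy'ge s hs.1.le
            linarith)
        have h2 : y T₂ - d / 2 * T₂ ≤ y T - d / 2 * T :=
          hmono (Set.left_mem_Icc.mpr hT) (Set.right_mem_Icc.mpr hT) hT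
        linarith
      obtain ⟨T₃, hT₃⟩ :=
        eventually_atTop.mp (hyto.eventually (eventually_lt_nhds (by norm_num : (0:ℝ) < 1)))
      obtain ⟨T, hTdef⟩ : ∃ T, T = max T₃ (max T₂ (T₂ + 2 / d * (1 - y T₂))) := ⟨_, rfl⟩
      have hTT₂ : T₂ ≤ T := hTdef ▸ le_trans (le_max_left _ _) (le_max_right _ _)
      have h1 := hdrift T hTT₂
      have h2 : y T < 1 := hT₃ T (hTdef ▸ le_max_left _ _)
      have h3 : T₂ + 2 / d * (1 - y T₂) ≤ T :=
        hTdef ▸ le_trans (le_max_right _ _) (le_max_right _ _)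
      have h4 : d / 2 * (2 / d * (1 - y T₂)) = 1 - y T₂ := by field_simp
      have h5 : d / 2 * (2 / d * (1 - y T₂)) ≤ d / 2 * (T - T₂) :=
        mul_le_mul_of_nonneg_left (by linarith) (by linarith)
      linarith
  have hHto0 : Tendsto H atTop (nhds 0) := hHinfzero ▸ hHto
  have hVφ0 : Tendsto (fun t => V (φ t)) atTop (nhds 0) := by
    have := hVφto
    rw [hHinfzero] at this
    simpa using this
  refine ⟨?_, hHto0⟩
  rw [Metric.tendsto_atTop]
  intro ε hε
  by_cases hne : (Set.Icc m' M' ∩ (Set.Ioo (-ε) ε)ᶜ).Nonempty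
  · have hcompact : IsCompact (Set.Icc m' M' ∩ (Set.Ioo (-ε) ε)ᶜ) :=
      isCompact_Icc.inter_right isOpen_Ioo.isClosed_compl
    obtain ⟨x₀, hx₀mem, hx₀min⟩ := hcompact.exists_isMinOn hne hVcont.continuousOn
    have hx₀ne : x₀ ≠ 0 := by
      intro h
      apply hx₀mem.2
      rw [h]
      exact ⟨neg_lt_zero.mpr hε, hε⟩
    have hη : 0 < V x₀ := (hVnn x₀).lt_of_ne fun h => hx₀ne ((hVzero x₀).mp h.symm)
    obtain ⟨N, hN⟩ := eventually_atTop.mp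
      ((hVφ0.eventually (eventually_lt_nhds hη)).and (eventually_ge_atTop t₀))
    refine ⟨N, fun t ht => ?_⟩
    obtain ⟨hVlt, ht₀⟩ := hN t ht
    have hmem := hφmem t ht₀
    have hIoo : φ t ∈ Set.Ioo (-ε) ε := by
      by_contra h
      exact absurd (isMinOn_iff.mp hx₀min _ ⟨hmem, h⟩) (not_le.mpr hVlt)
    rw [Real.dist_eq, sub_zero, abs_lt]
    exact ⟨hIoo.1, hIoo.2⟩
  · refine ⟨t₀, fun t ht => ?_⟩
    rw [Set.not_nonempty_iff_eq_empty] at hne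
    have hmem := hφmem t ht
    have hIoo : φ t ∈ Set.Ioo (-ε) ε := by
      by_contra h
      have : φ t ∈ Set.Icc m' M' ∩ (Set.Ioo (-ε) ε)ᶜ := ⟨hmem, h⟩
      rw [hne] at this
      exact this
    rw [Real.dist_eq, sub_zero, abs_lt]
    exact ⟨hIoo.1, hIoo.2⟩
end

section
/- Suppose φ, y, ρ, H solve the flat scalar-field system on [t₀, ∞) with the Friedmann constraint 3H² = ρ + (1/2)y² + V(φ), ρ(t₀) > 0, H(t₀) > 0, and the potential satisfies: V(φ) ≥ 0 for all φ; V(φ) → +∞ as φ → -∞; V' is continuous with V'(φ) < 0 for all φ; and V' is bounded on every subset A ⊆ ℝ on which V is bounded. Then y(t) → 0, ρ(t) → 0, and φ(t) → +∞ as t → ∞. -/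
open Filter Set

lemma monoOn_aux {t₀ a b : ℝ} {f f' : ℝ → ℝ} (ha : t₀ ≤ a)
    (hf : ∀ t ∈ Set.Ici t₀, HasDerivWithinAt f (f' t) (Set.Ici t₀) t)
    (h0 : ∀ t ∈ Set.Icc a b, 0 ≤ f' t) : MonotoneOn f (Set.Icc a b) := by
  have hsub : Set.Icc a b ⊆ Set.Ici t₀ :=
    (Set.Icc_subset_Ici_self).trans (Set.Ici_subset_Ici.2 ha)
  refine monotoneOn_of_hasDerivWithinAt_nonneg (convex_Icc a b) ?_ (f' := f') ?_ ?_
  · exact fun t ht => ((hf t (hsub ht)).continuousWithinAt).mono hsub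
  · intro t ht
    rw [interior_Icc] at ht
    refine (hf t (hsub (Set.Ioo_subset_Icc_self ht))).mono ?_
    rw [interior_Icc]
    exact Set.Ioo_subset_Icc_self.trans hsub
  · intro t ht
    rw [interior_Icc] at ht
    exact h0 t (Set.Ioo_subset_Icc_self ht)

lemma antiOn_aux {t₀ a b : ℝ} {f f' : ℝ → ℝ} (ha : t₀ ≤ a)
    (hf : ∀ t ∈ Set.Ici t₀, HasDerivWithinAt f (f' t) (Set.Ici t₀) t)
    (h0 : ∀ t ∈ Set.Icc a b, f' t ≤ 0) : AntitoneOn f (Set.Icc a b) := by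
  have := monoOn_aux ha (f := fun t => -f t) (f' := fun t => -f' t)
    (fun t ht => (hf t ht).neg) (fun t ht => by simpa using h0 t ht)
  intro x hx z hz hxz
  have := this hx hz hxz
  simpa using this

lemma antiOn_Ici_aux {t₀ : ℝ} {f f' : ℝ → ℝ}
    (hf : ∀ t ∈ Set.Ici t₀, HasDerivWithinAt f (f' t) (Set.Ici t₀) t)
    (h0 : ∀ t ∈ Set.Ici t₀, f' t ≤ 0) : AntitoneOn f (Set.Ici t₀) := by
  refine antitoneOn_of_hasDerivWithinAt_nonpos (convex_Ici t₀) ?_ (f' := f') ?_ ?_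
  · exact fun t ht => (hf t ht).continuousWithinAt
  · intro t ht
    rw [interior_Ici] at ht
    refine (hf t (Set.Ioi_subset_Ici_self ht)).mono ?_
    rw [interior_Ici]
    exact Set.Ioi_subset_Ici_self
  · intro t ht
    rw [interior_Ici] at ht
    exact h0 t (Set.Ioi_subset_Ici_self ht)

set_option maxHeartbeats 1000000 in
/-- Proposition 4: for the flat scalar-field system with `ρ(t₀) > 0`, `H(t₀) > 0` and a
non-negative potential with `V(φ) → +∞` as `φ → -∞`, `V'` continuous and everywhere
negative, and `V'` bounded wherever `V` is bounded, one has `y → 0`, `ρ → 0` and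
`φ → +∞` as `t → ∞`. -/
theorem stmt_4 (t₀ γ : ℝ) (hγ0 : 0 < γ) (hγ2 : γ ≤ 2)
    (V : ℝ → ℝ) (hV : ContDiff ℝ 2 V)
    (φ y ρ H : ℝ → ℝ)
    (hφ : ∀ t ∈ Set.Ici t₀, HasDerivWithinAt φ (y t) (Set.Ici t₀) t)
    (hy : ∀ t ∈ Set.Ici t₀,
      HasDerivWithinAt y (-3 * H t * y t - deriv V (φ t)) (Set.Ici t₀) t)
    (hρ : ∀ t ∈ Set.Ici t₀, HasDerivWithinAt ρ (-3 * γ * ρ t * H t) (Set.Ici t₀) t)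
    (hH : ∀ t ∈ Set.Ici t₀,
      HasDerivWithinAt H (-(1 / 2) * y t ^ 2 - γ / 2 * ρ t) (Set.Ici t₀) t)
    (hρ0 : ∀ t ∈ Set.Ici t₀, 0 ≤ ρ t)
    (hcon : ∀ t ∈ Set.Ici t₀, 3 * H t ^ 2 = ρ t + 1 / 2 * y t ^ 2 + V (φ t))
    (hVnn : ∀ s : ℝ, 0 ≤ V s)
    (hVbot : Tendsto V atBot atTop)
    (hV'cont : Continuous (deriv V))
    (hV'neg : ∀ s : ℝ, deriv V s < 0)
    (hV'bdd : ∀ A : Set ℝ, Bornology.IsBounded (V '' A) →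
      Bornology.IsBounded (deriv V '' A))
    (hρt₀ : 0 < ρ t₀) (hH0 : 0 < H t₀) :
    Tendsto y atTop (nhds 0) ∧ Tendsto ρ atTop (nhds 0) ∧ Tendsto φ atTop atTop := by
  have hHc : ContinuousOn H (Set.Ici t₀) := fun t ht => (hH t ht).continuousWithinAt
  have hyc : ContinuousOn y (Set.Ici t₀) := fun t ht => (hy t ht).continuousWithinAt
  have hφc : ContinuousOn φ (Set.Ici t₀) := fun t ht => (hφ t ht).continuousWithinAt
  have hρc : ContinuousOn ρ (Set.Ici t₀) := fun t ht => (hρ t ht).continuousWithinAt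
  have hVanti : StrictAnti V := strictAnti_of_deriv_neg hV'neg
  have hVpos : ∀ s, 0 < V s := fun s =>
    lt_of_le_of_lt (hVnn (s + 1)) (hVanti (by linarith))
  -- H is everywhere positive on [t₀, ∞)
  have hHpos : ∀ t ∈ Set.Ici t₀, 0 < H t := by
    have hne : ∀ s ∈ Set.Ici t₀, H s ≠ 0 := by
      intro s hs h0
      have h1 := hcon s hs
      have h2 := hρ0 s hs
      have h3 := hVpos (φ s)
      rw [h0] at h1
      nlinarith [sq_nonneg (y s)]
    intro t ht
    by_contra hcontra
    push_neg at hcontra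
    have hlt : H t < 0 := lt_of_le_of_ne hcontra (hne t ht)
    have h0mem : (0:ℝ) ∈ Set.Icc (H t) (H t₀) := ⟨hlt.le, hH0.le⟩
    obtain ⟨s, hs, hs0⟩ := intermediate_value_Icc' ht (hHc.mono Set.Icc_subset_Ici_self) h0mem
    exact hne s hs.1 hs0
  -- H is antitone on [t₀, ∞)
  have hHanti : AntitoneOn H (Set.Ici t₀) := by
    refine antiOn_Ici_aux hH fun t ht => ?_
    have := hρ0 t ht
    nlinarith [sq_nonneg (y t)]
  set B := H t₀ with hB
  have hHle : ∀ t ∈ Set.Ici t₀, H t ≤ B := fun t ht => hHanti (le_refl t₀ : t₀ ∈ Set.Ici t₀) ht ht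
  have hE : ∀ t ∈ Set.Ici t₀, ρ t + 1 / 2 * y t ^ 2 + V (φ t) ≤ 3 * B ^ 2 := by
    intro t ht
    rw [← hcon t ht]
    nlinarith [hHpos t ht, hHle t ht]
  have hρB : ∀ t ∈ Set.Ici t₀, ρ t ≤ 3 * B ^ 2 := fun t ht => by
    nlinarith [hE t ht, hVnn (φ t), sq_nonneg (y t)]
  have hy2B : ∀ t ∈ Set.Ici t₀, y t ^ 2 ≤ 6 * B ^ 2 := fun t ht => by
    nlinarith [hE t ht, hVnn (φ t), hρ0 t ht]
  have hVφB : ∀ t ∈ Set.Ici t₀, V (φ t) ≤ 3 * B ^ 2 := fun t ht => by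
    nlinarith [hE t ht, hρ0 t ht, sq_nonneg (y t)]
  have hyabs : ∀ t ∈ Set.Ici t₀, |y t| ≤ 3 * B := by
    intro t ht
    have h1 := hy2B t ht
    have hB0 : 0 < B := hH0
    refine abs_le.2 ⟨by nlinarith, by nlinarith⟩
  -- lower bound on φ
  obtain ⟨m, hm⟩ : ∃ m, ∀ t ∈ Set.Ici t₀, m ≤ φ t := by
    have := hVbot.eventually (eventually_gt_atTop (3 * B ^ 2))
    rw [eventually_atBot] at this
    obtain ⟨m, hm⟩ := this
    refine ⟨m, fun t ht => ?_⟩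
    by_contra hcontra
    push_neg at hcontra
    exact absurd (hVφB t ht) (not_le.2 (hm (φ t) hcontra.le))
  -- bound on V' along the trajectory
  obtain ⟨C, hC0, hC⟩ : ∃ C, 0 ≤ C ∧ ∀ t ∈ Set.Ici t₀, |deriv V (φ t)| ≤ C := by
    have hbdd : Bornology.IsBounded (V '' (φ '' Set.Ici t₀)) := by
      rw [isBounded_iff_forall_norm_le]
      refine ⟨3 * B ^ 2, ?_⟩
      rintro x ⟨s, ⟨t, ht, rfl⟩, rfl⟩
      rw [Real.norm_eq_abs, abs_of_nonneg (hVnn _)]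
      exact hVφB t ht
    have := hV'bdd _ hbdd
    rw [isBounded_iff_forall_norm_le] at this
    obtain ⟨C₀, hC₀⟩ := this
    refine ⟨max C₀ 0, le_max_right _ _, fun t ht => ?_⟩
    refine le_trans ?_ (le_max_left _ _)
    exact (Real.norm_eq_abs _ ▸ hC₀ (deriv V (φ t)) ⟨φ t, ⟨t, ht, rfl⟩, rfl⟩)
  -- the dissipation function
  obtain ⟨f, hf⟩ : ∃ f : ℝ → ℝ, f = fun t => 1 / 2 * y t ^ 2 + γ / 2 * ρ t := ⟨_, rfl⟩
  have hf0 : ∀ t ∈ Set.Ici t₀, 0 ≤ f t := fun t ht => by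
    rw [hf]
    have := hρ0 t ht
    have := sq_nonneg (y t)
    positivity
  have hfd : ∀ t ∈ Set.Ici t₀, HasDerivWithinAt f
      (y t * (-3 * H t * y t - deriv V (φ t)) + γ / 2 * (-3 * γ * ρ t * H t))
      (Set.Ici t₀) t := by
    intro t ht
    rw [hf]
    have h1 : HasDerivWithinAt (fun s => 1 / 2 * y s ^ 2)
        (1 / 2 * (2 * y t * (-3 * H t * y t - deriv V (φ t)))) (Set.Ici t₀) t := by
      exact (((hy t ht).pow 2).const_mul (1 / 2 : ℝ)).congr_deriv (by ring)
    have h2 : HasDerivWithinAt (fun s => γ / 2 * ρ s)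
        (γ / 2 * (-3 * γ * ρ t * H t)) (Set.Ici t₀) t := (hρ t ht).const_mul _
    exact (h1.add h2).congr_deriv (by ring)
  set K : ℝ := max (3 * B * (9 * B ^ 2 + C) + 18 * B ^ 3) 1 with hK
  have hK1 : 1 ≤ K := le_max_right _ _
  have hK0 : 0 < K := lt_of_lt_of_le one_pos hK1
  have hfbound : ∀ t ∈ Set.Ici t₀,
      |y t * (-3 * H t * y t - deriv V (φ t)) + γ / 2 * (-3 * γ * ρ t * H t)| ≤ K := by
    intro t ht
    have h1 := abs_le.1 (hyabs t ht)
    have h2 := hHle t ht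
    have h3 := hHpos t ht
    have h4 := hρ0 t ht
    have h5 := hρB t ht
    have h6 := abs_le.1 (hC t ht)
    have hB0 : (0:ℝ) < B := hH0
    have h7 : |y t * deriv V (φ t)| ≤ 3 * B * C := by
      rw [abs_mul]
      exact mul_le_mul (hyabs t ht) (hC t ht) (abs_nonneg _) (by positivity)
    have h7' := abs_le.1 h7
    have hy9 : y t ^ 2 ≤ 9 * B ^ 2 := by nlinarith [sq_abs (y t), hyabs t ht, abs_nonneg (y t)]
    have hHy2 : H t * y t ^ 2 ≤ B * (9 * B ^ 2) :=
      mul_le_mul h2 hy9 (sq_nonneg _) hB0.le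
    have hHy2' : 0 ≤ H t * y t ^ 2 := mul_nonneg h3.le (sq_nonneg _)
    have hρH : ρ t * H t ≤ 3 * B ^ 2 * B := by nlinarith
    have hρH' : 0 ≤ ρ t * H t := mul_nonneg h4 h3.le
    have hg2 : γ ^ 2 ≤ 4 := by nlinarith
    have hg2' : γ ^ 2 * (ρ t * H t) ≤ 4 * (3 * B ^ 2 * B) :=
      mul_le_mul hg2 hρH hρH' (by norm_num)
    have hg2'' : 0 ≤ γ ^ 2 * (ρ t * H t) := mul_nonneg (sq_nonneg _) hρH'
    refine le_trans (abs_le.2 ⟨?_, ?_⟩) (le_max_left _ _)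
    · linarith [hHy2, hHy2', hg2', hg2'', h7'.1, h7'.2]
    · linarith [hHy2, hHy2', hg2', hg2'', h7'.1, h7'.2]
  have hlip : ∀ s ∈ Set.Ici t₀, ∀ t ∈ Set.Ici t₀, |f s - f t| ≤ K * |s - t| := by
    intro s hs t ht
    have := Convex.norm_image_sub_le_of_norm_hasDerivWithin_le (f := f)
      (s := Set.Ici t₀) (hfd) (fun x hx => hfbound x hx) (convex_Ici t₀) ht hs
    simpa [Real.norm_eq_abs] using this
  -- the limit of H
  set L : ℝ := sInf (H '' Set.Ici t₀) with hL
  have hLle : ∀ t ∈ Set.Ici t₀, L ≤ H t := by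
    intro t ht
    refine csInf_le ⟨0, ?_⟩ ⟨t, ht, rfl⟩
    rintro x ⟨s, hs, rfl⟩
    exact (hHpos s hs).le
  have hHtend : Tendsto H atTop (nhds L) := by
    rw [tendsto_order]
    constructor
    · intro b hb
      filter_upwards [eventually_ge_atTop t₀] with t ht
      exact lt_of_lt_of_le hb (hLle t ht)
    · intro b hb
      obtain ⟨x, ⟨t₁, ht₁, rfl⟩, hx⟩ :=
        exists_lt_of_csInf_lt (Set.Nonempty.image H ⟨t₀, le_refl t₀⟩) hb
      filter_upwards [eventually_ge_atTop t₁] with t ht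
      exact lt_of_le_of_lt (hHanti ht₁ (le_trans ht₁ ht) ht) hx
  -- Barbalat's argument : f → 0
  have hftend : Tendsto f atTop (nhds 0) := by
    rw [Metric.tendsto_atTop]
    by_contra hcon'
    push_neg at hcon'
    obtain ⟨ε, hε, hfreq⟩ := hcon'
    set δ := ε / (2 * K) with hδ
    have hδ0 : 0 < δ := by positivity
    have hη : 0 < ε * δ / 2 := by positivity
    have hev := hHtend.eventually_lt_const (lt_add_of_pos_right L hη)
    rw [eventually_atTop] at hev
    obtain ⟨T, hT⟩ := hev
    obtain ⟨t, ht, htd⟩ := hfreq (max T t₀)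
    have ht0 : t₀ ≤ t := le_trans (le_max_right _ _) ht
    have hTt : T ≤ t := le_trans (le_max_left _ _) ht
    rw [Real.dist_eq, sub_zero, abs_of_nonneg (hf0 t ht0)] at htd
    have hfge : ∀ s ∈ Set.Icc t (t + δ), ε / 2 ≤ f s := by
      intro s hs
      have hs0 : t₀ ≤ s := le_trans ht0 hs.1
      have hl := hlip s hs0 t ht0
      have habs : |s - t| ≤ δ := by
        rw [abs_of_nonneg (by linarith [hs.1])]; linarith [hs.2]
      have hl2 : |f s - f t| ≤ K * δ :=
        le_trans hl (by nlinarith [hK0])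
      have hKδ : K * δ = ε / 2 := by
        rw [hδ]; field_simp
      rw [hKδ] at hl2
      have := abs_le.1 hl2
      linarith [this.1]
    have hu : AntitoneOn (fun s => H s + ε / 2 * s) (Set.Icc t (t + δ)) := by
      have hder : ∀ s ∈ Set.Ici t₀, HasDerivWithinAt (fun u => H u + ε / 2 * u)
          ((-(1 / 2) * y s ^ 2 - γ / 2 * ρ s) + ε / 2) (Set.Ici t₀) s := by
        intro s hs
        have h2 : HasDerivWithinAt (fun u : ℝ => ε / 2 * u) (ε / 2) (Set.Ici t₀) s := by
          simpa using (hasDerivWithinAt_id s (Set.Ici t₀)).const_mul (ε / 2)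
        exact (hH s hs).add h2
      refine antiOn_aux ht0 hder ?_
      intro s hs
      have h9 := hfge s hs
      rw [hf] at h9
      simp only at h9
      linarith
    have hend : H (t + δ) + ε / 2 * (t + δ) ≤ H t + ε / 2 * t :=
      hu ⟨le_refl t, by linarith⟩ ⟨by linarith, le_refl _⟩ (by linarith)
    have hLt : L ≤ H (t + δ) := hLle _ (by simp only [Set.mem_Ici]; linarith)
    have hHt : H t < L + ε * δ / 2 := hT t hTt
    nlinarith
  -- y → 0
  have hy2tend : Tendsto (fun t => y t ^ 2) atTop (nhds 0) := by
    refine squeeze_zero' (g := fun t => 2 * f t) (Eventually.of_forall fun t => sq_nonneg _) ?_ ?_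
    · filter_upwards [eventually_ge_atTop t₀] with t ht
      have := hρ0 t ht
      show y t ^ 2 ≤ 2 * f t
      rw [hf]
      nlinarith
    · simpa using hftend.const_mul (2 : ℝ)
  have habs : Tendsto (fun t => |y t|) atTop (nhds 0) := by
    have h := (Real.continuous_sqrt.tendsto 0).comp hy2tend
    rw [Real.sqrt_zero] at h
    refine h.congr fun t => ?_
    simp [Function.comp, Real.sqrt_sq_eq_abs]
  have hytend : Tendsto y atTop (nhds 0) := by
    have hneg : Tendsto (fun t => -|y t|) atTop (nhds 0) := by
      simpa using habs.neg
    exact tendsto_of_tendsto_of_tendsto_of_le_of_le hneg habs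
      (fun t => neg_abs_le _) (fun t => le_abs_self _)
  -- ρ → 0
  have hρtend : Tendsto ρ atTop (nhds 0) := by
    refine squeeze_zero' (g := fun t => 2 / γ * f t) ?_ ?_ ?_
    · filter_upwards [eventually_ge_atTop t₀] with t ht
      exact hρ0 t ht
    · filter_upwards [eventually_ge_atTop t₀] with t ht
      show ρ t ≤ 2 / γ * f t
      rw [hf]
      simp only
      rw [mul_add]
      have h1 : 2 / γ * (γ / 2 * ρ t) = ρ t := by field_simp
      have h2 : 0 ≤ 2 / γ * (1 / 2 * y t ^ 2) := by positivity
      linarith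
    · simpa using hftend.const_mul (2 / γ)
  -- φ → ∞
  have hφtend : Tendsto φ atTop atTop := by
    rw [tendsto_atTop]
    intro M
    by_contra hcon'
    rw [not_eventually] at hcon'
    set m' := min m M with hm'
    have hm'le : m' ≤ M + 1 := le_trans (min_le_right _ _) (by linarith)
    obtain ⟨s₀, hs₀J, hs₀max⟩ := isCompact_Icc.exists_isMaxOn (s := Set.Icc m' (M + 1))
      ⟨m', le_refl _, hm'le⟩ hV'cont.continuousOn
    set c := -(deriv V s₀) with hc
    have hc0 : 0 < c := by
      have := hV'neg s₀; simp only [hc]; linarith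
    have hcmin : ∀ s ∈ Set.Icc m' (M + 1), deriv V s ≤ -c := by
      intro s hs
      have h := hs₀max hs
      simp only [Set.mem_setOf_eq] at h
      simp only [hc, neg_neg]
      exact h
    have hB0 : (0:ℝ) < B := hH0
    set ε := min (c / (12 * B + 1)) (min 1 (c / 4)) with hε
    have hε0 : 0 < ε := by positivity
    have hε1 : ε ≤ 1 := le_trans (min_le_right _ _) (min_le_left _ _)
    have hεc4 : ε ≤ c / 4 := le_trans (min_le_right _ _) (min_le_right _ _)
    have hεB : ε ≤ c / (12 * B + 1) := min_le_left _ _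
    have h3Bε : 3 * B * ε ≤ c / 4 := by
      have h12 : ε * (12 * B + 1) ≤ c := by
        rw [← le_div_iff₀ (by positivity)]; exact hεB
      nlinarith
    set δ := 4 * ε / c with hδ'
    have hδ0 : 0 < δ := by positivity
    have h4ε : 4 * ε ^ 2 ≤ c := by nlinarith
    have hεδ : ε * δ ≤ 1 := by
      have heq : ε * δ = 4 * ε ^ 2 / c := by rw [hδ']; ring
      rw [heq]
      exact (div_le_one hc0).2 h4ε
    have hyev : ∀ᶠ t in atTop, |y t| ≤ ε := by
      filter_upwards [habs.eventually_lt_const hε0] with t ht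
      exact ht.le
    rw [eventually_atTop] at hyev
    obtain ⟨T, hT⟩ := hyev
    rw [frequently_atTop] at hcon'
    obtain ⟨t₁, ht₁, hφt₁⟩ := hcon' (max T t₀)
    push_neg at hφt₁
    have ht₁0 : t₀ ≤ t₁ := le_trans (le_max_right _ _) ht₁
    have ht₁T : T ≤ t₁ := le_trans (le_max_left _ _) ht₁
    have hsub : Set.Icc t₁ (t₁ + δ) ⊆ Set.Ici t₀ :=
      Set.Icc_subset_Ici_self.trans (Set.Ici_subset_Ici.2 ht₁0)
    have hφin : ∀ s ∈ Set.Icc t₁ (t₁ + δ), φ s ∈ Set.Icc m' (M + 1) := by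
      intro s hs
      have hs0 : t₀ ≤ s := hsub hs
      refine ⟨le_trans (min_le_left _ _) (hm s hs0), ?_⟩
      have hmvt := Convex.norm_image_sub_le_of_norm_hasDerivWithin_le (f := φ) (f' := y)
        (s := Set.Icc t₁ (t₁ + δ))
        (fun x hx => (hφ x (hsub hx)).mono hsub)
        (fun x hx => by
          rw [Real.norm_eq_abs]; exact hT x (le_trans ht₁T hx.1))
        (convex_Icc _ _) ⟨le_refl _, by linarith⟩ hs
      rw [Real.norm_eq_abs, Real.norm_eq_abs] at hmvt
      have h1 : |s - t₁| ≤ δ := by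
        rw [abs_of_nonneg (by linarith [hs.1])]; linarith [hs.2]
      have h2 : |φ s - φ t₁| ≤ ε * δ := le_trans hmvt (by nlinarith)
      have h3 := abs_le.1 h2
      linarith [h3.2]
    have hmono : MonotoneOn (fun s => y s - 3 * c / 4 * s) (Set.Icc t₁ (t₁ + δ)) := by
      refine monoOn_aux ht₁0
        (f' := fun s => (-3 * H s * y s - deriv V (φ s)) - 3 * c / 4)
        (fun s hs => ((hy s hs).sub
          (((hasDerivWithinAt_id s _).const_mul (3 * c / 4)).congr_deriv (by ring)))) ?_
      intro s hs
      have hs0 : t₀ ≤ s := hsub hs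
      have h1 := hcmin (φ s) (hφin s hs)
      have h2 := abs_le.1 (hT s (le_trans ht₁T hs.1))
      have h3 := hHpos s hs0
      have h4 := hHle s hs0
      have h5 : H s * y s ≤ B * ε := by nlinarith
      nlinarith
    have hstep := hmono (Set.left_mem_Icc.2 (by linarith)) (Set.right_mem_Icc.2 (by linarith))
      (by linarith)
    have h3cδ : 3 * c / 4 * δ = 3 * ε := by
      rw [hδ']; field_simp
    have hy1 := abs_le.1 (hT t₁ ht₁T)
    have hy2' := abs_le.1 (hT (t₁ + δ) (by linarith))
    simp only at hstep
    nlinarith [hstep, hy1.1, hy2'.2, hε0, h3cδ]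
  exact ⟨hytend, hρtend, hφtend⟩
end

section
/- Suppose φ, y, ρ, H solve the flat scalar-field system on [t₀, ∞) with the Friedmann constraint 3H² = ρ + (1/2)y² + V(φ), ρ(t₀) > 0, H(t₀) > 0, and the potential satisfies: V(φ) ≥ 0 for all φ; V(φ) → +∞ as φ → -∞; V' is continuous with V'(φ) < 0 for all φ; V' is bounded on every subset A ⊆ ℝ on which V is bounded; and in addition V(φ) → 0 as φ → +∞. Then H(t) → 0 as t → ∞. -/
open Filter

open Set Topology
set_option maxHeartbeats 2000000

section helpers
variable {a : ℝ} {f f' : ℝ → ℝ}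

lemma myContOn (hf : ∀ t ∈ Ici a, HasDerivWithinAt f (f' t) (Ici a) t) :
    ContinuousOn f (Ici a) := fun t ht => (hf t ht).continuousWithinAt

lemma myDerivAt (hf : ∀ t ∈ Ici a, HasDerivWithinAt f (f' t) (Ici a) t)
    {t : ℝ} (ht : a < t) : HasDerivAt f (f' t) t :=
  (hf t (le_of_lt ht)).hasDerivAt (Ici_mem_nhds ht)

lemma myAnti (hf : ∀ t ∈ Ici a, HasDerivWithinAt f (f' t) (Ici a) t)
    (h0 : ∀ t ∈ Ici a, f' t ≤ 0) : AntitoneOn f (Ici a) := by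
  apply antitoneOn_of_deriv_nonpos (convex_Ici a) (myContOn hf)
  · intro x hx
    rw [interior_Ici] at hx
    exact (myDerivAt hf hx).differentiableAt.differentiableWithinAt
  · intro x hx
    rw [interior_Ici] at hx
    rw [(myDerivAt hf hx).deriv]
    exact h0 x (mem_Ici.mpr (le_of_lt hx))

lemma myMono (hf : ∀ t ∈ Ici a, HasDerivWithinAt f (f' t) (Ici a) t)
    (h0 : ∀ t ∈ Ici a, 0 ≤ f' t) : MonotoneOn f (Ici a) := by
  have := myAnti (f := fun t => -f t) (f' := fun t => -f' t)
    (fun t ht => (hf t ht).neg) (fun t ht => neg_nonpos.mpr (h0 t ht))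
  intro s hs t ht hst
  have := this hs ht hst
  simp only at this
  linarith

lemma myLinear (hf : ∀ t ∈ Ici a, HasDerivWithinAt f (f' t) (Ici a) t)
    {c : ℝ} (h0 : ∀ t ∈ Ici a, f' t ≤ c) {t : ℝ} (ht : a ≤ t) :
    f t ≤ f a + c * (t - a) := by
  have key : AntitoneOn (fun u => f u - c * u) (Ici a) := by
    apply myAnti (f' := fun u => f' u - c)
    · intro u hu
      exact (hf u hu).sub (((hasDerivWithinAt_id u (Ici a)).const_mul c).congr_deriv (by ring))
    · intro u hu; linarith [h0 u hu]
  have := key self_mem_Ici ht ht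
  simp only at this
  linarith

lemma myLinear' (hf : ∀ t ∈ Ici a, HasDerivWithinAt f (f' t) (Ici a) t)
    {c : ℝ} (h0 : ∀ t ∈ Ici a, c ≤ f' t) {t : ℝ} (ht : a ≤ t) :
    f a + c * (t - a) ≤ f t := by
  have := myLinear (f := fun u => -f u) (f' := fun u => -f' u)
    (fun u hu => (hf u hu).neg) (c := -c) (fun u hu => by show -f' u ≤ -c; linarith [h0 u hu]) ht
  have this : -f t ≤ -f a + -c * (t - a) := this
  linarith

lemma myConst (hf : ∀ t ∈ Ici a, HasDerivWithinAt f 0 (Ici a) t)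
    {t : ℝ} (ht : a ≤ t) : f t = f a := by
  have h1 := myAnti (f' := fun _ => 0) hf (fun _ _ => le_rfl) self_mem_Ici ht ht
  have h2 := myMono (f' := fun _ => 0) hf (fun _ _ => le_rfl) self_mem_Ici ht ht
  linarith

lemma myTendsto {b : ℝ} (hf : AntitoneOn f (Ici a)) (hb : ∀ t ∈ Ici a, b ≤ f t) :
    ∃ L, b ≤ L ∧ (∀ t ∈ Ici a, L ≤ f t) ∧ Tendsto f atTop (𝓝 L) := by
  set g : ℝ → ℝ := fun t => f (max t a) with hgdef
  have hg : Antitone g := fun s t hst =>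
    hf (mem_Ici.mpr (le_max_right _ _)) (mem_Ici.mpr (le_max_right _ _)) (max_le_max hst le_rfl)
  have hbdd : BddBelow (Set.range g) := by
    refine ⟨b, ?_⟩
    rintro x ⟨t, rfl⟩
    exact hb _ (le_max_right t a)
  have hlim := tendsto_atTop_ciInf hg hbdd
  refine ⟨⨅ t, g t, ?_, ?_, ?_⟩
  · exact le_ciInf fun t => hb _ (le_max_right t a)
  · intro t ht
    have := ciInf_le hbdd t
    simpa [hgdef, max_eq_left (mem_Ici.mp ht)] using this
  · apply hlim.congr'
    filter_upwards [eventually_ge_atTop a] with t ht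
    simp [hgdef, max_eq_left ht]

end helpers


/-- If, in addition to the hypotheses of Proposition 4, the potential satisfies
`V(φ) → 0` as `φ → +∞` (as for an exponential potential), then `H(t) → 0` as
`t → ∞`. -/
theorem stmt_5 (t₀ γ : ℝ) (hγ0 : 0 < γ) (hγ2 : γ ≤ 2)
    (V : ℝ → ℝ) (hV : ContDiff ℝ 2 V)
    (φ y ρ H : ℝ → ℝ)
    (hφ : ∀ t ∈ Set.Ici t₀, HasDerivWithinAt φ (y t) (Set.Ici t₀) t)
    (hy : ∀ t ∈ Set.Ici t₀,
      HasDerivWithinAt y (-3 * H t * y t - deriv V (φ t)) (Set.Ici t₀) t)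
    (hρ : ∀ t ∈ Set.Ici t₀, HasDerivWithinAt ρ (-3 * γ * ρ t * H t) (Set.Ici t₀) t)
    (hH : ∀ t ∈ Set.Ici t₀,
      HasDerivWithinAt H (-(1 / 2) * y t ^ 2 - γ / 2 * ρ t) (Set.Ici t₀) t)
    (hρ0 : ∀ t ∈ Set.Ici t₀, 0 ≤ ρ t)
    (hcon : ∀ t ∈ Set.Ici t₀, 3 * H t ^ 2 = ρ t + 1 / 2 * y t ^ 2 + V (φ t))
    (hVnn : ∀ s : ℝ, 0 ≤ V s)
    (hVbot : Tendsto V atBot atTop)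
    (hV'cont : Continuous (deriv V))
    (hV'neg : ∀ s : ℝ, deriv V s < 0)
    (hV'bdd : ∀ A : Set ℝ, Bornology.IsBounded (V '' A) →
      Bornology.IsBounded (deriv V '' A))
    (hVtop : Tendsto V atTop (nhds 0))
    (hρt₀ : 0 < ρ t₀) (hH0 : 0 < H t₀) :
    Tendsto H atTop (nhds 0) := by
  have hφc : ContinuousOn φ (Ici t₀) := myContOn hφ
  have hyc : ContinuousOn y (Ici t₀) := myContOn hy
  have hρc : ContinuousOn ρ (Ici t₀) := myContOn hρ
  have hHc : ContinuousOn H (Ici t₀) := myContOn hH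
  have hHanti : AntitoneOn H (Ici t₀) := by
    apply myAnti hH
    intro t ht
    nlinarith [sq_nonneg (y t), hρ0 t ht]
  -- the primitive of H
  set Hb : ℝ → ℝ := fun t => H (max t t₀) with hHbdef
  have hHbc : Continuous Hb :=
    hHc.comp_continuous (continuous_id.max continuous_const) (fun x => mem_Ici.mpr (le_max_right _ _))
  set G : ℝ → ℝ := fun t => ∫ x in t₀..t, Hb x with hGdef
  have hGderiv : ∀ t, HasDerivAt G (Hb t) t := fun t =>
    (hHbc.integral_hasStrictDerivAt t₀ t).hasDerivAt
  have hG0 : G t₀ = 0 := by simp [hGdef]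
  have hHbeq : ∀ t ∈ Ici t₀, Hb t = H t := by
    intro t ht; simp [hHbdef, max_eq_left (mem_Ici.mp ht)]
  -- explicit formula for ρ
  have hρform : ∀ t ∈ Ici t₀, ρ t * Real.exp (3 * γ * G t) = ρ t₀ := by
    intro t ht
    have key : ∀ s ∈ Ici t₀,
        HasDerivWithinAt (fun u => ρ u * Real.exp (3 * γ * G u)) 0 (Ici t₀) s := by
      intro s hs
      have h1 : HasDerivAt (fun u => Real.exp (3 * γ * G u))
          (Real.exp (3 * γ * G s) * (3 * γ) * Hb s) s := by
        have := ((hGderiv s).const_mul (3 * γ)).exp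
        convert this using 1
        ring
      have h2 : HasDerivWithinAt (fun u => ρ u * Real.exp (3 * γ * G u)) _ (Ici t₀) s :=
        (hρ s hs).mul h1.hasDerivWithinAt
      convert h2 using 1
      rw [hHbeq s hs]
      ring
    have := myConst key ht
    simpa [hG0] using this
  have hρpos : ∀ t ∈ Ici t₀, 0 < ρ t := by
    intro t ht
    by_contra hcontra
    push_neg at hcontra
    have he : 0 < Real.exp (3 * γ * G t) := Real.exp_pos _
    nlinarith [hρform t ht]
  -- Step: H is nonnegative
  have hHnn : ∀ t ∈ Ici t₀, 0 ≤ H t := by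
    by_contra hcon'
    push_neg at hcon'
    obtain ⟨t₁, ht₁, hH1⟩ := hcon'
    set c : ℝ := 3 * γ / 2 * Real.sqrt (ρ t₀ / 3) with hcdef
    have hc : 0 < c := by
      apply mul_pos (by linarith)
      exact Real.sqrt_pos.mpr (by linarith)
    set g : ℝ → ℝ := fun t => Real.exp (3 * γ / 2 * G t) with hgdef
    have hgpos : ∀ t, 0 < g t := fun t => Real.exp_pos _
    have hgderiv : ∀ t, HasDerivAt g (3 * γ / 2 * Hb t * g t) t := by
      intro t
      have := ((hGderiv t).const_mul (3 * γ / 2)).exp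
      convert this using 1
      simp only [hgdef]
      ring
    have hbound : ∀ t ∈ Ici t₁, 3 * γ / 2 * Hb t * g t ≤ -c := by
      intro t ht
      have ht' : t ∈ Ici t₀ := mem_Ici.mpr (le_trans ht₁ ht)
      have hHt : H t ≤ H t₁ := hHanti ht₁ ht' ht
      have hHtneg : H t < 0 := lt_of_le_of_lt hHt hH1
      have hcons := hcon t ht'
      have hρle : ρ t ≤ 3 * H t ^ 2 := by nlinarith [sq_nonneg (y t), hVnn (φ t)]
      have hsq : g t ^ 2 = Real.exp (3 * γ * G t) := by
        simp only [hgdef]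
        rw [pow_two, ← Real.exp_add]
        congr 1
        ring
      have hform := hρform t ht'
      rw [← hsq] at hform
      have h1 : ρ t₀ ≤ 3 * (H t * g t) ^ 2 := by
        have := mul_le_mul_of_nonneg_right hρle (sq_nonneg (g t))
        nlinarith
      have h2 : H t * g t < 0 := mul_neg_of_neg_of_pos hHtneg (hgpos t)
      have h3 : Real.sqrt (ρ t₀ / 3) ≤ -(H t * g t) := by
        have h4 : ρ t₀ / 3 ≤ (H t * g t) ^ 2 := by linarith
        calc Real.sqrt (ρ t₀ / 3) ≤ Real.sqrt ((H t * g t) ^ 2) := Real.sqrt_le_sqrt h4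
          _ = |H t * g t| := Real.sqrt_sq_eq_abs _
          _ = -(H t * g t) := abs_of_neg h2
      rw [hHbeq t ht']
      have h5 : H t * g t ≤ -Real.sqrt (ρ t₀ / 3) := by linarith
      calc 3 * γ / 2 * H t * g t = 3 * γ / 2 * (H t * g t) := by ring
        _ ≤ 3 * γ / 2 * -Real.sqrt (ρ t₀ / 3) :=
            mul_le_mul_of_nonneg_left h5 (by linarith)
        _ = -c := by rw [hcdef]; ring
    -- linear decay of g, contradiction with positivity
    set T : ℝ := t₁ + (g t₁ / c + 1) with hTdef
    have hT : t₁ ≤ T := by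
      have : 0 ≤ g t₁ / c := le_of_lt (div_pos (hgpos t₁) hc)
      simp only [hTdef]
      linarith
    have hlin := myLinear (a := t₁) (f := g) (f' := fun t => 3 * γ / 2 * Hb t * g t)
      (fun u _ => (hgderiv u).hasDerivWithinAt) hbound hT
    have hcc : c * (g t₁ / c) = g t₁ := mul_div_cancel₀ _ (ne_of_gt hc)
    have := hgpos T
    simp only [hTdef] at hlin
    nlinarith
  -- limit of H
  obtain ⟨L, hL0, hLle, hLtend⟩ := myTendsto hHanti hHnn
  rcases eq_or_lt_of_le hL0 with hL | hL
  · rw [← hL] at hLtend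
    exact hLtend
  exfalso
  -- upper bounds
  have hH0' : ∀ t ∈ Ici t₀, H t ≤ H t₀ := fun t ht => hHanti self_mem_Ici ht ht
  have hH2 : ∀ t ∈ Ici t₀, H t ^ 2 ≤ H t₀ ^ 2 := by
    intro t ht
    nlinarith [hHnn t ht, hH0' t ht]
  have hy2 : ∀ t ∈ Ici t₀, y t ^ 2 ≤ 6 * H t₀ ^ 2 := by
    intro t ht
    nlinarith [hcon t ht, hρ0 t ht, hVnn (φ t), hH2 t ht]
  have hVb : ∀ t ∈ Ici t₀, V (φ t) ≤ 3 * H t₀ ^ 2 := by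
    intro t ht
    nlinarith [hcon t ht, hρ0 t ht, sq_nonneg (y t), hH2 t ht]
  -- ρ tends to 0
  have hρanti : AntitoneOn ρ (Ici t₀) := by
    apply myAnti hρ
    intro t ht
    have h1 : 0 ≤ 3 * γ * ρ t * H t :=
      mul_nonneg (mul_nonneg (by linarith) (hρ0 t ht)) (hHnn t ht)
    linarith
  obtain ⟨c₀, hc₀0, hc₀le, hc₀tend⟩ := myTendsto hρanti hρ0
  have hc₀ : c₀ = 0 := by
    by_contra hne
    have hc₀pos : 0 < c₀ := lt_of_le_of_ne hc₀0 (Ne.symm hne)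
    set T : ℝ := t₀ + (H t₀ / (γ / 2 * c₀) + 1) with hTdef
    have hpos : 0 < γ / 2 * c₀ := by positivity
    have hT : t₀ ≤ T := by
      have : 0 ≤ H t₀ / (γ / 2 * c₀) := le_of_lt (div_pos hH0 hpos)
      simp only [hTdef]; linarith
    have hlin := myLinear (a := t₀) (f := H)
      (f' := fun t => -(1 / 2) * y t ^ 2 - γ / 2 * ρ t) hH
      (c := -(γ / 2 * c₀))
      (fun t ht => by nlinarith [hc₀le t ht, sq_nonneg (y t)]) hT
    have hcc : (γ / 2 * c₀) * (H t₀ / (γ / 2 * c₀)) = H t₀ :=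
      mul_div_cancel₀ _ (ne_of_gt hpos)
    have := hHnn T hT
    simp only [hTdef] at hlin
    nlinarith
  rw [hc₀] at hc₀tend
  -- bound on deriv V along φ
  obtain ⟨M, hMnn, hMb⟩ : ∃ M : ℝ, 0 ≤ M ∧ ∀ t ∈ Ici t₀, |deriv V (φ t)| ≤ M := by
    have hb1 : Bornology.IsBounded (V '' (φ '' Ici t₀)) := by
      apply (Metric.isBounded_Icc 0 (3 * H t₀ ^ 2)).subset
      rintro v ⟨s, ⟨t, ht, rfl⟩, rfl⟩
      exact ⟨hVnn _, hVb t ht⟩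
    obtain ⟨M, hM⟩ := isBounded_iff_forall_norm_le.mp (hV'bdd _ hb1)
    refine ⟨max M 0, le_max_right _ _, fun t ht => ?_⟩
    have := hM _ ⟨φ t, ⟨t, ht, rfl⟩, rfl⟩
    rw [Real.norm_eq_abs] at this
    exact le_trans this (le_max_left _ _)
  -- bound on y
  set Y : ℝ := Real.sqrt (6 * H t₀ ^ 2) with hYdef
  clear_value Y
  have hYnn : 0 ≤ Y := by rw [hYdef]; exact Real.sqrt_nonneg _
  have hyabs : ∀ t ∈ Ici t₀, |y t| ≤ Y := by
    intro t ht
    rw [hYdef, ← Real.sqrt_sq_eq_abs]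
    exact Real.sqrt_le_sqrt (hy2 t ht)
  -- Lipschitz bound on y
  set K : ℝ := 3 * H t₀ * Y + M + 1 with hKdef
  clear_value K
  have hK1 : 1 ≤ K := by
    have : 0 ≤ 3 * H t₀ * Y := mul_nonneg (by linarith) hYnn
    simp only [hKdef]; linarith
  have hK0 : 0 < K := by linarith
  have hyd_ub : ∀ t ∈ Ici t₀, -3 * H t * y t - deriv V (φ t) ≤ K := by
    intro t ht
    obtain ⟨h1a, h1b⟩ := abs_le.mp (hyabs t ht)
    obtain ⟨h2a, h2b⟩ := abs_le.mp (hMb t ht)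
    have h3 := hHnn t ht
    have h4 := hH0' t ht
    have k1 : 0 ≤ 3 * H t * (y t + Y) := by
      apply mul_nonneg (by linarith) (by linarith)
    have k2 : 0 ≤ 3 * (H t₀ - H t) * Y := by
      apply mul_nonneg (by linarith) hYnn
    simp only [hKdef]
    nlinarith
  have hyd_lb : ∀ t ∈ Ici t₀, -K ≤ -3 * H t * y t - deriv V (φ t) := by
    intro t ht
    obtain ⟨h1a, h1b⟩ := abs_le.mp (hyabs t ht)
    obtain ⟨h2a, h2b⟩ := abs_le.mp (hMb t ht)
    have h3 := hHnn t ht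
    have h4 := hH0' t ht
    have k1 : 0 ≤ 3 * H t * (Y - y t) := by
      apply mul_nonneg (by linarith) (by linarith)
    have k2 : 0 ≤ 3 * (H t₀ - H t) * Y := by
      apply mul_nonneg (by linarith) hYnn
    simp only [hKdef]
    nlinarith
  -- the primitive of y²
  set yb : ℝ → ℝ := fun t => (y (max t t₀)) ^ 2 with hybdef
  have hybc : Continuous yb :=
    (hyc.comp_continuous (continuous_id.max continuous_const)
      (fun x => mem_Ici.mpr (le_max_right _ _))).pow 2
  have hybnn : ∀ t, 0 ≤ yb t := fun t => sq_nonneg _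
  have hybeq : ∀ t ∈ Ici t₀, yb t = y t ^ 2 := by
    intro t ht; simp [hybdef, max_eq_left (mem_Ici.mp ht)]
  set F : ℝ → ℝ := fun t => ∫ x in t₀..t, yb x with hFdef
  have hFderiv : ∀ t, HasDerivAt F (yb t) t := fun t =>
    (hybc.integral_hasStrictDerivAt t₀ t).hasDerivAt
  have hF0 : F t₀ = 0 := by simp [hFdef]
  have hFmono : Monotone F := by
    apply monotone_of_deriv_nonneg
    · exact fun t => (hFderiv t).differentiableAt
    · intro t
      rw [(hFderiv t).deriv]
      exact hybnn t
  have hFbound : ∀ t ∈ Ici t₀, F t ≤ 2 * H t₀ := by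
    have key : AntitoneOn (fun t => H t + F t / 2) (Ici t₀) := by
      apply myAnti (f' := fun t =>
        (-(1 / 2) * y t ^ 2 - γ / 2 * ρ t) + yb t / 2)
      · intro t ht
        exact (hH t ht).add ((hFderiv t).hasDerivWithinAt.div_const 2)
      · intro t ht
        rw [hybeq t ht]
        have := hρ0 t ht
        nlinarith
    intro t ht
    have h1 := key self_mem_Ici ht ht
    simp only [hF0] at h1
    have h2 := hHnn t ht
    norm_num at h1
    linarith
  -- Barbalat: y tends to 0
  have hy0 : Tendsto y atTop (𝓝 0) := by
    rw [Metric.tendsto_atTop]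
    intro ε hε
    set d : ℝ := ε / (2 * K) with hddef
    clear_value d
    have hd : 0 < d := by rw [hddef]; exact div_pos hε (by linarith)
    set η : ℝ := ε ^ 2 / 4 * d with hηdef
    clear_value η
    have hη : 0 < η := by rw [hηdef]; positivity
    have hbddF : BddAbove (F '' Ici t₀) := by
      refine ⟨2 * H t₀, ?_⟩
      rintro x ⟨t, ht, rfl⟩
      exact hFbound t ht
    have hneF : (F '' Ici t₀).Nonempty := ⟨F t₀, t₀, self_mem_Ici, rfl⟩
    set S : ℝ := sSup (F '' Ici t₀) with hSdef
    clear_value S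
    obtain ⟨x, ⟨T', hT', rfl⟩, hx⟩ :=
      exists_lt_of_lt_csSup hneF (show S - η < sSup (F '' Ici t₀) by rw [← hSdef]; linarith)
    refine ⟨T', fun t ht => ?_⟩
    by_contra habs
    push_neg at habs
    rw [Real.dist_eq, sub_zero] at habs
    have ht0 : t ∈ Ici t₀ := le_trans hT' ht
    -- y stays large on [t, t+d]
    have hlarge : ∀ s ∈ Icc t (t + d), ε ^ 2 / 4 ≤ yb s := by
      intro s hs
      have hs0 : s ∈ Ici t₀ := le_trans ht0 hs.1
      have hub := myLinear (a := t) (f := y)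
        (f' := fun u => -3 * H u * y u - deriv V (φ u))
        (fun u hu => (hy u (mem_Ici.mpr (le_trans ht0 hu))).mono (Ici_subset_Ici.mpr ht0))
        (c := K) (fun u hu => hyd_ub u (mem_Ici.mpr (le_trans ht0 hu))) hs.1
      have hlb := myLinear' (a := t) (f := y)
        (f' := fun u => -3 * H u * y u - deriv V (φ u))
        (fun u hu => (hy u (mem_Ici.mpr (le_trans ht0 hu))).mono (Ici_subset_Ici.mpr ht0))
        (c := -K) (fun u hu => hyd_lb u (mem_Ici.mpr (le_trans ht0 hu))) hs.1
      have hKd : K * d = ε / 2 := by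
        rw [hddef]
        field_simp
      have hKs : K * (s - t) ≤ ε / 2 := by
        calc K * (s - t) ≤ K * d :=
              mul_le_mul_of_nonneg_left (by linarith [hs.2]) (le_of_lt hK0)
          _ = ε / 2 := hKd
      have habs' : ε / 2 ≤ |y s| := by
        have hd1 : |y t - y s| ≤ ε / 2 := by
          rw [abs_le]
          constructor <;> linarith
        have h2 := abs_sub_abs_le_abs_sub (y t) (y s)
        linarith [habs]
      rw [hybeq s hs0]
      calc ε ^ 2 / 4 = (ε / 2) ^ 2 := by ring
        _ ≤ |y s| ^ 2 := pow_le_pow_left₀ (by linarith) habs' 2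
        _ = y s ^ 2 := sq_abs _
    -- integral gain
    have hint1 : IntervalIntegrable yb MeasureTheory.volume t (t + d) :=
      hybc.intervalIntegrable _ _
    have hint2 : IntervalIntegrable (fun _ => ε ^ 2 / 4) MeasureTheory.volume t (t + d) :=
      intervalIntegrable_const
    have hgain : η ≤ F (t + d) - F t := by
      have h1 := intervalIntegral.integral_mono_on (by linarith : t ≤ t + d)
        hint2 hint1 hlarge
      rw [intervalIntegral.integral_const] at h1
      have h2 : F (t + d) - F t = ∫ x in t..(t + d), yb x := by
        apply intervalIntegral.integral_interval_sub_left
          (hybc.intervalIntegrable _ _) (hybc.intervalIntegrable _ _)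
      rw [h2]
      simp only [smul_eq_mul] at h1
      simp only [hηdef]
      nlinarith
    have hle1 : F (t + d) ≤ S := by
      rw [hSdef]
      exact le_csSup hbddF ⟨t + d, mem_Ici.mpr (le_trans ht0 (by linarith : t ≤ t + d)), rfl⟩
    have hle2 : F T' ≤ F t := hFmono ht
    linarith
  -- limit of V ∘ φ
  have hVφ : Tendsto (fun t => V (φ t)) atTop (𝓝 (3 * L ^ 2)) := by
    have h1 : Tendsto (fun t => 3 * H t ^ 2 - ρ t - 1 / 2 * y t ^ 2) atTop
        (𝓝 (3 * L ^ 2 - 0 - 1 / 2 * 0 ^ 2)) := by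
      exact (((hLtend.pow 2).const_mul 3).sub hc₀tend).sub ((hy0.pow 2).const_mul (1 / 2))
    have h2 : 3 * L ^ 2 - 0 - 1 / 2 * 0 ^ 2 = 3 * L ^ 2 := by ring
    rw [h2] at h1
    apply h1.congr'
    filter_upwards [eventually_ge_atTop t₀] with t ht
    have := hcon t ht
    linarith
  -- localize φ in a compact interval
  obtain ⟨b, hb⟩ : ∃ b, ∀ s ≥ b, V s < 3 / 2 * L ^ 2 := by
    have := hVtop.eventually (gt_mem_nhds (show (0:ℝ) < 3 / 2 * L ^ 2 by positivity))
    rw [eventually_atTop] at this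
    exact this
  obtain ⟨a, ha⟩ : ∃ a, ∀ s ≤ a, 3 * H t₀ ^ 2 < V s := by
    have := hVbot.eventually (eventually_gt_atTop (3 * H t₀ ^ 2))
    rw [eventually_atBot] at this
    exact this
  have hφlb : ∀ t ∈ Ici t₀, a < φ t := by
    intro t ht
    by_contra hle
    push_neg at hle
    exact absurd (hVb t ht) (not_le.mpr (ha _ hle))
  have hφub : ∀ᶠ t in atTop, φ t < b := by
    have hev := hVφ.eventually (eventually_gt_nhds
      (show 3 / 2 * L ^ 2 < 3 * L ^ 2 by nlinarith))
    filter_upwards [hev] with t ht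
    by_contra hle
    push_neg at hle
    exact absurd ht (not_lt.mpr (le_of_lt (hb _ hle)))
  have hφmem : ∀ᶠ t in atTop, φ t ∈ Icc a b := by
    filter_upwards [hφub, eventually_ge_atTop t₀] with t h1 h2
    exact ⟨le_of_lt (hφlb t h2), le_of_lt h1⟩
  have hab : a ≤ b := by
    obtain ⟨t, ht⟩ := hφmem.exists
    exact le_trans ht.1 ht.2
  -- uniform negativity of V' on [a, b]
  obtain ⟨x₀, hx₀mem, hx₀max⟩ := (isCompact_Icc (a := a) (b := b)).exists_isMaxOn
    ⟨a, left_mem_Icc.mpr hab⟩ hV'cont.continuousOn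
  set δ : ℝ := -(deriv V x₀) with hδdef
  clear_value δ
  have hδ : 0 < δ := by rw [hδdef]; exact neg_pos.mpr (hV'neg x₀)
  have hδle : ∀ s ∈ Icc a b, deriv V s ≤ -δ := by
    intro s hs
    have h5 := hx₀max hs
    simp only [Set.mem_setOf_eq] at h5
    simp only [hδdef]
    linarith [h5]
  -- eventually y is small
  set ε₀ : ℝ := δ / (6 * H t₀ + 6) with hε₀def
  clear_value ε₀
  have hε₀ : 0 < ε₀ := by rw [hε₀def]; positivity
  have hyev : ∀ᶠ t in atTop, |y t| < ε₀ := by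
    have := hy0.eventually (eventually_abs_sub_lt 0 hε₀)
    simpa using this
  obtain ⟨T₂, hT₂⟩ : ∃ T₂, ∀ t ≥ T₂, t₀ ≤ t ∧ φ t ∈ Icc a b ∧ |y t| < ε₀ := by
    have hev : ∀ᶠ t in atTop, t₀ ≤ t ∧ φ t ∈ Icc a b ∧ |y t| < ε₀ := by
      filter_upwards [eventually_ge_atTop t₀, hφmem, hyev] with t h1 h2 h3
      exact ⟨h1, h2, h3⟩
    rw [eventually_atTop] at hev
    exact hev
  have hT₂0 : t₀ ≤ T₂ := (hT₂ T₂ le_rfl).1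
  -- y grows linearly beyond T₂, contradiction
  have hstep : ∀ t ∈ Ici T₂, δ / 2 ≤ -3 * H t * y t - deriv V (φ t) := by
    intro t ht
    obtain ⟨ht0, hφm, hym⟩ := hT₂ t ht
    obtain ⟨h1a, h1b⟩ := abs_le.mp (le_of_lt hym)
    have h2 := hδle _ hφm
    have h3 := hHnn t ht0
    have h4 := hH0' t ht0
    have k1 : 0 ≤ 3 * H t * (ε₀ - y t) := by
      apply mul_nonneg (by linarith) (by linarith)
    have k2 : 0 ≤ 3 * (H t₀ - H t) * ε₀ := by
      apply mul_nonneg (by linarith) (le_of_lt hε₀)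
    have k3 : 3 * H t₀ * ε₀ ≤ δ / 2 := by
      have hexp : ε₀ * (6 * H t₀ + 6) = δ := by
        rw [hε₀def]
        field_simp
      nlinarith [hexp, hε₀]
    nlinarith
  set T₃ : ℝ := T₂ + (2 * (2 * ε₀) / δ + 1) with hT₃def
  have hT₃ : T₂ ≤ T₃ := by
    have : 0 ≤ 2 * (2 * ε₀) / δ := by positivity
    simp only [hT₃def]; linarith
  have hlin := myLinear' (a := T₂) (f := y)
    (f' := fun u => -3 * H u * y u - deriv V (φ u))
    (fun u hu => (hy u (mem_Ici.mpr (le_trans hT₂0 hu))).mono (Ici_subset_Ici.mpr hT₂0))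
    (c := δ / 2) hstep hT₃
  have hyT₂ := abs_le.mp (le_of_lt (hT₂ T₂ le_rfl).2.2)
  have hyT₃ := abs_le.mp (le_of_lt (hT₂ T₃ hT₃).2.2)
  have hcc : δ / 2 * (2 * (2 * ε₀) / δ) = 2 * ε₀ := by
    have hδne : δ ≠ 0 := ne_of_gt hδ
    field_simp
  simp only [hT₃def] at hlin
  nlinarith
end

section
/- Suppose φ, y, ρ, H solve the flat scalar-field system on [t₀, ∞) with the Friedmann constraint 3H² = ρ + (1/2)y² + V(φ), where V(φ) ≥ 0 for all φ and H(t₀) > 0 and H(t) > 0 for all t ≥ t₀. Then ρ(t) → 0 as t → ∞, without any boundedness assumption on V'. -/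
open Filter

private lemma anti_aux {t₀ : ℝ} {f f' : ℝ → ℝ}
    (hf : ∀ t ∈ Set.Ici t₀, HasDerivWithinAt f (f' t) (Set.Ici t₀) t)
    (hf0 : ∀ t ∈ Set.Ici t₀, f' t ≤ 0) : AntitoneOn f (Set.Ici t₀) := by
  apply antitoneOn_of_hasDerivWithinAt_nonpos (convex_Ici t₀)
    (fun t ht => (hf t ht).continuousWithinAt) (f' := f')
  · intro x hx
    rw [interior_Ici] at hx
    exact ((hf x (Set.Ioi_subset_Ici_self hx)).mono Set.Ioi_subset_Ici_self).mono
      (by rw [interior_Ici])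
  · intro x hx
    rw [interior_Ici] at hx
    exact hf0 x (Set.Ioi_subset_Ici_self hx)

/-- Remark after Proposition 2: for the flat scalar-field system with a non-negative
potential and an ever-expanding universe (`H > 0` on `[t₀, ∞)`), the matter density
satisfies `ρ(t) → 0` as `t → ∞`, without any boundedness assumption on `V'`. -/
theorem stmt_6 (t₀ γ : ℝ) (hγ0 : 0 < γ) (hγ2 : γ ≤ 2)
    (V : ℝ → ℝ) (hV : ContDiff ℝ 2 V)
    (φ y ρ H : ℝ → ℝ)
    (hφ : ∀ t ∈ Set.Ici t₀, HasDerivWithinAt φ (y t) (Set.Ici t₀) t)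
    (hy : ∀ t ∈ Set.Ici t₀,
      HasDerivWithinAt y (-3 * H t * y t - deriv V (φ t)) (Set.Ici t₀) t)
    (hρ : ∀ t ∈ Set.Ici t₀, HasDerivWithinAt ρ (-3 * γ * ρ t * H t) (Set.Ici t₀) t)
    (hH : ∀ t ∈ Set.Ici t₀,
      HasDerivWithinAt H (-(1 / 2) * y t ^ 2 - γ / 2 * ρ t) (Set.Ici t₀) t)
    (hρ0 : ∀ t ∈ Set.Ici t₀, 0 ≤ ρ t)
    (hcon : ∀ t ∈ Set.Ici t₀, 3 * H t ^ 2 = ρ t + 1 / 2 * y t ^ 2 + V (φ t))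
    (hVnn : ∀ s : ℝ, 0 ≤ V s)
    (hH0 : 0 < H t₀)
    (hHpos : ∀ t ∈ Set.Ici t₀, 0 < H t) :
    Tendsto ρ atTop (nhds 0) := by
  -- ρ is antitone on [t₀, ∞)
  have hρanti : AntitoneOn ρ (Set.Ici t₀) := by
    apply anti_aux hρ
    intro t ht
    have h1 := hρ0 t ht
    have h2 := (hHpos t ht).le
    nlinarith [mul_nonneg (mul_nonneg hγ0.le h1) h2]
  -- key: for any c > 0, ρ cannot stay ≥ c forever
  have key : ∀ c : ℝ, 0 < c → ¬ (∀ t ∈ Set.Ici t₀, c ≤ ρ t) := by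
    intro c hc hge
    -- g t = H t + (γ*c/2)*t is antitone
    have hg : AntitoneOn (fun t => H t + (γ * c / 2) * t) (Set.Ici t₀) := by
      apply anti_aux (f' := fun t => (-(1 / 2) * y t ^ 2 - γ / 2 * ρ t) + γ * c / 2)
      · intro t ht
        have h2 : HasDerivWithinAt (fun t : ℝ => γ * c / 2 * t) (γ * c / 2) (Set.Ici t₀) t := by
          simpa using (hasDerivWithinAt_id t (Set.Ici t₀)).const_mul (γ * c / 2)
        exact (hH t ht).add h2
      · intro t ht
        have h1 := hge t ht
        nlinarith [sq_nonneg (y t)]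
    have hγc : 0 < γ * c := mul_pos hγ0 hc
    have hT0 : t₀ ≤ t₀ + 2 * (H t₀ + 1) / (γ * c) :=
      le_add_of_nonneg_right (by positivity)
    have h3 := hg Set.self_mem_Ici hT0 hT0
    have hHT := hHpos _ hT0
    have hTe : γ * c / 2 * (t₀ + 2 * (H t₀ + 1) / (γ * c))
        = γ * c / 2 * t₀ + (H t₀ + 1) := by
      field_simp
    simp only at h3
    rw [hTe] at h3
    linarith
  -- conclude
  rw [NormedAddCommGroup.tendsto_nhds_zero]
  intro ε hε
  obtain ⟨s, hs, hsε⟩ : ∃ s ∈ Set.Ici t₀, ρ s < ε := by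
    by_contra h
    push_neg at h
    exact key ε hε h
  rw [eventually_atTop]
  refine ⟨s, fun t ht => ?_⟩
  have hts : t ∈ Set.Ici t₀ := le_trans hs ht
  rw [Real.norm_eq_abs, abs_of_nonneg (hρ0 t hts)]
  exact lt_of_le_of_lt (hρanti hs hts ht) hsε
end

section
/- Suppose φ, y, ρ, H solve the flat scalar-field system on [t₀, ∞) with the Friedmann constraint 3H² = ρ + (1/2)y² + V(φ), where V(φ) ≥ 0 for all φ, V(φ) = 0 if and only if φ = 0 (so that also V'(0) = 0, since 0 is a minimum of the C² function V). If H(t₀) > 0, then H(t) > 0 for all t ≥ t₀; that is, the sign of H is preserved and an initially expanding flat universe remains ever-expanding. -/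
open Filter Topology

/-- For the flat scalar-field system with a non-negative potential vanishing exactly at
`φ = 0`, an initially expanding universe remains ever-expanding: if `H(t₀) > 0` then
`H(t) > 0` for all `t ≥ t₀`. -/
theorem stmt_7 (t₀ γ : ℝ) (hγ0 : 0 < γ) (hγ2 : γ ≤ 2)
    (V : ℝ → ℝ) (hV : ContDiff ℝ 2 V)
    (φ y ρ H : ℝ → ℝ)
    (hφ : ∀ t ∈ Set.Ici t₀, HasDerivWithinAt φ (y t) (Set.Ici t₀) t)
    (hy : ∀ t ∈ Set.Ici t₀,
      HasDerivWithinAt y (-3 * H t * y t - deriv V (φ t)) (Set.Ici t₀) t)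
    (hρ : ∀ t ∈ Set.Ici t₀, HasDerivWithinAt ρ (-3 * γ * ρ t * H t) (Set.Ici t₀) t)
    (hH : ∀ t ∈ Set.Ici t₀,
      HasDerivWithinAt H (-(1 / 2) * y t ^ 2 - γ / 2 * ρ t) (Set.Ici t₀) t)
    (hρ0 : ∀ t ∈ Set.Ici t₀, 0 ≤ ρ t)
    (hcon : ∀ t ∈ Set.Ici t₀, 3 * H t ^ 2 = ρ t + 1 / 2 * y t ^ 2 + V (φ t))
    (hVnn : ∀ s : ℝ, 0 ≤ V s)
    (hVzero : ∀ s : ℝ, V s = 0 ↔ s = 0)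
    (hH0 : 0 < H t₀) :
    ∀ t ∈ Set.Ici t₀, 0 < H t := by
  intro t₁ ht₁
  by_contra hHt₁'
  push_neg at hHt₁'
  have hcont : ContinuousOn H (Set.Ici t₀) := fun t ht => (hH t ht).continuousWithinAt
  -- the set of "bad" times
  set S : Set ℝ := Set.Icc t₀ t₁ ∩ H ⁻¹' Set.Iic 0 with hSdef
  have hSne : S.Nonempty := ⟨t₁, ⟨ht₁, le_refl t₁⟩, hHt₁'⟩
  have hSbdd : BddBelow S := ⟨t₀, fun x hx => hx.1.1⟩
  have hSclosed : IsClosed S :=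
    (hcont.mono Set.Icc_subset_Ici_self).preimage_isClosed_of_isClosed isClosed_Icc isClosed_Iic
  set c : ℝ := sInf S with hcdef
  have hcS : c ∈ S := hSclosed.csInf_mem hSne hSbdd
  have hct₀ : t₀ ≤ c := hcS.1.1
  have hHc : H c ≤ 0 := hcS.2
  have htc : t₀ < c := lt_of_le_of_ne hct₀ (fun h => absurd hHc (by rw [← h]; exact not_le.mpr hH0))
  -- H is positive on [t₀, c)
  have hpos : ∀ t ∈ Set.Ico t₀ c, 0 < H t := by
    intro t ht
    by_contra h
    push_neg at h
    have : t ∈ S := ⟨⟨ht.1, le_trans ht.2.le hcS.1.2⟩, h⟩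
    exact absurd (csInf_le hSbdd this) (not_le.mpr ht.2)
  -- key inequality: 0 ≤ -(H' t) ≤ 3 H t ^ 2 on Ici t₀
  have hkey : ∀ t ∈ Set.Ici t₀,
      0 ≤ -(-(1 / 2) * y t ^ 2 - γ / 2 * ρ t) ∧
      -(-(1 / 2) * y t ^ 2 - γ / 2 * ρ t) ≤ 3 * H t ^ 2 := by
    intro t ht
    have h1 : 0 ≤ ρ t := hρ0 t ht
    have h2 : 0 ≤ y t ^ 2 := sq_nonneg _
    have h3 : 0 ≤ V (φ t) := hVnn _
    have h4 := hcon t ht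
    constructor
    · nlinarith
    · nlinarith
  -- derivative of 1/H on Ico t₀ c
  have hder : ∀ t ∈ Set.Ico t₀ c,
      HasDerivWithinAt (fun s => (H s)⁻¹)
        (-(-(1 / 2) * y t ^ 2 - γ / 2 * ρ t) / H t ^ 2) (Set.Ico t₀ c) t := by
    intro t ht
    exact ((hH t ht.1).inv (hpos t ht).ne').mono (Set.Ico_subset_Ici_self)
  -- the derivative of 1/H is bounded in norm by 3
  have hbound : ∀ t ∈ Set.Ico t₀ c,
      ‖-(-(1 / 2) * y t ^ 2 - γ / 2 * ρ t) / H t ^ 2‖ ≤ 3 := by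
    intro t ht
    obtain ⟨h1, h2⟩ := hkey t ht.1
    have hH2 : 0 < H t ^ 2 := pow_pos (hpos t ht) 2
    rw [Real.norm_eq_abs, abs_div, abs_of_nonneg h1, abs_of_pos hH2]
    rw [div_le_iff₀ hH2]
    nlinarith
  -- hence 1/H is bounded above on [t₀, c)
  set B : ℝ := (H t₀)⁻¹ + 3 * (c - t₀) with hBdef
  have hBpos : 0 < B := by
    have := inv_pos.mpr hH0
    have : (0:ℝ) ≤ 3 * (c - t₀) := by nlinarith [htc.le]
    simp only [hBdef]
    have h0 := inv_pos.mpr hH0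
    linarith
  have hHlb : ∀ t ∈ Set.Ico t₀ c, B⁻¹ ≤ H t := by
    intro t ht
    have ht₀mem : t₀ ∈ Set.Ico t₀ c := ⟨le_refl t₀, htc⟩
    have := (convex_Ico t₀ c).norm_image_sub_le_of_norm_hasDerivWithin_le
      hder hbound ht₀mem ht
    have h1 : (H t)⁻¹ - (H t₀)⁻¹ ≤ 3 * |t - t₀| := by
      calc (H t)⁻¹ - (H t₀)⁻¹ ≤ ‖(H t)⁻¹ - (H t₀)⁻¹‖ := Real.le_norm_self _
        _ ≤ 3 * ‖t - t₀‖ := this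
        _ = 3 * |t - t₀| := by rw [Real.norm_eq_abs]
    have habs : |t - t₀| ≤ c - t₀ := by
      rw [abs_of_nonneg (by linarith [ht.1])]
      linarith [ht.2.le]
    have h2 : (H t)⁻¹ ≤ B := by
      have : 3 * |t - t₀| ≤ 3 * (c - t₀) := by linarith
      simp only [hBdef]; linarith
    have hHt : 0 < H t := hpos t ht
    rw [inv_le_iff_one_le_mul₀ hBpos] at *
    calc (1 : ℝ) = (H t)⁻¹ * H t := (inv_mul_cancel₀ hHt.ne').symm
      _ ≤ B * H t := mul_le_mul_of_nonneg_right h2 hHt.le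
      _ = H t * B := mul_comm _ _
  -- pass to the limit t → c⁻ to get H c ≥ B⁻¹ > 0, contradiction
  have hclos : c ∈ closure (Set.Ico t₀ c) := by
    rw [closure_Ico htc.ne]
    exact ⟨hct₀, le_refl c⟩
  have hne : (𝓝[Set.Ico t₀ c] c).NeBot := mem_closure_iff_nhdsWithin_neBot.mp hclos
  have htend : Tendsto H (𝓝[Set.Ico t₀ c] c) (𝓝 (H c)) :=
    ((hcont c hct₀).mono Set.Ico_subset_Ici_self).tendsto
  have : B⁻¹ ≤ H c :=
    ge_of_tendsto htend (eventually_nhdsWithin_of_forall hHlb)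
  have : 0 < H c := lt_of_lt_of_le (inv_pos.mpr hBpos) this
  linarith
end

section
/- Let V₀ > 0, γ > 0, and c > 0 be real numbers. Then every complex root of the polynomial (X + γ√(3V₀)) · (X² + √(3V₀)·X + c) has strictly negative real part. (Hence the equilibrium (φ₁, 0, √(V₀/3)) of the reduced system, at a point φ₁ which is a local minimum of V with V(φ₁) = V₀ > 0 and V''(φ₁) = c > 0, is future asymptotically stable; it corresponds to a vacuum de Sitter space with cosmological constant √V₀.) -/
open Polynomial

/-- Every complex root of the characteristic polynomial
`(X + γ√(3V₀)) (X² + √(3V₀) X + c)` (with `V₀ > 0`, `γ > 0`, `c > 0`) has strictly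
negative real part; hence the corresponding equilibrium of the reduced flat FRW
scalar-field system is future asymptotically stable. -/
theorem stmt_14 (V₀ γ c : ℝ) (hV₀ : 0 < V₀) (hγ : 0 < γ) (hc : 0 < c) :
    ∀ z : ℂ,
      ((X + C ((γ * Real.sqrt (3 * V₀) : ℝ) : ℂ)) *
        (X ^ 2 + C ((Real.sqrt (3 * V₀) : ℝ) : ℂ) * X + C ((c : ℝ) : ℂ))).IsRoot z →
      z.re < 0 := by
  intro z hz
  have hb : 0 < Real.sqrt (3 * V₀) := Real.sqrt_pos.mpr (by linarith)
  simp only [IsRoot, eval_mul, eval_add, eval_pow, eval_X, eval_C, mul_eq_zero] at hz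
  rcases hz with h | h
  · have : z = -(↑(γ * Real.sqrt (3 * V₀)) : ℂ) := by linear_combination h
    rw [this]
    simp only [Complex.neg_re, Complex.ofReal_re]
    nlinarith
  · set b := Real.sqrt (3 * V₀) with hbdef
    have hre : z.re ^ 2 - z.im ^ 2 + b * z.re + c = 0 := by
      have := congrArg Complex.re h
      simp [Complex.add_re, Complex.mul_re, pow_two, Complex.ofReal_re,
        Complex.ofReal_im] at this
      nlinarith [this]
    have him : z.im * (2 * z.re + b) = 0 := by
      have := congrArg Complex.im h
      simp [Complex.add_im, Complex.mul_im, pow_two, Complex.ofReal_re,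
        Complex.ofReal_im] at this
      nlinarith [this]
    rcases mul_eq_zero.mp him with h0 | h0
    · -- z.im = 0
      rw [h0] at hre
      nlinarith [sq_nonneg (z.re + b)]
    · nlinarith
end

section
/- Suppose x, φ, y, ρ, H : [t₀, ∞) → ℝ are differentiable and solve the negatively curved (k = -1) scalar-field system: x' = -Hx, φ' = y, y' = -3Hy - V'(φ), ρ' = -3γρH, H' = -(1/2)y² - (γ/2)ρ - x², with ρ(t) ≥ 0 and x(t) > 0 for all t, subject to the constraint 3H² - 3x² = ρ + (1/2)y² + V(φ), where V : ℝ → ℝ is C², γ is a constant with 0 < γ ≤ 2, V(φ) ≥ 0 for all φ, V(φ) = 0 if and only if φ = 0, V' is bounded on every subset of ℝ on which V is bounded, and H(t₀) > 0. Then ρ(t) → 0, y(t) → 0, and x(t) → 0 as t → ∞. -/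
open Filter

lemma lim_of_antitoneOn (t₀ : ℝ) (f : ℝ → ℝ) (hf : AntitoneOn f (Set.Ici t₀))
    (hbdd : ∀ t ∈ Set.Ici t₀, 0 ≤ f t) :
    ∃ L, 0 ≤ L ∧ Tendsto f atTop (nhds L) ∧ ∀ t ∈ Set.Ici t₀, L ≤ f t := by
  set g : ℝ → ℝ := fun t => f (max t t₀) with hg
  have hganti : Antitone g := by
    intro s t hst
    exact hf (le_max_right s t₀) (le_max_right t t₀) (max_le_max hst le_rfl)
  have hgnn : ∀ t, 0 ≤ g t := fun t => hbdd _ (le_max_right t t₀)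
  have hbb : BddBelow (Set.range g) := ⟨0, by rintro _ ⟨t, rfl⟩; exact hgnn t⟩
  refine ⟨⨅ t, g t, le_ciInf hgnn, ?_, ?_⟩
  · have := tendsto_atTop_ciInf hganti hbb
    refine this.congr' ?_
    filter_upwards [eventually_ge_atTop t₀] with t ht
    simp [hg, max_eq_left ht]
  · intro t ht
    have : (⨅ t, g t) ≤ g t := ciInf_le hbb t
    simpa [hg, max_eq_left (Set.mem_Ici.mp ht)] using this

lemma lim_of_monotoneOn (t₀ B : ℝ) (f : ℝ → ℝ) (hf : MonotoneOn f (Set.Ici t₀))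
    (hbdd : ∀ t ∈ Set.Ici t₀, f t ≤ B) :
    ∃ L, Tendsto f atTop (nhds L) := by
  set g : ℝ → ℝ := fun t => f (max t t₀) with hg
  have hgmono : Monotone g := by
    intro s t hst
    exact hf (le_max_right s t₀) (le_max_right t t₀) (max_le_max hst le_rfl)
  have hbb : BddAbove (Set.range g) := ⟨B, by rintro _ ⟨t, rfl⟩; exact hbdd _ (le_max_right t t₀)⟩
  refine ⟨⨆ t, g t, ?_⟩
  refine (tendsto_atTop_ciSup hgmono hbb).congr' ?_
  filter_upwards [eventually_ge_atTop t₀] with t ht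
  simp [hg, max_eq_left ht]

lemma barbalat (t₀ K L : ℝ) (hK : 0 < K) (f G : ℝ → ℝ)
    (hf0 : ∀ t ∈ Set.Ici t₀, 0 ≤ f t)
    (hfc : ContinuousOn f (Set.Ici t₀))
    (hlip : ∀ s ∈ Set.Ici t₀, ∀ t ∈ Set.Ici t₀, |f t - f s| ≤ K * |t - s|)
    (hGdiff : ∀ s t, t₀ ≤ s → s ≤ t → G t - G s = ∫ u in s..t, f u)
    (hG : Tendsto G atTop (nhds L)) :
    Tendsto f atTop (nhds 0) := by
  by_contra hcon
  rw [Metric.tendsto_atTop] at hcon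
  push_neg at hcon
  obtain ⟨ε, hε, hfreq⟩ := hcon
  set δ : ℝ := ε / (2 * K) with hδdef
  have hδ : 0 < δ := div_pos hε (by positivity)
  obtain ⟨N₀, hN₀⟩ := Metric.tendsto_atTop.1 hG (δ * ε / 8) (by positivity)
  obtain ⟨t, ht, hft⟩ := hfreq (max N₀ t₀)
  have ht0 : t₀ ≤ t := le_trans (le_max_right _ _) ht
  have htN : N₀ ≤ t := le_trans (le_max_left _ _) ht
  have hftε : ε ≤ f t := by
    have := hf0 t ht0
    rw [Real.dist_eq, sub_zero, abs_of_nonneg this] at hft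
    exact hft
  have hKδ : K * δ = ε / 2 := by
    field_simp [hδdef]
    rw [hδdef]; field_simp
  have hlow : ∀ u ∈ Set.Icc t (t + δ), ε / 2 ≤ f u := by
    intro u hu
    have hu0 : t₀ ≤ u := le_trans ht0 hu.1
    have h1 : |f u - f t| ≤ K * |u - t| := hlip t ht0 u hu0
    have h2 : K * |u - t| ≤ ε / 2 := by
      rw [abs_of_nonneg (by linarith [hu.1])]
      calc K * (u - t) ≤ K * δ := by
            apply mul_le_mul_of_nonneg_left _ hK.le
            linarith [hu.2]
        _ = ε / 2 := hKδ
    have := abs_le.1 (h1.trans h2)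
    linarith [this.1]
  have hint : IntervalIntegrable f MeasureTheory.volume t (t + δ) := by
    apply ContinuousOn.intervalIntegrable
    apply hfc.mono
    rw [Set.uIcc_of_le (by linarith)]
    intro u hu
    exact le_trans ht0 hu.1
  have hlower : δ * (ε / 2) ≤ G (t + δ) - G t := by
    rw [hGdiff t (t + δ) ht0 (by linarith)]
    calc δ * (ε / 2) = ∫ _ in t..(t + δ), (ε / 2 : ℝ) := by
          rw [intervalIntegral.integral_const]; simp
      _ ≤ ∫ u in t..(t + δ), f u := by
          apply intervalIntegral.integral_mono_on (by linarith) intervalIntegrable_const hint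
          exact hlow
  have h1 := hN₀ t htN
  have h2 := hN₀ (t + δ) (by linarith)
  rw [Real.dist_eq] at h1 h2
  have e1 := abs_le.1 h1.le
  have e2 := abs_le.1 h2.le
  nlinarith [hδ, hε]

/-- Extension of Proposition 2 to negatively curved (`k = -1`) FRW models: under the same
assumptions on the potential and `H(t₀) > 0`, one has `ρ → 0`, `y → 0` and `x = 1/a → 0`
as `t → ∞`. -/
theorem stmt_15 (t₀ γ : ℝ) (hγ0 : 0 < γ) (hγ2 : γ ≤ 2)
    (V : ℝ → ℝ) (hV : ContDiff ℝ 2 V)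
    (x φ y ρ H : ℝ → ℝ)
    (hx : ∀ t ∈ Set.Ici t₀, HasDerivWithinAt x (-(H t) * x t) (Set.Ici t₀) t)
    (hφ : ∀ t ∈ Set.Ici t₀, HasDerivWithinAt φ (y t) (Set.Ici t₀) t)
    (hy : ∀ t ∈ Set.Ici t₀,
      HasDerivWithinAt y (-3 * H t * y t - deriv V (φ t)) (Set.Ici t₀) t)
    (hρ : ∀ t ∈ Set.Ici t₀, HasDerivWithinAt ρ (-3 * γ * ρ t * H t) (Set.Ici t₀) t)
    (hH : ∀ t ∈ Set.Ici t₀,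
      HasDerivWithinAt H (-(1 / 2) * y t ^ 2 - γ / 2 * ρ t - x t ^ 2) (Set.Ici t₀) t)
    (hρ0 : ∀ t ∈ Set.Ici t₀, 0 ≤ ρ t)
    (hxpos : ∀ t ∈ Set.Ici t₀, 0 < x t)
    (hcon : ∀ t ∈ Set.Ici t₀,
      3 * H t ^ 2 - 3 * x t ^ 2 = ρ t + 1 / 2 * y t ^ 2 + V (φ t))
    (hVnn : ∀ s : ℝ, 0 ≤ V s)
    (hVzero : ∀ s : ℝ, V s = 0 ↔ s = 0)
    (hV'bdd : ∀ A : Set ℝ, Bornology.IsBounded (V '' A) →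
      Bornology.IsBounded (deriv V '' A))
    (hH0 : 0 < H t₀) :
    Tendsto ρ atTop (nhds 0) ∧ Tendsto y atTop (nhds 0) ∧
      Tendsto x atTop (nhds 0) := by
  -- continuity
  have hHc : ContinuousOn H (Set.Ici t₀) := fun t ht => (hH t ht).continuousWithinAt
  have hxc : ContinuousOn x (Set.Ici t₀) := fun t ht => (hx t ht).continuousWithinAt
  have hyc : ContinuousOn y (Set.Ici t₀) := fun t ht => (hy t ht).continuousWithinAt
  have hρc : ContinuousOn ρ (Set.Ici t₀) := fun t ht => (hρ t ht).continuousWithinAt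
  have hφc : ContinuousOn φ (Set.Ici t₀) := fun t ht => (hφ t ht).continuousWithinAt
  -- H² ≥ x²
  have hHsq : ∀ t ∈ Set.Ici t₀, x t ^ 2 ≤ H t ^ 2 := by
    intro t ht
    have h1 := hcon t ht
    have h2 := hρ0 t ht
    have h3 := hVnn (φ t)
    nlinarith [sq_nonneg (y t)]
  have hHne : ∀ t ∈ Set.Ici t₀, H t ≠ 0 := by
    intro t ht h0
    have h1 := hHsq t ht
    have h2 := hxpos t ht
    rw [h0] at h1
    nlinarith
  -- H > 0 on I
  have hHpos : ∀ t ∈ Set.Ici t₀, 0 < H t := by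
    intro t ht
    rcases lt_or_gt_of_ne (hHne t ht) with hlt | hgt
    · exfalso
      have hsub : Set.Icc t₀ t ⊆ Set.Ici t₀ := Set.Icc_subset_Ici_self
      have hivt := intermediate_value_Icc' ht (hHc.mono hsub)
      have h0mem : (0 : ℝ) ∈ Set.Icc (H t) (H t₀) := ⟨hlt.le, hH0.le⟩
      obtain ⟨s, hs, hs0⟩ := hivt h0mem
      exact hHne s (hsub hs) hs0
    · exact hgt
  -- H antitone
  have hHanti : AntitoneOn H (Set.Ici t₀) := by
    apply antitoneOn_of_hasDerivWithinAt_nonpos (convex_Ici t₀) hHc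
      (f' := fun t => -(1 / 2) * y t ^ 2 - γ / 2 * ρ t - x t ^ 2)
    · intro u hu
      rw [interior_Ici] at hu
      exact (hH u (Set.Ioi_subset_Ici_self hu)).mono interior_subset
    · intro u hu
      rw [interior_Ici] at hu
      have h1 := hρ0 u (Set.Ioi_subset_Ici_self hu)
      nlinarith [sq_nonneg (y u), sq_nonneg (x u)]
  -- x antitone
  have hxanti : AntitoneOn x (Set.Ici t₀) := by
    apply antitoneOn_of_hasDerivWithinAt_nonpos (convex_Ici t₀) hxc
      (f' := fun t => -(H t) * x t)
    · intro u hu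
      rw [interior_Ici] at hu
      exact (hx u (Set.Ioi_subset_Ici_self hu)).mono interior_subset
    · intro u hu
      rw [interior_Ici] at hu
      have h1 := hHpos u (Set.Ioi_subset_Ici_self hu)
      have h2 := hxpos u (Set.Ioi_subset_Ici_self hu)
      nlinarith
  set B : ℝ := H t₀ with hBdef
  have hB : 0 < B := hH0
  have hHB : ∀ t ∈ Set.Ici t₀, H t ≤ B := fun t ht => hHanti Set.self_mem_Ici ht ht
  have hρB : ∀ t ∈ Set.Ici t₀, ρ t ≤ 3 * B ^ 2 := by
    intro t ht
    have h1 := hcon t ht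
    have h2 := hVnn (φ t)
    have h3 := hHpos t ht
    have h4 := hHB t ht
    have h5 := hxpos t ht
    nlinarith [sq_nonneg (y t)]
  have hyB : ∀ t ∈ Set.Ici t₀, y t ^ 2 ≤ 6 * B ^ 2 := by
    intro t ht
    have h1 := hcon t ht
    have h2 := hVnn (φ t)
    have h3 := hHpos t ht
    have h4 := hHB t ht
    have h5 := hxpos t ht
    have h6 := hρ0 t ht
    nlinarith
  have hVB : ∀ t ∈ Set.Ici t₀, V (φ t) ≤ 3 * B ^ 2 := by
    intro t ht
    have h1 := hcon t ht
    have h3 := hHpos t ht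
    have h4 := hHB t ht
    have h5 := hxpos t ht
    have h6 := hρ0 t ht
    nlinarith [sq_nonneg (y t)]
  have hxB : ∀ t ∈ Set.Ici t₀, x t ≤ B := by
    intro t ht
    have h1 := hHsq t ht
    have h3 := hHpos t ht
    have h4 := hHB t ht
    have h5 := hxpos t ht
    nlinarith
  -- V' bound
  have hVim : Bornology.IsBounded (V '' (φ '' Set.Ici t₀)) := by
    rw [isBounded_iff_forall_norm_le]
    refine ⟨3 * B ^ 2, ?_⟩
    rintro v ⟨w, ⟨t, ht, rfl⟩, rfl⟩
    rw [Real.norm_eq_abs, abs_of_nonneg (hVnn _)]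
    exact hVB t ht
  obtain ⟨C, hC⟩ := isBounded_iff_forall_norm_le.1 (hV'bdd _ hVim)
  have hC' : ∀ t ∈ Set.Ici t₀, |deriv V (φ t)| ≤ C :=
    fun t ht => hC _ ⟨φ t, ⟨t, ht, rfl⟩, rfl⟩
  have hC0 : 0 ≤ C := le_trans (abs_nonneg _) (hC' t₀ Set.self_mem_Ici)
  -- x tends to some limit c ≥ 0, and c = 0
  obtain ⟨c, hc0, hcx, hclb⟩ := lim_of_antitoneOn t₀ x hxanti (fun t ht => (hxpos t ht).le)
  have hczero : c = 0 := by
    by_contra hne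
    have hcpos : 0 < c := lt_of_le_of_ne hc0 (Ne.symm hne)
    have hganti : AntitoneOn (fun t => H t + c ^ 2 * t) (Set.Ici t₀) := by
      apply antitoneOn_of_hasDerivWithinAt_nonpos (convex_Ici t₀)
        (hHc.add (continuousOn_const.mul continuousOn_id))
        (f' := fun t => (-(1 / 2) * y t ^ 2 - γ / 2 * ρ t - x t ^ 2) + c ^ 2 * 1)
      · intro u hu
        exact ((hH u (Set.Ioi_subset_Ici_self (by rwa [interior_Ici] at hu))).mono interior_subset).add
          ((hasDerivWithinAt_id u _).const_mul (c ^ 2))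
      · intro u hu
        rw [interior_Ici] at hu
        have h1 := hρ0 u (Set.Ioi_subset_Ici_self hu)
        have h2 := hclb u (Set.Ioi_subset_Ici_self hu)
        nlinarith [sq_nonneg (y u)]
    set T : ℝ := t₀ + (B + 1) / c ^ 2 with hT
    have hTge : t₀ ≤ T := by
      have : 0 ≤ (B + 1) / c ^ 2 := by positivity
      rw [hT]; linarith
    have := hganti Set.self_mem_Ici hTge hTge
    have hHT := hHpos T hTge
    have hcT : c ^ 2 * T = c ^ 2 * t₀ + (B + 1) := by
      field_simp [hT]
      rw [hT]; field_simp
    simp only at this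
    nlinarith
  rw [hczero] at hcx hclb
  -- FTC: ∫ W = H t₀ - H t
  have hWc : ContinuousOn (fun u => 1 / 2 * y u ^ 2 + γ / 2 * ρ u + x u ^ 2) (Set.Ici t₀) :=
    ((continuousOn_const.mul (hyc.pow 2)).add (continuousOn_const.mul hρc)).add (hxc.pow 2)
  have hint : ∀ (f : ℝ → ℝ), ContinuousOn f (Set.Ici t₀) → ∀ s t, t₀ ≤ s → s ≤ t →
      IntervalIntegrable f MeasureTheory.volume s t := by
    intro f hf s t hs hst
    apply ContinuousOn.intervalIntegrable
    apply hf.mono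
    rw [Set.uIcc_of_le hst]
    exact fun u hu => le_trans hs hu.1
  have key : ∀ t ∈ Set.Ici t₀,
      (∫ u in t₀..t, (1 / 2 * y u ^ 2 + γ / 2 * ρ u + x u ^ 2)) = H t₀ - H t := by
    intro t ht
    have h1 : (∫ u in t₀..t, -(1 / 2 * y u ^ 2 + γ / 2 * ρ u + x u ^ 2)) = H t - H t₀ := by
      apply intervalIntegral.integral_eq_sub_of_hasDeriv_right_of_le ht
        (hHc.mono Set.Icc_subset_Ici_self)
      · intro u hu
        have hmem : Set.Ioi u ⊆ Set.Ici t₀ :=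
          fun v hv => le_of_lt (lt_trans hu.1 hv)
        have := (hH u (le_of_lt hu.1)).mono hmem
        convert this using 1
        ring
      · exact (hint _ hWc t₀ t le_rfl ht).neg
    rw [intervalIntegral.integral_neg] at h1
    linarith
  -- adjacency
  have hadd : ∀ (f : ℝ → ℝ), ContinuousOn f (Set.Ici t₀) → ∀ s t, t₀ ≤ s → s ≤ t →
      (∫ u in t₀..t, f u) - (∫ u in t₀..s, f u) = ∫ u in s..t, f u := by
    intro f hf s t hs hst
    have := intervalIntegral.integral_add_adjacent_intervals
      (hint f hf t₀ s le_rfl hs) (hint f hf s t hs hst)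
    linarith
  -- ρ → 0
  have hρlim : Tendsto ρ atTop (nhds 0) := by
    set Gρ : ℝ → ℝ := fun t => ∫ u in t₀..t, ρ u with hGρ
    have hmono : MonotoneOn Gρ (Set.Ici t₀) := by
      intro s hs t ht hst
      have h1 := hadd ρ hρc s t hs hst
      have h2 : (0:ℝ) ≤ ∫ u in s..t, ρ u :=
        intervalIntegral.integral_nonneg hst (fun u hu => hρ0 u (le_trans hs hu.1))
      simp only [hGρ]
      linarith
    have hbdd : ∀ t ∈ Set.Ici t₀, Gρ t ≤ 2 / γ * B := by
      intro t ht
      have hmon : Gρ t ≤ 2 / γ * (H t₀ - H t) := by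
        rw [← key t ht, ← intervalIntegral.integral_const_mul]
        apply intervalIntegral.integral_mono_on ht (hint _ hρc t₀ t le_rfl ht)
          ((hint _ hWc t₀ t le_rfl ht).const_mul _)
        intro u hu
        have h1 : t₀ ≤ u := hu.1
        have h2 : γ * ρ u ≤ 2 * (1 / 2 * y u ^ 2 + γ / 2 * ρ u + x u ^ 2) := by
          nlinarith [sq_nonneg (y u), sq_nonneg (x u)]
        rw [div_mul_eq_mul_div, le_div_iff₀ hγ0]
        linarith
      have := hHpos t ht
      have h3 : 2 / γ * (H t₀ - H t) ≤ 2 / γ * B := by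
        apply mul_le_mul_of_nonneg_left _ (by positivity)
        simp only [hBdef]; linarith
      linarith
    obtain ⟨Lρ, hLρ⟩ := lim_of_monotoneOn t₀ (2 / γ * B) Gρ hmono hbdd
    apply barbalat t₀ (9 * γ * B ^ 3 + 1) Lρ (by positivity) ρ Gρ hρ0 hρc _ _ hLρ
    · intro s hs t ht
      have hbound : ∀ u ∈ Set.Ici t₀, ‖-3 * γ * ρ u * H u‖ ≤ 9 * γ * B ^ 3 + 1 := by
        intro u hu
        have h1 := hρ0 u hu
        have h2 := hρB u hu
        have h3 := hHpos u hu
        have h4 := hHB u hu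
        have hprod : ρ u * H u ≤ 3 * B ^ 2 * B :=
          mul_le_mul h2 h4 h3.le (by positivity)
        rw [Real.norm_eq_abs,
          abs_of_nonpos (by nlinarith [mul_nonneg hγ0.le (mul_nonneg h1 h3.le)])]
        nlinarith [mul_le_mul_of_nonneg_left hprod hγ0.le]
      have := Convex.norm_image_sub_le_of_norm_hasDerivWithin_le hρ hbound (convex_Ici t₀) hs ht
      simpa [Real.norm_eq_abs] using this
    · exact fun s t hs hst => hadd ρ hρc s t hs hst
  -- y → 0
  have hylim : Tendsto y atTop (nhds 0) := by
    have hfc : ContinuousOn (fun u => y u ^ 2) (Set.Ici t₀) := hyc.pow 2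
    have hf0 : ∀ t ∈ Set.Ici t₀, 0 ≤ y t ^ 2 := fun t _ => sq_nonneg _
    set My : ℝ := Real.sqrt (6 * B ^ 2) with hMydef
    have hMy0 : 0 ≤ My := Real.sqrt_nonneg _
    have hMy : ∀ t ∈ Set.Ici t₀, |y t| ≤ My := by
      intro t ht
      rw [← Real.sqrt_sq_eq_abs]
      exact Real.sqrt_le_sqrt (hyB t ht)
    have hMyB : 0 ≤ 3 * B * My + C := by
      have := mul_nonneg (mul_nonneg (by norm_num : (0:ℝ) ≤ 3) hB.le) hMy0
      linarith
    set Ky : ℝ := 2 * My * (3 * B * My + C) + 1 with hKydef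
    have hKy0 : 0 < Ky := by nlinarith [mul_nonneg hMy0 hMyB]
    set Gy : ℝ → ℝ := fun t => ∫ u in t₀..t, y u ^ 2 with hGy
    have hmono : MonotoneOn Gy (Set.Ici t₀) := by
      intro s hs t ht hst
      have h1 := hadd _ hfc s t hs hst
      have h2 : (0:ℝ) ≤ ∫ u in s..t, y u ^ 2 :=
        intervalIntegral.integral_nonneg hst (fun u _ => sq_nonneg _)
      simp only [hGy]
      linarith
    have hbdd : ∀ t ∈ Set.Ici t₀, Gy t ≤ 2 * B := by
      intro t ht
      have hmon : Gy t ≤ 2 * (H t₀ - H t) := by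
        rw [← key t ht, ← intervalIntegral.integral_const_mul]
        apply intervalIntegral.integral_mono_on ht (hint _ hfc t₀ t le_rfl ht)
          ((hint _ hWc t₀ t le_rfl ht).const_mul _)
        intro u hu
        have h1 : t₀ ≤ u := hu.1
        have h6 := hρ0 u h1
        nlinarith [sq_nonneg (x u), mul_nonneg hγ0.le h6]
      have := hHpos t ht
      nlinarith
    obtain ⟨Ly, hLy⟩ := lim_of_monotoneOn t₀ (2 * B) Gy hmono hbdd
    have hfd : ∀ t ∈ Set.Ici t₀, HasDerivWithinAt (fun u => y u ^ 2)
        ((2:ℝ) * y t ^ 1 * (-3 * H t * y t - deriv V (φ t))) (Set.Ici t₀) t := by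
      intro t ht
      exact_mod_cast (hy t ht).pow 2
    have hy2 : Tendsto (fun t => y t ^ 2) atTop (nhds 0) := by
      apply barbalat t₀ Ky Ly hKy0 _ Gy hf0 hfc _ _ hLy
      · intro s hs t ht
        have hbound : ∀ u ∈ Set.Ici t₀,
            ‖(2:ℝ) * y u ^ 1 * (-3 * H u * y u - deriv V (φ u))‖ ≤ Ky := by
          intro u hu
          have h1 := hMy u hu
          have h2 := hC' u hu
          have h3 := hHpos u hu
          have h4 := hHB u hu
          have htri : |(-3 * H u * y u - deriv V (φ u))| ≤ 3 * B * My + C := by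
            have e1 : |(-3 * H u * y u)| = 3 * H u * |y u| := by
              rw [abs_mul, abs_mul, abs_of_nonneg h3.le]
              norm_num
            have e2 : 3 * H u * |y u| ≤ 3 * B * My := by
              apply mul_le_mul (by linarith) h1 (abs_nonneg _) (by linarith)
            calc |(-3 * H u * y u - deriv V (φ u))|
                ≤ |(-3 * H u * y u)| + |deriv V (φ u)| := abs_sub _ _
              _ ≤ 3 * B * My + C := by rw [e1]; linarith
          rw [Real.norm_eq_abs, abs_mul, abs_mul, pow_one,
            abs_of_nonneg (by norm_num : (0:ℝ) ≤ 2)]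
          have := mul_le_mul h1 htri (abs_nonneg _) hMy0
          simp only [hKydef]
          nlinarith
        have := Convex.norm_image_sub_le_of_norm_hasDerivWithin_le hfd hbound
          (convex_Ici t₀) hs ht
        simpa [Real.norm_eq_abs] using this
      · exact fun s t hs hst => hadd _ hfc s t hs hst
    have habs : Tendsto (fun t => |y t|) atTop (nhds 0) := by
      have hsq : Tendsto (fun t => Real.sqrt (y t ^ 2)) atTop (nhds (Real.sqrt 0)) :=
        (Real.continuous_sqrt.tendsto 0).comp hy2
      rw [Real.sqrt_zero] at hsq
      exact hsq.congr fun t => Real.sqrt_sq_eq_abs _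
    exact (tendsto_zero_iff_abs_tendsto_zero y).2 habs
  exact ⟨hρlim, hylim, hcx⟩
end

section
/- Suppose x, φ, y, ρ, H : [t₀, ∞) → ℝ are differentiable and solve the negatively curved (k = -1) scalar-field system: x' = -Hx, φ' = y, y' = -3Hy - V'(φ), ρ' = -3γρH, H' = -(1/2)y² - (γ/2)ρ - x², with ρ(t) ≥ 0 and x(t) > 0 for all t, subject to the constraint 3H² - 3x² = ρ + (1/2)y² + V(φ), where V : ℝ → ℝ is C², γ is a constant with 0 < γ ≤ 2, H(t₀) > 0, V(φ) ≥ 0 for all φ, V(φ) = 0 if and only if φ = 0, V' is bounded on every subset of ℝ on which V is bounded, V'(φ) > 0 for φ > 0, and V'(φ) < 0 for φ < 0. Then as t → ∞, exactly one of the following holds: φ(t) → +∞, or φ(t) → -∞, or φ(t) → 0. -/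
open Filter Set Topology

lemma decay_helper {t₀ : ℝ} {f f' : ℝ → ℝ}
    (hf : ∀ t ∈ Set.Ici t₀, HasDerivWithinAt f (f' t) (Set.Ici t₀) t)
    {a b : ℝ} (ha : t₀ ≤ a) (hab : a ≤ b)
    (hle : ∀ t ∈ Set.Icc a b, f' t ≤ 0) : f b ≤ f a := by
  have hsub : Set.Icc a b ⊆ Set.Ici t₀ := fun s hs => le_trans ha hs.1
  have hcont0 : ContinuousOn f (Set.Ici t₀) := fun t ht => (hf t ht).continuousWithinAt
  have hcont : ContinuousOn f (Set.Icc a b) := hcont0.mono hsub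
  have hD : ∀ t ∈ interior (Set.Icc a b), HasDerivAt f (f' t) t := by
    intro t ht
    rw [interior_Icc] at ht
    exact (hf t (le_trans ha ht.1.le)).hasDerivAt
      (Ici_mem_nhds (lt_of_le_of_lt ha ht.1))
  have := antitoneOn_of_deriv_nonpos (convex_Icc a b) hcont
    (fun t ht => (hD t ht).differentiableAt.differentiableWithinAt)
    (fun t ht => by rw [(hD t ht).deriv]; exact hle t (interior_subset ht))
  exact this ⟨le_rfl, hab⟩ ⟨hab, le_rfl⟩ hab

lemma tendsto_zero_contra {t₀ T m : ℝ} {y g : ℝ → ℝ}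
    (hy : ∀ t ∈ Set.Ici t₀, HasDerivWithinAt y (g t) (Set.Ici t₀) t)
    (hT : t₀ ≤ T) (hm : 0 < m) (hg : ∀ t, T ≤ t → g t ≤ -m)
    (hy0 : Tendsto y atTop (𝓝 0)) : False := by
  obtain ⟨T₆, hT₆⟩ := Metric.tendsto_atTop.mp hy0 1 one_pos
  have hq : (0:ℝ) ≤ 2/m * (|y T| + 2) := by positivity
  set u := max T₆ (T + 2/m * (|y T| + 2)) with hu
  have huT : T ≤ u := le_trans (by linarith) (le_max_right _ _)
  -- z := y + m * id is decreasing on [T, u]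
  have hz : ∀ t ∈ Set.Ici t₀, HasDerivWithinAt (fun s => y s + m * s)
      (g t + m) (Set.Ici t₀) t := by
    intro t ht
    have h2 : HasDerivWithinAt (fun s : ℝ => m * s) (m * 1) (Set.Ici t₀) t :=
      (hasDerivWithinAt_id t _).const_mul m
    have := (hy t ht).add h2
    simp only [mul_one] at this
    exact this
  have key := decay_helper hz hT huT (fun t ht => by
    have := hg t ht.1; linarith)
  -- key : y u + m * u ≤ y T + m * T
  have hmu : 2 * (|y T| + 2) ≤ m * (u - T) := by
    have h1 : T + 2/m * (|y T| + 2) ≤ u := le_max_right _ _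
    have h2 : m * (2/m * (|y T| + 2)) ≤ m * (u - T) := by
      apply mul_le_mul_of_nonneg_left _ hm.le
      linarith
    calc 2 * (|y T| + 2) = m * (2/m * (|y T| + 2)) := by field_simp
      _ ≤ m * (u - T) := h2
  have hyu : y u ≤ -2 := by
    have := abs_le.mp (le_refl |y T|)
    have h3 : y T ≤ |y T| := le_abs_self _
    nlinarith
  have := hT₆ u (le_max_left _ _)
  rw [Real.dist_eq, sub_zero, abs_lt] at this
  linarith

set_option maxHeartbeats 1000000 in
/-- Extension of Proposition 3 to negatively curved (`k = -1`) FRW models: under the same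
assumptions on the potential (unique zero minimum at `0`, `V' > 0` for `φ > 0`,
`V' < 0` for `φ < 0`, `V'` bounded wherever `V` is) and `H(t₀) > 0`, the scalar field
tends, as `t → ∞`, to exactly one of `+∞`, `-∞` or `0`. -/
theorem stmt_16 (t₀ γ : ℝ) (hγ0 : 0 < γ) (hγ2 : γ ≤ 2)
    (V : ℝ → ℝ) (hV : ContDiff ℝ 2 V)
    (x φ y ρ H : ℝ → ℝ)
    (hx : ∀ t ∈ Set.Ici t₀, HasDerivWithinAt x (-(H t) * x t) (Set.Ici t₀) t)
    (hφ : ∀ t ∈ Set.Ici t₀, HasDerivWithinAt φ (y t) (Set.Ici t₀) t)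
    (hy : ∀ t ∈ Set.Ici t₀,
      HasDerivWithinAt y (-3 * H t * y t - deriv V (φ t)) (Set.Ici t₀) t)
    (hρ : ∀ t ∈ Set.Ici t₀, HasDerivWithinAt ρ (-3 * γ * ρ t * H t) (Set.Ici t₀) t)
    (hH : ∀ t ∈ Set.Ici t₀,
      HasDerivWithinAt H (-(1 / 2) * y t ^ 2 - γ / 2 * ρ t - x t ^ 2) (Set.Ici t₀) t)
    (hρ0 : ∀ t ∈ Set.Ici t₀, 0 ≤ ρ t)
    (hxpos : ∀ t ∈ Set.Ici t₀, 0 < x t)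
    (hcon : ∀ t ∈ Set.Ici t₀,
      3 * H t ^ 2 - 3 * x t ^ 2 = ρ t + 1 / 2 * y t ^ 2 + V (φ t))
    (hVnn : ∀ s : ℝ, 0 ≤ V s)
    (hVzero : ∀ s : ℝ, V s = 0 ↔ s = 0)
    (hV'bdd : ∀ A : Set ℝ, Bornology.IsBounded (V '' A) →
      Bornology.IsBounded (deriv V '' A))
    (hV'pos : ∀ s : ℝ, 0 < s → 0 < deriv V s)
    (hV'neg : ∀ s : ℝ, s < 0 → deriv V s < 0)
    (hH0 : 0 < H t₀) :
    (Tendsto φ atTop atTop ∧ ¬ Tendsto φ atTop atBot ∧ ¬ Tendsto φ atTop (nhds 0)) ∨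
    (Tendsto φ atTop atBot ∧ ¬ Tendsto φ atTop atTop ∧ ¬ Tendsto φ atTop (nhds 0)) ∨
    (Tendsto φ atTop (nhds 0) ∧ ¬ Tendsto φ atTop atTop ∧ ¬ Tendsto φ atTop atBot) := by
  have contH : ContinuousOn H (Set.Ici t₀) := fun t ht => (hH t ht).continuousWithinAt
  have contφ : ContinuousOn φ (Set.Ici t₀) := fun t ht => (hφ t ht).continuousWithinAt
  have contV : Continuous V := hV.continuous
  have contV' : Continuous (deriv V) := hV.continuous_deriv one_le_two
  have hV0 : V 0 = 0 := (hVzero 0).mpr rfl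
  have hVpos : ∀ s : ℝ, s ≠ 0 → 0 < V s := fun s hs =>
    lt_of_le_of_ne (hVnn s) (fun h => hs ((hVzero s).mp h.symm))
  -- H is positive on [t₀, ∞)
  have hHne : ∀ u ∈ Set.Ici t₀, H u ≠ 0 := by
    intro u hu h0
    have hc := hcon u hu
    have hxp := hxpos u hu
    have h1 := hρ0 u hu
    have h2 := hVnn (φ u)
    nlinarith [sq_nonneg (y u)]
  have hHpos : ∀ t ∈ Set.Ici t₀, 0 < H t := by
    intro t ht
    by_contra hle
    push_neg at hle
    have h0 : (0:ℝ) ∈ Set.Icc (H t) (H t₀) := ⟨hle, hH0.le⟩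
    obtain ⟨c, hc, hc0⟩ := intermediate_value_Icc' ht (contH.mono (Icc_subset_Ici_self)) h0
    exact hHne c hc.1 hc0
  -- H is antitone on [t₀, ∞)
  have hHanti : ∀ a b, t₀ ≤ a → a ≤ b → H b ≤ H a := by
    intro a b ha hab
    refine decay_helper hH ha hab (fun t ht => ?_)
    have h1 := hρ0 t (le_trans ha ht.1)
    nlinarith [sq_nonneg (y t), sq_nonneg (x t)]
  -- the energy function
  set E : ℝ → ℝ := fun t => 1/2 * (y t)^2 + V (φ t) with hEdef
  have hEderiv : ∀ t ∈ Set.Ici t₀,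
      HasDerivWithinAt E (-3 * H t * (y t)^2) (Set.Ici t₀) t := by
    intro t ht
    have h1 : HasDerivWithinAt (fun u => (y u)^2)
        ((2:ℕ) * (y t)^(2-1) * (-3 * H t * y t - deriv V (φ t))) (Set.Ici t₀) t :=
      (hy t ht).pow 2
    have h2 : HasDerivAt V (deriv V (φ t)) (φ t) :=
      (hV.differentiable (by norm_num) (φ t)).hasDerivAt
    have h3 : HasDerivWithinAt (fun u => V (φ u)) (deriv V (φ t) * y t) (Set.Ici t₀) t :=
      HasDerivAt.comp_hasDerivWithinAt (h := φ) (x := t) h2 (hφ t ht)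
    have h4 := (h1.const_mul (1/2 : ℝ)).add h3
    refine h4.congr_deriv ?_
    push_cast
    ring
  have hEanti : ∀ a b, t₀ ≤ a → a ≤ b → E b ≤ E a := by
    intro a b ha hab
    refine decay_helper hEderiv ha hab (fun t ht => ?_)
    have h1 := hHpos t (le_trans ha ht.1)
    nlinarith [sq_nonneg (y t)]
  have hEnn : ∀ t, 0 ≤ E t := fun t => add_nonneg (by positivity) (hVnn _)
  have hy2le : ∀ t ∈ Set.Ici t₀, (y t)^2 ≤ 2 * E t₀ := by
    intro t ht
    have h1 := hEanti t₀ t le_rfl ht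
    have h2 := hVnn (φ t)
    simp only [hEdef] at h1 ⊢
    nlinarith
  set By := Real.sqrt (2 * E t₀) with hBy
  have hBy0 : 0 ≤ By := Real.sqrt_nonneg _
  have hyb : ∀ t ∈ Set.Ici t₀, |y t| ≤ By := by
    intro t ht
    rw [← Real.sqrt_sq_eq_abs]
    exact Real.sqrt_le_sqrt (hy2le t ht)
  -- bound on deriv V along the orbit
  have hVim : Bornology.IsBounded (V '' (φ '' Set.Ici t₀)) := by
    apply Bornology.IsBounded.subset (Metric.isBounded_Icc 0 (E t₀))
    rintro v ⟨s, ⟨t, ht, rfl⟩, rfl⟩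
    refine ⟨hVnn _, ?_⟩
    have h1 := hEanti t₀ t le_rfl ht
    simp only [hEdef] at h1 ⊢
    nlinarith [sq_nonneg (y t)]
  obtain ⟨M0, hM0⟩ := isBounded_iff_forall_norm_le.mp (hV'bdd _ hVim)
  set M := max M0 0 with hM
  have hMle : ∀ t ∈ Set.Ici t₀, |deriv V (φ t)| ≤ M := by
    intro t ht
    refine le_trans ?_ (le_max_left _ _)
    have := hM0 (deriv V (φ t)) ⟨φ t, ⟨t, ht, rfl⟩, rfl⟩
    rwa [Real.norm_eq_abs] at this
  have hM0' : (0:ℝ) ≤ M := le_max_right _ _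
  set H₀ := H t₀ with hH₀
  have hHle : ∀ t ∈ Set.Ici t₀, H t ≤ H₀ := fun t ht => hHanti t₀ t le_rfl ht
  set C := 3 * H₀ * By + M + 1 with hC
  have hCpos : 0 < C := by positivity
  -- Lipschitz bound for y
  have hybound : ∀ t ∈ Set.Ici t₀, ‖-3 * H t * y t - deriv V (φ t)‖ ≤ C := by
    intro t ht
    have h1 := hyb t ht
    have h2 := hMle t ht
    have h3 := hHle t ht
    have h4 := hHpos t ht
    rw [Real.norm_eq_abs]
    have e1 : |(-3 * H t * y t - deriv V (φ t))| ≤ |(-3) * H t * y t| + |deriv V (φ t)| :=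
      abs_sub _ _
    have e2 : |(-3) * H t * y t| = 3 * H t * |y t| := by
      rw [abs_mul, abs_mul]
      rw [abs_of_pos h4, abs_of_neg (by norm_num : (-3:ℝ) < 0)]
      ring
    have e3 : 3 * H t * |y t| ≤ 3 * H₀ * By := by
      nlinarith [abs_nonneg (y t)]
    linarith
  have hyLip : ∀ a b, a ∈ Set.Ici t₀ → b ∈ Set.Ici t₀ → |y b - y a| ≤ C * |b - a| := by
    intro a b ha hb
    have := Convex.norm_image_sub_le_of_norm_hasDerivWithin_le hy hybound (convex_Ici t₀) ha hb
    simpa [Real.norm_eq_abs] using this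
  -- Barbalat: y tends to 0
  have hy0 : Tendsto y atTop (𝓝 0) := by
    clear_value E By M H₀ C
    rw [Metric.tendsto_atTop]
    by_contra hcon'
    push_neg at hcon'
    obtain ⟨ε, hε, hfreq⟩ := hcon'
    simp only [Real.dist_eq, sub_zero] at hfreq
    set τ := ε / (2 * C) with hτdef
    have hτ : 0 < τ := div_pos hε (by positivity)
    set d := ε^2/8 * τ with hddef
    have hd : 0 < d := by positivity
    clear_value d τ
    have step : ∀ a, t₀ ≤ a → ε ≤ |y a| → H (a + τ) ≤ H a - d := by
      intro a ha hya
      have hmid : ∀ s ∈ Set.Icc a (a + τ), ε/2 ≤ |y s| := by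
        intro s hs
        have hsI : s ∈ Set.Ici t₀ := le_trans ha hs.1
        have h1 : |y s - y a| ≤ C * |s - a| := hyLip a s ha hsI
        have h2 : |s - a| ≤ τ := by
          rw [abs_of_nonneg (by linarith [hs.1])]
          linarith [hs.2]
        have h3 : C * |s - a| ≤ C * τ := mul_le_mul_of_nonneg_left h2 hCpos.le
        have h4 : C * τ = ε / 2 := by
          rw [hτdef]; field_simp
        have h5 := abs_sub_abs_le_abs_sub (y a) (y s)
        rw [abs_sub_comm] at h5
        linarith
      have hg : ∀ t ∈ Set.Ici t₀, HasDerivWithinAt (fun u => H u + ε^2/8 * u)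
          ((-(1/2) * y t ^ 2 - γ/2 * ρ t - x t ^ 2) + ε^2/8) (Set.Ici t₀) t := by
        intro t ht
        have h2 : HasDerivWithinAt (fun u : ℝ => ε^2/8 * u) (ε^2/8 * 1) (Set.Ici t₀) t :=
          (hasDerivWithinAt_id t _).const_mul (ε^2/8)
        have := (hH t ht).add h2
        simp only [mul_one] at this
        exact this
      have key := decay_helper hg ha (by linarith : a ≤ a + τ) (fun t ht => by
        have h1 := hmid t ht
        have h2 : (ε/2)^2 ≤ (y t)^2 := by
          rw [← sq_abs (y t)]
          apply pow_le_pow_left₀ (by linarith) h1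
        have h3 := hρ0 t (le_trans ha ht.1)
        nlinarith [sq_nonneg (x t)])
      -- key : H (a+τ) + ε^2/8 * (a+τ) ≤ H a + ε^2/8 * a
      simp only [hddef]
      nlinarith [key]
    have iter : ∀ n : ℕ, ∃ s, t₀ ≤ s ∧ H s ≤ H t₀ - n * d := by
      intro n
      induction n with
      | zero => exact ⟨t₀, le_rfl, by simp⟩
      | succ n ih =>
        obtain ⟨s, hs, hHs⟩ := ih
        obtain ⟨a, ha, hya⟩ := hfreq s
        have ha0 : t₀ ≤ a := le_trans hs ha
        have h1 := step a ha0 hya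
        have h2 : H a ≤ H s := hHanti s a hs ha
        exact ⟨a + τ, by linarith, by push_cast; linarith⟩
    obtain ⟨n, hn⟩ := exists_nat_gt (H t₀ / d)
    obtain ⟨s, hs, hHs⟩ := iter n
    have h1 := hHpos s hs
    have h2 := (div_lt_iff₀ hd).mp hn
    linarith
  -- limit of the energy
  set L := sInf (E '' Set.Ici t₀) with hLdef
  have hSne : (E '' Set.Ici t₀).Nonempty := ⟨E t₀, t₀, Set.self_mem_Ici, rfl⟩
  have hSbdd : BddBelow (E '' Set.Ici t₀) := ⟨0, by rintro v ⟨t, ht, rfl⟩; exact hEnn t⟩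
  have hL0 : 0 ≤ L := le_csInf hSne (by rintro v ⟨t, ht, rfl⟩; exact hEnn t)
  have hEL : Tendsto E atTop (𝓝 L) := by
    rw [Metric.tendsto_atTop]
    intro ε hε
    obtain ⟨v, ⟨t₁, ht₁, rfl⟩, hv⟩ := Real.lt_sInf_add_pos hSne hε
    refine ⟨max t₁ t₀, fun t ht => ?_⟩
    have h1 : E t ≤ E t₁ := hEanti t₁ t ht₁ (le_trans (le_max_left _ _) ht)
    have h2 : L ≤ E t := csInf_le hSbdd ⟨t, le_trans (le_max_right _ _) ht, rfl⟩
    rw [Real.dist_eq, abs_lt]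
    constructor <;> [linarith; linarith]
  have hy2_0 : Tendsto (fun t => 1/2 * (y t)^2) atTop (𝓝 (0:ℝ)) := by
    have h := (hy0.mul hy0).const_mul (1/2 : ℝ)
    simp only [mul_zero] at h
    apply h.congr
    intro t
    ring
  have hVφ : Tendsto (fun t => V (φ t)) atTop (𝓝 L) := by
    have h := hEL.sub hy2_0
    rw [sub_zero] at h
    apply h.congr
    intro t
    simp only [hEdef]
    ring
  -- monotonicity of V
  have Vsmono : StrictMonoOn V (Set.Ici (0:ℝ)) :=
    strictMonoOn_of_deriv_pos (convex_Ici 0) contV.continuousOn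
      (by rw [interior_Ici]; exact fun s hs => hV'pos s hs)
  have Vsanti : StrictAntiOn V (Set.Iic (0:ℝ)) :=
    strictAntiOn_of_deriv_neg (convex_Iic 0) contV.continuousOn
      (by rw [interior_Iic]; exact fun s hs => hV'neg s hs)
  have Vmono : MonotoneOn V (Set.Ici (0:ℝ)) := Vsmono.monotoneOn
  have Vanti : AntitoneOn V (Set.Iic (0:ℝ)) := Vsanti.antitoneOn
  clear_value E By M H₀ C L
  rcases hL0.lt_or_eq with hLpos | hLzero
  · -- L > 0 : φ tends to +∞ or -∞
    obtain ⟨δ, hδ, hδV⟩ : ∃ δ > 0, ∀ s : ℝ, |s| < δ → V s < L/2 := by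
      obtain ⟨δ, hδ, h⟩ := Metric.continuousAt_iff.mp contV.continuousAt (L/2) (by linarith)
      refine ⟨δ, hδ, fun s hs => ?_⟩
      have := h (show dist s 0 < δ by rwa [Real.dist_eq, sub_zero])
      rw [Real.dist_eq, hV0, sub_zero, abs_lt] at this
      exact this.2
    obtain ⟨T₂', hT₂⟩ := Metric.tendsto_atTop.mp hVφ (L/2) (by linarith)
    set T := max T₂' t₀ with hTdef
    have hTt₀ : t₀ ≤ T := le_max_right _ _
    have hφδ : ∀ t, T ≤ t → δ ≤ |φ t| := by
      intro t ht
      by_contra h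
      push_neg at h
      have h1 := hδV (φ t) h
      have h2 := hT₂ t (le_trans (le_max_left _ _) ht)
      rw [Real.dist_eq, abs_lt] at h2
      linarith
    have habs : ∀ t, T ≤ t → δ ≤ φ t ∨ φ t ≤ -δ := by
      intro t ht
      rcases le_abs.mp (hφδ t ht) with h | h
      · exact Or.inl h
      · exact Or.inr (by linarith)
    have hdich : (∀ t, T ≤ t → δ ≤ φ t) ∨ (∀ t, T ≤ t → φ t ≤ -δ) := by
      rcases habs T le_rfl with hp | hn
      · left
        intro t ht
        rcases habs t ht with h | h
        · exact h
        exfalso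
        have hcont : ContinuousOn φ (Set.Icc T t) :=
          contφ.mono (fun s hs => le_trans hTt₀ hs.1)
        have h0 : (0:ℝ) ∈ Set.Icc (φ t) (φ T) := ⟨by linarith, by linarith⟩
        obtain ⟨c, hc, hc0⟩ := intermediate_value_Icc' ht hcont h0
        have := hφδ c hc.1
        rw [hc0] at this
        simp only [abs_zero] at this
        linarith
      · right
        intro t ht
        rcases habs t ht with h | h
        swap
        · exact h
        exfalso
        have hcont : ContinuousOn φ (Set.Icc T t) :=
          contφ.mono (fun s hs => le_trans hTt₀ hs.1)
        have h0 : (0:ℝ) ∈ Set.Icc (φ T) (φ t) := ⟨by linarith, by linarith⟩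
        obtain ⟨c, hc, hc0⟩ := intermediate_value_Icc ht hcont h0
        have := hφδ c hc.1
        rw [hc0] at this
        simp only [abs_zero] at this
        linarith
    rcases hdich with hpos | hneg
    · -- φ eventually ≥ δ : tends to +∞
      left
      have htop : Tendsto φ atTop atTop := by
        rw [tendsto_atTop]
        by_contra hcon2
        push_neg at hcon2
        obtain ⟨b, hb⟩ := hcon2
        set b0 := max b δ with hb0def
        have hb0pos : (0:ℝ) < b0 := lt_of_lt_of_le hδ (le_max_right _ _)
        have hfr : ∃ᶠ t in atTop, V (φ t) ≤ V b0 := by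
          apply (hb.and_eventually (eventually_ge_atTop T)).mono
          rintro t ⟨h1, h2⟩
          have hδt := hpos t h2
          refine Vmono (Set.mem_Ici.mpr (le_trans hδ.le hδt))
            (Set.mem_Ici.mpr hb0pos.le) ?_
          exact le_trans h1.le (le_max_left _ _)
        have hLb : L ≤ V b0 := by
          by_contra h
          push_neg at h
          have hev : ∀ᶠ t in atTop, V b0 < V (φ t) := hVφ.eventually (eventually_gt_nhds h)
          obtain ⟨t, h1, h2⟩ := (hfr.and_eventually hev).exists
          linarith
        have hlt : L < V (b0 + 1) :=
          lt_of_le_of_lt hLb (Vsmono (Set.mem_Ici.mpr hb0pos.le)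
            (Set.mem_Ici.mpr (by linarith)) (lt_add_one b0))
        have hev2 : ∀ᶠ t in atTop, V (φ t) < V (b0 + 1) :=
          hVφ.eventually (eventually_lt_nhds hlt)
        have hev3 : ∀ᶠ t in atTop, φ t ∈ Set.Icc δ (b0 + 1) := by
          filter_upwards [hev2, eventually_ge_atTop T] with t h1 h2
          refine ⟨hpos t h2, ?_⟩
          by_contra h3
          push_neg at h3
          have h4 : V (b0 + 1) ≤ V (φ t) :=
            Vmono (Set.mem_Ici.mpr (by linarith)) (Set.mem_Ici.mpr
              (le_trans hδ.le (hpos t h2))) h3.le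
          linarith
        have hne2 : (Set.Icc δ (b0 + 1)).Nonempty :=
          ⟨δ, le_rfl, by have := le_max_right b δ; linarith⟩
        obtain ⟨s₀, hs₀, hmin⟩ := isCompact_Icc.exists_isMinOn hne2 contV'.continuousOn
        set m := deriv V s₀ with hmdef
        have hm : 0 < m := hV'pos s₀ (lt_of_lt_of_le hδ hs₀.1)
        have hysm : ∀ᶠ t in atTop, |y t| < m / (2 * (3 * H₀ + 1)) := by
          have hp : 0 < m / (2 * (3 * H₀ + 1)) := by positivity
          obtain ⟨N, hN⟩ := Metric.tendsto_atTop.mp hy0 _ hp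
          filter_upwards [eventually_ge_atTop N] with t ht
          have := hN t ht
          rwa [Real.dist_eq, sub_zero] at this
        obtain ⟨T₅', hT₅'⟩ := eventually_atTop.mp (hev3.and hysm)
        set T₅ := max T₅' t₀ with hT₅def
        refine tendsto_zero_contra hy (le_max_right T₅' t₀ : t₀ ≤ T₅)
          (half_pos hm) (fun t ht => ?_) hy0
        have htI : t ∈ Set.Ici t₀ := le_trans (le_max_right _ _) ht
        obtain ⟨hφt, hyt⟩ := hT₅' t (le_trans (le_max_left _ _) ht)
        have h3H : |3 * H t * y t| ≤ m / 2 := by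
          rw [abs_mul, abs_mul]
          have e1 : |(3:ℝ)| = 3 := by norm_num
          have e2 : |H t| = H t := abs_of_pos (hHpos t htI)
          rw [e1, e2]
          have h1 := hHle t htI
          have h2 := hHpos t htI
          have h3 := abs_nonneg (y t)
          have hyt' : |y t| * (2 * (3 * H₀ + 1)) < m :=
            (lt_div_iff₀ (by positivity)).mp hyt
          nlinarith [mul_le_mul_of_nonneg_right h1 h3]
        have hV't : m ≤ deriv V (φ t) := hmin hφt
        have h5 := abs_le.mp h3H
        linarith [h5.1, h5.2]
      exact ⟨htop, htop.not_tendsto disjoint_atTop_atBot,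
        htop.not_tendsto (disjoint_nhds_atTop 0).symm⟩
    · -- φ eventually ≤ -δ : tends to -∞
      right; left
      have hbot : Tendsto φ atTop atBot := by
        rw [tendsto_atBot]
        by_contra hcon2
        push_neg at hcon2
        obtain ⟨b, hb⟩ := hcon2
        set b0 := min b (-δ) with hb0def
        have hb0neg : b0 < 0 := lt_of_le_of_lt (min_le_right _ _) (by linarith)
        have hfr : ∃ᶠ t in atTop, V (φ t) ≤ V b0 := by
          apply (hb.and_eventually (eventually_ge_atTop T)).mono
          rintro t ⟨h1, h2⟩
          have hδt := hneg t h2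
          refine Vanti (Set.mem_Iic.mpr hb0neg.le)
            (Set.mem_Iic.mpr (by linarith)) ?_
          exact le_trans (min_le_left _ _) h1.le
        have hLb : L ≤ V b0 := by
          by_contra h
          push_neg at h
          have hev : ∀ᶠ t in atTop, V b0 < V (φ t) := hVφ.eventually (eventually_gt_nhds h)
          obtain ⟨t, h1, h2⟩ := (hfr.and_eventually hev).exists
          linarith
        have hlt : L < V (b0 - 1) :=
          lt_of_le_of_lt hLb (Vsanti (Set.mem_Iic.mpr (by linarith))
            (Set.mem_Iic.mpr hb0neg.le) (by linarith))
        have hev2 : ∀ᶠ t in atTop, V (φ t) < V (b0 - 1) :=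
          hVφ.eventually (eventually_lt_nhds hlt)
        have hev3 : ∀ᶠ t in atTop, φ t ∈ Set.Icc (b0 - 1) (-δ) := by
          filter_upwards [hev2, eventually_ge_atTop T] with t h1 h2
          refine ⟨?_, hneg t h2⟩
          by_contra h3
          push_neg at h3
          have h4 : V (b0 - 1) ≤ V (φ t) :=
            Vanti (Set.mem_Iic.mpr (by linarith [hneg t h2]))
              (Set.mem_Iic.mpr (by linarith)) h3.le
          linarith
        have hne2 : (Set.Icc (b0 - 1) (-δ)).Nonempty :=
          ⟨-δ, by have := min_le_right b (-δ); linarith, le_rfl⟩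
        obtain ⟨s₀, hs₀, hmax⟩ := isCompact_Icc.exists_isMaxOn hne2 contV'.continuousOn
        set m := -(deriv V s₀) with hmdef
        have hm : 0 < m := by
          have := hV'neg s₀ (lt_of_le_of_lt hs₀.2 (by linarith))
          linarith
        have hysm : ∀ᶠ t in atTop, |y t| < m / (2 * (3 * H₀ + 1)) := by
          have hp : 0 < m / (2 * (3 * H₀ + 1)) := by positivity
          obtain ⟨N, hN⟩ := Metric.tendsto_atTop.mp hy0 _ hp
          filter_upwards [eventually_ge_atTop N] with t ht
          have := hN t ht
          rwa [Real.dist_eq, sub_zero] at this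
        obtain ⟨T₅', hT₅'⟩ := eventually_atTop.mp (hev3.and hysm)
        set T₅ := max T₅' t₀ with hT₅def
        have hyneg : ∀ t ∈ Set.Ici t₀, HasDerivWithinAt (fun s => -(y s))
            (-(-3 * H t * y t - deriv V (φ t))) (Set.Ici t₀) t :=
          fun t ht => (hy t ht).neg
        have hy0neg : Tendsto (fun s => -(y s)) atTop (𝓝 0) := by
          have := hy0.neg
          rwa [neg_zero] at this
        refine tendsto_zero_contra hyneg (le_max_right T₅' t₀ : t₀ ≤ T₅)
          (half_pos hm) (fun t ht => ?_) hy0neg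
        have htI : t ∈ Set.Ici t₀ := le_trans (le_max_right _ _) ht
        obtain ⟨hφt, hyt⟩ := hT₅' t (le_trans (le_max_left _ _) ht)
        have h3H : |3 * H t * y t| ≤ m / 2 := by
          rw [abs_mul, abs_mul]
          have e1 : |(3:ℝ)| = 3 := by norm_num
          have e2 : |H t| = H t := abs_of_pos (hHpos t htI)
          rw [e1, e2]
          have h1 := hHle t htI
          have h2 := hHpos t htI
          have h3 := abs_nonneg (y t)
          have hyt' : |y t| * (2 * (3 * H₀ + 1)) < m :=
            (lt_div_iff₀ (by positivity)).mp hyt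
          nlinarith [mul_le_mul_of_nonneg_right h1 h3]
        have hV't : deriv V (φ t) ≤ -m := by
          have h6 : deriv V (φ t) ≤ deriv V s₀ := hmax hφt
          rw [hmdef]
          linarith
        have h5 := abs_le.mp h3H
        linarith [h5.1, h5.2]
      exact ⟨hbot, hbot.not_tendsto disjoint_atBot_atTop,
        hbot.not_tendsto (disjoint_nhds_atBot 0).symm⟩
  · -- L = 0 : φ tends to 0
    right; right
    have hφ0 : Tendsto φ atTop (𝓝 0) := by
      rw [Metric.tendsto_atTop]
      intro ε hε
      have hc1 : 0 < V ε := hVpos ε hε.ne'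
      have hc2 : 0 < V (-ε) := hVpos (-ε) (by intro h; rw [neg_eq_zero] at h; exact hε.ne' h)
      have hcε : 0 < min (V ε) (V (-ε)) := lt_min hc1 hc2
      obtain ⟨N, hN⟩ := Metric.tendsto_atTop.mp hVφ _ hcε
      refine ⟨N, fun t ht => ?_⟩
      have h1 := hN t ht
      rw [Real.dist_eq, abs_lt] at h1
      have h1' : V (φ t) < min (V ε) (V (-ε)) := by linarith [h1.2, hLzero.le]
      rw [Real.dist_eq, sub_zero, abs_lt]
      constructor
      · by_contra h
        push_neg at h
        have h2 : V (-ε) ≤ V (φ t) :=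
          Vanti (Set.mem_Iic.mpr (by linarith)) (Set.mem_Iic.mpr (by linarith)) h
        have := min_le_right (V ε) (V (-ε))
        linarith
      · by_contra h
        push_neg at h
        have h2 : V ε ≤ V (φ t) :=
          Vmono (Set.mem_Ici.mpr hε.le) (Set.mem_Ici.mpr (by linarith)) h
        have := min_le_left (V ε) (V (-ε))
        linarith
    exact ⟨hφ0, hφ0.not_tendsto (disjoint_nhds_atTop 0),
      hφ0.not_tendsto (disjoint_nhds_atBot 0)⟩
end
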